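/- arXiv:2206.04953 — 8 statements merged into one kernel-verified Lean document; each statement's English description precedes it below -/
import Mathlib

section
/- Let M be a closed C^1-submanifold of ℝ^N, E an open neighbourhood of M with a C^1 retraction ψ: E → M, and R, ε > 0. Then there exists δ > 0 such that ‖ψ(x+z) − ψ(y+z) − (x − y)‖₂ ≤ ε‖x − y‖₂ for all x, y ∈ M with ‖x‖₂, ‖y‖₂ ≤ R and all z ∈ ℝ^N with ‖x − y‖₂ ≤ δ and ‖z‖₂ ≤ δ. -/
open Set

noncomputable section

lemma seg_dist {N : ℕ} (x y z : EuclideanSpace ℝ (Fin N)) (w : EuclideanSpace ℝ (Fin N))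
    (hw : w ∈ segment ℝ (y + z) (x + z)) : dist w y ≤ ‖x - y‖ + ‖z‖ := by
  obtain ⟨a, b, ha, hb, hab, rfl⟩ := hw
  have hab' : a = 1 - b := by linarith
  have hrw : a • (y + z) + b • (x + z) - y = b • (x - y) + z := by
    subst hab'; module
  rw [dist_eq_norm, hrw]
  calc ‖b • (x - y) + z‖ ≤ ‖b • (x - y)‖ + ‖z‖ := norm_add_le _ _
    _ ≤ ‖x - y‖ + ‖z‖ := by
        rw [norm_smul]
        have hb1 : ‖b‖ ≤ 1 := by rw [Real.norm_eq_abs, abs_of_nonneg hb]; linarith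
        nlinarith [norm_nonneg (x - y)]

lemma mvt_key {N : ℕ} {E : Set (EuclideanSpace ℝ (Fin N))} (hEopen : IsOpen E)
    {ψ : EuclideanSpace ℝ (Fin N) → EuclideanSpace ℝ (Fin N)}
    (hψ : ContDiffOn ℝ 1 ψ E) (a b c : EuclideanSpace ℝ (Fin N))
    (hseg : segment ℝ a b ⊆ E) {C : ℝ}
    (hbound : ∀ w ∈ segment ℝ a b, ‖fderiv ℝ ψ w - fderiv ℝ ψ c‖ ≤ C) :
    ‖ψ b - ψ a - fderiv ℝ ψ c (b - a)‖ ≤ C * ‖b - a‖ := by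
  have hdiff : ∀ w ∈ E, DifferentiableAt ℝ ψ w := fun w hw =>
    (hψ.differentiableOn one_ne_zero).differentiableAt (hEopen.mem_nhds hw)
  have h := (convex_segment a b).norm_image_sub_le_of_norm_fderiv_le
    (f := fun w => ψ w - fderiv ℝ ψ c w) (C := C)
    (fun w hw => (hdiff w (hseg hw)).sub (fderiv ℝ ψ c).differentiableAt)
    (fun w hw => by
      rw [fderiv_fun_sub (hdiff w (hseg hw)) (fderiv ℝ ψ c).differentiableAt,
        (fderiv ℝ ψ c).fderiv]
      exact hbound w hw)
    (left_mem_segment ℝ a b) (right_mem_segment ℝ a b)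
  have heq : ψ b - fderiv ℝ ψ c b - (ψ a - fderiv ℝ ψ c a)
      = ψ b - ψ a - fderiv ℝ ψ c (b - a) := by
    rw [map_sub]; abel
  simpa [heq] using h

def IsC1Submanifold (d : ℕ) {N : ℕ} (M : Set (EuclideanSpace ℝ (Fin N))) : Prop :=
  ∀ x ∈ M, ∃ (V U : Set (EuclideanSpace ℝ (Fin N)))
    (φ φinv : EuclideanSpace ℝ (Fin N) → EuclideanSpace ℝ (Fin N)),
    IsOpen V ∧ IsOpen U ∧ (0 : EuclideanSpace ℝ (Fin N)) ∈ V ∧ x ∈ U ∧ φ 0 = x ∧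
    ContDiffOn ℝ 1 φ V ∧ ContDiffOn ℝ 1 φinv U ∧
    Set.MapsTo φ V U ∧ Set.MapsTo φinv U V ∧
    (∀ v ∈ V, φinv (φ v) = v) ∧ (∀ u ∈ U, φ (φinv u) = u) ∧
    φ '' ({y : EuclideanSpace ℝ (Fin N) | ∀ i : Fin N, d ≤ (i : ℕ) → y i = 0} ∩ V) = M ∩ U

def TangentSpaceAt {N : ℕ} (M : Set (EuclideanSpace ℝ (Fin N)))
    (x : EuclideanSpace ℝ (Fin N)) : Set (EuclideanSpace ℝ (Fin N)) :=
  {v | ∃ γ : ℝ → EuclideanSpace ℝ (Fin N),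
    ContDiffOn ℝ 1 γ (Set.Ioo (-1 : ℝ) 1) ∧ (∀ t ∈ Set.Ioo (-1 : ℝ) 1, γ t ∈ M) ∧
    γ 0 = x ∧ derivWithin γ (Set.Ioo (-1 : ℝ) 1) 0 = v}

theorem stmt2 {N d : ℕ} (M : Set (EuclideanSpace ℝ (Fin N)))
    (hM : IsC1Submanifold d M) (hMclosed : IsClosed M)
    (E : Set (EuclideanSpace ℝ (Fin N))) (hEopen : IsOpen E) (hME : M ⊆ E)
    (ψ : EuclideanSpace ℝ (Fin N) → EuclideanSpace ℝ (Fin N))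
    (hψC1 : ContDiffOn ℝ 1 ψ E) (hψM : ∀ x ∈ E, ψ x ∈ M)
    (hψid : ∀ x ∈ M, ψ x = x)
    (R ε : ℝ) (hR : 0 < R) (hε : 0 < ε) :
    ∃ δ > 0, ∀ x ∈ M, ∀ y ∈ M, ∀ z : EuclideanSpace ℝ (Fin N),
      ‖x‖ ≤ R → ‖y‖ ≤ R → ‖x - y‖ ≤ δ → ‖z‖ ≤ δ →
      x + z ∈ E ∧ y + z ∈ E ∧
      ‖ψ (x + z) - ψ (y + z) - (x - y)‖ ≤ ε * ‖x - y‖ := by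
  set f := fderiv ℝ ψ with hf
  set K := M ∩ Metric.closedBall (0 : EuclideanSpace ℝ (Fin N)) R with hKdef
  have hKcomp : IsCompact K := (isCompact_closedBall _ _).inter_left hMclosed
  have hKE : K ⊆ E := fun w hw => hME hw.1
  obtain ⟨r, hr, hrE⟩ := hKcomp.exists_cthickening_subset_open hEopen hKE
  set K' := Metric.cthickening r K with hK'def
  have hK'comp : IsCompact K' := hKcomp.cthickening
  have hfc : ContinuousOn f E := hψC1.continuousOn_fderiv_of_isOpen hEopen le_rfl
  have hufc : UniformContinuousOn f K' :=
    hK'comp.uniformContinuousOn_of_continuous (hfc.mono hrE)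
  rw [Metric.uniformContinuousOn_iff] at hufc
  obtain ⟨δ₁, hδ₁, hδ₁'⟩ := hufc (ε / 2) (half_pos hε)
  refine ⟨min (δ₁ / 3) (r / 3), by positivity, ?_⟩
  intro x hx y hy z hxR hyR hxy hz
  have hδle₁ : min (δ₁ / 3) (r / 3) ≤ δ₁ / 3 := min_le_left _ _
  have hδle₂ : min (δ₁ / 3) (r / 3) ≤ r / 3 := min_le_right _ _
  have hyK : y ∈ K := ⟨hy, by simpa [dist_eq_norm] using hyR⟩
  have hyK' : y ∈ K' := Metric.self_subset_cthickening K hyK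
  -- any point within distance ‖x-y‖+‖z‖ of y is in K' and satisfies the fderiv bound
  have hmem : ∀ w : EuclideanSpace ℝ (Fin N), dist w y ≤ ‖x - y‖ + ‖z‖ → w ∈ K' := by
    intro w hw
    exact Metric.mem_cthickening_of_dist_le w y r K hyK (by linarith)
  have hbound : ∀ w : EuclideanSpace ℝ (Fin N), dist w y ≤ ‖x - y‖ + ‖z‖ →
      ‖f w - f y‖ ≤ ε / 2 := by
    intro w hw
    have h1 : dist w y < δ₁ := by linarith
    have := hδ₁' w (hmem w hw) y hyK' h1
    rw [dist_eq_norm] at this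
    exact this.le
  -- segment 1: from y+z to x+z
  have hseg1 : ∀ w ∈ segment ℝ (y + z) (x + z), dist w y ≤ ‖x - y‖ + ‖z‖ :=
    fun w hw => seg_dist x y z w hw
  have hseg1E : segment ℝ (y + z) (x + z) ⊆ E :=
    fun w hw => hrE (hmem w (hseg1 w hw))
  -- segment 2: from y to x
  have hseg2 : ∀ w ∈ segment ℝ y x, dist w y ≤ ‖x - y‖ + ‖z‖ := by
    intro w hw
    have : w ∈ segment ℝ (y + 0) (x + 0) := by simpa using hw
    have h0 := seg_dist x y 0 w this
    simp only [norm_zero, add_zero] at h0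
    have : (0:ℝ) ≤ ‖z‖ := norm_nonneg z
    linarith
  have hseg2E : segment ℝ y x ⊆ E := fun w hw => hrE (hmem w (hseg2 w hw))
  have hxzE : x + z ∈ E := hseg1E (right_mem_segment ℝ _ _)
  have hyzE : y + z ∈ E := hseg1E (left_mem_segment ℝ _ _)
  refine ⟨hxzE, hyzE, ?_⟩
  have est1 : ‖ψ (x + z) - ψ (y + z) - f y ((x + z) - (y + z))‖ ≤ ε / 2 * ‖(x + z) - (y + z)‖ :=
    mvt_key hEopen hψC1 (y + z) (x + z) y hseg1E
      (fun w hw => hbound w (hseg1 w hw))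
  have est2 : ‖ψ x - ψ y - f y (x - y)‖ ≤ ε / 2 * ‖x - y‖ :=
    mvt_key hEopen hψC1 y x y hseg2E (fun w hw => hbound w (hseg2 w hw))
  have hxyz : (x + z) - (y + z) = x - y := by abel
  rw [hxyz] at est1
  rw [hψid x hx, hψid y hy] at est2
  have key : ψ (x + z) - ψ (y + z) - (x - y)
      = (ψ (x + z) - ψ (y + z) - f y (x - y)) - (x - y - f y (x - y)) := by abel
  calc ‖ψ (x + z) - ψ (y + z) - (x - y)‖
      ≤ ‖ψ (x + z) - ψ (y + z) - f y (x - y)‖ + ‖x - y - f y (x - y)‖ := by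
        rw [key]; exact norm_sub_le _ _
    _ ≤ ε / 2 * ‖x - y‖ + ε / 2 * ‖x - y‖ := add_le_add est1 est2
    _ = ε * ‖x - y‖ := by ring

end
end

section
/- Let f be a C^1 real-valued function on a convex open neighbourhood V of a closed hypercube C ⊆ ℝ^d with edge length l. Let ε, δ > 0 be such that l ≤ δ and ‖Df(u) − Df(u')‖₂ ≤ ε whenever u, u' ∈ V with ‖u − u'‖₂ ≤ √d·δ. Then the coordinatewise-affine interpolation Λ(f,C) of f on C satisfies Lip₂((Λ(f,C) − f)|_C) ≤ (1 + √d)·ε. -/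
open Set

noncomputable section

/-- The coordinatewise-affine interpolation `Λ(f,C)` of `f` on the hypercube with
vertices `v_γ = w + l•γ`, `γ ∈ {0,1}^d`. -/
def interp {d : ℕ} (w : EuclideanSpace ℝ (Fin d)) (l : ℝ)
    (f : EuclideanSpace ℝ (Fin d) → ℝ) (x : EuclideanSpace ℝ (Fin d)) : ℝ :=
  ∑ γ : Fin d → Bool,
    (∏ i, if γ i then (x i - w i) / l else 1 - (x i - w i) / l) *
      f (WithLp.toLp 2 (fun i => w i + if γ i then l else 0) : EuclideanSpace ℝ (Fin d))

/-- The closed hypercube with corner `w` and edge length `l`. -/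
def hcube {d : ℕ} (w : EuclideanSpace ℝ (Fin d)) (l : ℝ) : Set (EuclideanSpace ℝ (Fin d)) :=
  {x | ∀ i, x i ∈ Set.Icc (w i) (w i + l)}

namespace Stmt4Aux

variable {d : ℕ}

/-- The single-coordinate interpolation weights. -/
def wt (w : EuclideanSpace ℝ (Fin d)) (l : ℝ) (z : EuclideanSpace ℝ (Fin d)) (i : Fin d)
    (b : Bool) : ℝ :=
  if b then (z i - w i) / l else 1 - (z i - w i) / l

/-- The vertices of the hypercube. -/
def vert (w : EuclideanSpace ℝ (Fin d)) (l : ℝ) (γ : Fin d → Bool) :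
    EuclideanSpace ℝ (Fin d) :=
  WithLp.toLp 2 (fun i => w i + if γ i then l else 0)

lemma interp_eq (w : EuclideanSpace ℝ (Fin d)) (l : ℝ) (f : EuclideanSpace ℝ (Fin d) → ℝ)
    (x : EuclideanSpace ℝ (Fin d)) :
    interp w l f x = ∑ γ : Fin d → Bool, (∏ i, wt w l x i (γ i)) * f (vert w l γ) := rfl

lemma sum_prod_bool {ι : Type*} [Fintype ι] [DecidableEq ι] (g : ι → Bool → ℝ) :
    ∑ γ : ι → Bool, ∏ i, g i (γ i) = ∏ i, (g i true + g i false) := by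
  rw [← Fintype.piFinset_univ, ← Finset.prod_univ_sum]
  simp

lemma wt_sum (w : EuclideanSpace ℝ (Fin d)) {l : ℝ} (z : EuclideanSpace ℝ (Fin d)) (i : Fin d) :
    wt w l z i true + wt w l z i false = 1 := by simp [wt]

lemma wt_nonneg (w : EuclideanSpace ℝ (Fin d)) {l : ℝ} (hl : 0 < l)
    {z : EuclideanSpace ℝ (Fin d)} (hz : z ∈ hcube w l) (i : Fin d) (b : Bool) :
    0 ≤ wt w l z i b := by
  have h1 := (hz i).1; have h2 := (hz i).2
  cases b with
  | false =>
    have : (z i - w i) / l ≤ 1 := by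
      rw [div_le_one hl]; linarith
    simpa [wt] using this
  | true =>
    have : 0 ≤ (z i - w i) / l := div_nonneg (by linarith) hl.le
    simpa [wt] using this

lemma vert_mem (w : EuclideanSpace ℝ (Fin d)) {l : ℝ} (hl : 0 < l) (γ : Fin d → Bool) :
    vert w l γ ∈ hcube w l := by
  intro i
  cases h : γ i <;> simp [vert, h] <;> linarith

lemma hcube_convex (w : EuclideanSpace ℝ (Fin d)) (l : ℝ) : Convex ℝ (hcube w l) := by
  intro x hx y hy a b ha hb hab i
  have h : (a • x + b • y) i = a * x i + b * y i := rfl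
  rw [h]
  exact convex_Icc (w i) (w i + l) (hx i) (hy i) ha hb hab

lemma hcube_diam (w : EuclideanSpace ℝ (Fin d)) {l : ℝ} (hl : 0 < l)
    {x y : EuclideanSpace ℝ (Fin d)} (hx : x ∈ hcube w l) (hy : y ∈ hcube w l) :
    ‖x - y‖ ≤ Real.sqrt d * l := by
  rw [EuclideanSpace.norm_eq]
  have h1 : ∑ i, ‖(x - y) i‖ ^ 2 ≤ (d : ℝ) * l ^ 2 := by
    calc ∑ i, ‖(x - y) i‖ ^ 2 ≤ ∑ _i : Fin d, l ^ 2 := by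
          apply Finset.sum_le_sum
          intro i _
          have h1 := (hx i).1; have h2 := (hx i).2
          have h3 := (hy i).1; have h4 := (hy i).2
          have : |(x - y) i| ≤ l := by
            rw [PiLp.sub_apply]
            rw [abs_le]; constructor <;> linarith
          calc ‖(x - y) i‖ ^ 2 = |(x - y) i| ^ 2 := by rw [Real.norm_eq_abs]
            _ ≤ l ^ 2 := by nlinarith [abs_nonneg ((x - y) i)]
      _ = (d : ℝ) * l ^ 2 := by simp [Finset.sum_const, mul_comm]
  calc Real.sqrt (∑ i, ‖(x - y) i‖ ^ 2) ≤ Real.sqrt ((d : ℝ) * l ^ 2) := Real.sqrt_le_sqrt h1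
    _ = Real.sqrt d * l := by
        rw [Real.sqrt_mul (Nat.cast_nonneg d), Real.sqrt_sq hl.le]

lemma l1_le_sqrt_l2 {x y : EuclideanSpace ℝ (Fin d)} :
    ∑ i, |x i - y i| ≤ Real.sqrt d * ‖x - y‖ := by
  have hcs := Finset.sum_mul_sq_le_sq_mul_sq Finset.univ (fun _ : Fin d => (1 : ℝ))
    (fun i => |x i - y i|)
  simp only [one_mul, one_pow] at hcs
  have hn : ‖x - y‖ = Real.sqrt (∑ i, |x i - y i| ^ 2) := by
    rw [EuclideanSpace.norm_eq]
    simp [PiLp.sub_apply, Real.norm_eq_abs, sq_abs]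
  have h0 : (0 : ℝ) ≤ ∑ i, |x i - y i| := Finset.sum_nonneg fun i _ => abs_nonneg _
  have : ∑ i, |x i - y i| = Real.sqrt ((∑ i, |x i - y i|) ^ 2) := by
    rw [Real.sqrt_sq h0]
  rw [this, hn]
  calc Real.sqrt ((∑ i, |x i - y i|) ^ 2)
      ≤ Real.sqrt ((∑ _i : Fin d, (1:ℝ)) * ∑ i, |x i - y i| ^ 2) := Real.sqrt_le_sqrt hcs
    _ = Real.sqrt d * Real.sqrt (∑ i, |x i - y i| ^ 2) := by
        rw [Real.sqrt_mul (Finset.sum_nonneg fun _ _ => zero_le_one : (0:ℝ) ≤ ∑ _i : Fin d, (1:ℝ))]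
        norm_num

lemma interp_sub (w : EuclideanSpace ℝ (Fin d)) (l : ℝ) (f g : EuclideanSpace ℝ (Fin d) → ℝ)
    (x : EuclideanSpace ℝ (Fin d)) :
    interp w l (fun u => f u - g u) x = interp w l f x - interp w l g x := by
  simp [interp, mul_sub, Finset.sum_sub_distrib]

lemma eucl_repr (z : EuclideanSpace ℝ (Fin d)) :
    ∑ i, z i • EuclideanSpace.single i (1 : ℝ) = z := by
  simpa [EuclideanSpace.basisFun_apply] using
    (EuclideanSpace.basisFun (Fin d) ℝ).sum_repr z

lemma clm_apply_eq_sum (L : EuclideanSpace ℝ (Fin d) →L[ℝ] ℝ) (z : EuclideanSpace ℝ (Fin d)) :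
    L z = ∑ i, z i * L (EuclideanSpace.single i (1 : ℝ)) := by
  conv_lhs => rw [← eucl_repr z]
  rw [map_sum]
  refine Finset.sum_congr rfl fun i _ => ?_
  rw [map_smul, smul_eq_mul]

lemma sum_weights (w : EuclideanSpace ℝ (Fin d)) (l : ℝ) (x : EuclideanSpace ℝ (Fin d)) :
    ∑ γ : Fin d → Bool, (∏ i, wt w l x i (γ i)) = 1 := by
  rw [sum_prod_bool]
  simp [wt_sum]

/-- auxiliary modified weight family -/
def mwt (t : Fin d → Bool → ℝ) (u : Bool → ℝ) (i : Fin d) (j : Fin d) (b : Bool) : ℝ :=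
  if j = i then t j b * u b else t j b

lemma sum_prod_mul (t : Fin d → Bool → ℝ) (u : Bool → ℝ) (i : Fin d) :
    ∑ γ : Fin d → Bool, (∏ j, t j (γ j)) * u (γ i)
      = (t i true * u true + t i false * u false)
        * ∏ j ∈ Finset.univ.erase i, (t j true + t j false) := by
  have key : ∀ γ : Fin d → Bool, (∏ j, t j (γ j)) * u (γ i) = ∏ j, mwt t u i j (γ j) := by
    intro γ
    rw [← Finset.mul_prod_erase Finset.univ (fun j => t j (γ j)) (Finset.mem_univ i),
        ← Finset.mul_prod_erase Finset.univ (fun j => mwt t u i j (γ j)) (Finset.mem_univ i)]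
    have h2 : ∏ j ∈ Finset.univ.erase i, mwt t u i j (γ j)
        = ∏ j ∈ Finset.univ.erase i, t j (γ j) :=
      Finset.prod_congr rfl fun j hj => by simp [mwt, (Finset.mem_erase.mp hj).1]
    rw [h2, mwt, if_pos rfl]
    ring
  rw [Finset.sum_congr rfl fun γ _ => key γ, sum_prod_bool,
      ← Finset.mul_prod_erase Finset.univ (fun j => mwt t u i j true + mwt t u i j false)
        (Finset.mem_univ i)]
  have h3 : ∏ j ∈ Finset.univ.erase i, (mwt t u i j true + mwt t u i j false)
      = ∏ j ∈ Finset.univ.erase i, (t j true + t j false) :=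
    Finset.prod_congr rfl fun j hj => by simp [mwt, (Finset.mem_erase.mp hj).1]
  rw [h3, mwt, mwt, if_pos rfl, if_pos rfl]

lemma sum_weights_vert (w : EuclideanSpace ℝ (Fin d)) {l : ℝ} (hl : l ≠ 0)
    (x y : EuclideanSpace ℝ (Fin d)) (i : Fin d) :
    ∑ γ : Fin d → Bool, (∏ j, wt w l x j (γ j)) * (vert w l γ i - y i) = x i - y i := by
  have h : ∀ γ : Fin d → Bool,
      (∏ j, wt w l x j (γ j)) * (vert w l γ i - y i)
        = (∏ j, wt w l x j (γ j)) * ((fun b => (w i + if b then l else 0) - y i) (γ i)) := by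
    intro γ; simp [vert]
  rw [Finset.sum_congr rfl fun γ _ => h γ,
      sum_prod_mul (fun j b => wt w l x j b) (fun b => (w i + if b then l else 0) - y i) i]
  have h1 : ∏ j ∈ Finset.univ.erase i, (wt w l x j true + wt w l x j false) = 1 := by
    rw [Finset.prod_congr rfl fun j _ => wt_sum w x j, Finset.prod_const_one]
  rw [h1, mul_one]
  simp only [wt, if_pos, if_neg, Bool.false_eq_true, if_false, if_true]
  field_simp
  ring

lemma interp_affine (w : EuclideanSpace ℝ (Fin d)) {l : ℝ} (hl : l ≠ 0)
    (L : EuclideanSpace ℝ (Fin d) →L[ℝ] ℝ) (c : ℝ) (y x : EuclideanSpace ℝ (Fin d)) :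
    interp w l (fun u => c + L (u - y)) x = c + L (x - y) := by
  rw [interp_eq]
  have hLv : ∀ γ : Fin d → Bool, L (vert w l γ - y)
      = ∑ i, (vert w l γ i - y i) * L (EuclideanSpace.single i (1 : ℝ)) := by
    intro γ
    rw [clm_apply_eq_sum]
    exact Finset.sum_congr rfl fun i _ => by rw [PiLp.sub_apply]
  calc ∑ γ : Fin d → Bool, (∏ i, wt w l x i (γ i)) * (c + L (vert w l γ - y))
      = ∑ γ : Fin d → Bool, ((∏ i, wt w l x i (γ i)) * c
          + ∑ i, ((∏ j, wt w l x j (γ j)) * (vert w l γ i - y i))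
              * L (EuclideanSpace.single i (1 : ℝ))) := by
        refine Finset.sum_congr rfl fun γ _ => ?_
        rw [hLv γ, mul_add, Finset.mul_sum]
        congr 1
        exact Finset.sum_congr rfl fun i _ => by ring
    _ = (∑ γ : Fin d → Bool, (∏ i, wt w l x i (γ i))) * c
          + ∑ i, (∑ γ : Fin d → Bool, (∏ j, wt w l x j (γ j)) * (vert w l γ i - y i))
              * L (EuclideanSpace.single i (1 : ℝ)) := by
        rw [Finset.sum_add_distrib, ← Finset.sum_mul, Finset.sum_comm]
        congr 1
        exact Finset.sum_congr rfl fun i _ => by rw [Finset.sum_mul]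
    _ = c + L (x - y) := by
        rw [sum_weights, one_mul]
        congr 1
        rw [clm_apply_eq_sum L (x - y)]
        refine Finset.sum_congr rfl fun i _ => ?_
        rw [sum_weights_vert w hl x y i, PiLp.sub_apply]

lemma step_lip (w : EuclideanSpace ℝ (Fin d)) {l ε : ℝ} (hl : 0 < l)
    (g : EuclideanSpace ℝ (Fin d) → ℝ) (i : Fin d) {z z' : EuclideanSpace ℝ (Fin d)}
    (hz : z ∈ hcube w l) (hzz : ∀ j, j ≠ i → z j = z' j)
    (hr : ∀ γ γ' : Fin d → Bool, (∀ j, j ≠ i → γ j = γ' j) → γ i = true → γ' i = false →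
      |g (vert w l γ) - g (vert w l γ')| ≤ ε * l) :
    |interp w l g z - interp w l g z'| ≤ ε * |z i - z' i| := by
  classical
  set c : ℝ := (z i - z' i) / l with hc
  set F : (Fin d → Bool) → ℝ := fun γ =>
    ((if γ i then c else -c) * ∏ j ∈ Finset.univ.erase i, wt w l z j (γ j)) * g (vert w l γ)
    with hF
  have hdiff : interp w l g z - interp w l g z' = ∑ γ : Fin d → Bool, F γ := by
    rw [interp_eq, interp_eq, ← Finset.sum_sub_distrib]
    refine Finset.sum_congr rfl fun γ _ => ?_
    rw [← sub_mul, hF]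
    congr 1
    rw [← Finset.mul_prod_erase Finset.univ (fun j => wt w l z j (γ j)) (Finset.mem_univ i),
        ← Finset.mul_prod_erase Finset.univ (fun j => wt w l z' j (γ j)) (Finset.mem_univ i)]
    have heq : ∏ j ∈ Finset.univ.erase i, wt w l z' j (γ j)
        = ∏ j ∈ Finset.univ.erase i, wt w l z j (γ j) := by
      refine Finset.prod_congr rfl fun j hj => ?_
      rw [wt, wt, hzz j (Finset.mem_erase.mp hj).1]
    rw [heq, ← sub_mul]
    congr 1
    cases hγi : γ i <;> simp [wt, hc] <;> ring
  rw [hdiff]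
  set e := (Equiv.funSplitAt i Bool).symm with he
  set Q : ({j : Fin d // j ≠ i} → Bool) → ℝ := fun δ =>
    ∏ j' : {j : Fin d // j ≠ i}, wt w l z j' (δ j') with hQ
  have hsplit : ∑ γ : Fin d → Bool, F γ
      = ∑ δ : {j : Fin d // j ≠ i} → Bool, (F (e (true, δ)) + F (e (false, δ))) := by
    rw [← Equiv.sum_comp e F, Fintype.sum_prod_type, Fintype.sum_bool,
        ← Finset.sum_add_distrib]
  have hQeq : ∀ (b : Bool) (δ : {j : Fin d // j ≠ i} → Bool),
      ∏ j ∈ Finset.univ.erase i, wt w l z j (e (b, δ) j) = Q δ := by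
    intro b δ
    rw [hQ]
    rw [Finset.prod_subtype (p := fun j => j ≠ i) (Finset.univ.erase i)
      (fun j => by simp [Finset.mem_erase]) (fun j => wt w l z j (e (b, δ) j))]
    refine Finset.prod_congr rfl fun j' _ => ?_
    congr 1
    simp [he, j'.2]
  have hQnonneg : ∀ δ, 0 ≤ Q δ := fun δ =>
    Finset.prod_nonneg fun j' _ => wt_nonneg w hl hz j' _
  have hQsum : ∑ δ : {j : Fin d // j ≠ i} → Bool, Q δ = 1 := by
    rw [hQ]
    rw [sum_prod_bool (fun (j' : {j : Fin d // j ≠ i}) b => wt w l z j' b)]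
    exact Finset.prod_eq_one fun j' _ => wt_sum w z j'
  have hterm : ∀ δ : {j : Fin d // j ≠ i} → Bool,
      F (e (true, δ)) + F (e (false, δ))
        = c * Q δ * (g (vert w l (e (true, δ))) - g (vert w l (e (false, δ)))) := by
    intro δ
    rw [hF]
    simp only [hQeq true δ, hQeq false δ]
    have h1 : e (true, δ) i = true := by simp [he]
    have h2 : e (false, δ) i = false := by simp [he]
    rw [h1, h2]
    simp only [if_pos, Bool.false_eq_true, if_false]
    ring
  rw [hsplit, Finset.sum_congr rfl fun δ _ => hterm δ]
  have hbound : ∀ δ : {j : Fin d // j ≠ i} → Bool,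
      |c * Q δ * (g (vert w l (e (true, δ))) - g (vert w l (e (false, δ))))|
        ≤ |c| * Q δ * (ε * l) := by
    intro δ
    rw [abs_mul, abs_mul, abs_of_nonneg (hQnonneg δ)]
    refine mul_le_mul_of_nonneg_left ?_ (mul_nonneg (abs_nonneg c) (hQnonneg δ))
    refine hr _ _ (fun j hj => ?_) (by simp [he]) (by simp [he])
    simp [he, hj]
  calc |∑ δ : {j : Fin d // j ≠ i} → Bool,
        c * Q δ * (g (vert w l (e (true, δ))) - g (vert w l (e (false, δ))))|
      ≤ ∑ δ : {j : Fin d // j ≠ i} → Bool, |c| * Q δ * (ε * l) := by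
        refine (Finset.abs_sum_le_sum_abs _ _).trans ?_
        exact Finset.sum_le_sum fun δ _ => hbound δ
    _ = |c| * (ε * l) := by
        rw [← Finset.sum_mul]
        rw [← Finset.mul_sum, hQsum, mul_one]
    _ = ε * |z i - z' i| := by
        rw [hc, abs_div, abs_of_pos hl]
        field_simp

lemma interp_lip (w : EuclideanSpace ℝ (Fin d)) {l ε : ℝ} (hl : 0 < l)
    (g : EuclideanSpace ℝ (Fin d) → ℝ) {x y : EuclideanSpace ℝ (Fin d)}
    (hx : x ∈ hcube w l) (hy : y ∈ hcube w l)
    (hr : ∀ (i : Fin d) (γ γ' : Fin d → Bool), (∀ j, j ≠ i → γ j = γ' j) → γ i = true →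
      γ' i = false → |g (vert w l γ) - g (vert w l γ')| ≤ ε * l) :
    |interp w l g x - interp w l g y| ≤ ε * ∑ i, |x i - y i| := by
  classical
  set m : ℕ → EuclideanSpace ℝ (Fin d) := fun k =>
    (WithLp.toLp 2 (fun j : Fin d => if (j : ℕ) < k then x j else y j) : EuclideanSpace ℝ (Fin d)) with hm
  have hm0 : m 0 = y := by
    ext j; simp [hm]
  have hmd : m d = x := by
    ext j; simp [hm, j.isLt]
  have hmem : ∀ k, m k ∈ hcube w l := by
    intro k j
    have : (m k) j = if (j : ℕ) < k then x j else y j := rfl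
    rw [this]
    split
    · exact hx j
    · exact hy j
  set s : ℕ → ℝ := fun k => ∑ j : Fin d, (if (j : ℕ) = k then |x j - y j| else 0) with hs
  have htel : interp w l g x - interp w l g y
      = ∑ k ∈ Finset.range d, (interp w l g (m (k + 1)) - interp w l g (m k)) := by
    rw [Finset.sum_range_sub (fun k => interp w l g (m k)) d, hm0, hmd]
  have hstep : ∀ k ∈ Finset.range d,
      |interp w l g (m (k + 1)) - interp w l g (m k)| ≤ ε * s k := by
    intro k hk
    have hkd : k < d := Finset.mem_range.mp hk
    set i : Fin d := ⟨k, hkd⟩ with hi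
    have hzz : ∀ j : Fin d, j ≠ i → m (k + 1) j = m k j := by
      intro j hj
      have hjk : (j : ℕ) ≠ k := by
        intro hcon
        apply hj
        exact Fin.ext hcon
      show (if (j : ℕ) < k + 1 then x j else y j) = (if (j : ℕ) < k then x j else y j)
      have : ((j : ℕ) < k + 1) ↔ ((j : ℕ) < k) := by omega
      simp only [this]
    have hst := step_lip w hl g i (hmem (k + 1)) hzz (fun γ γ' h1 h2 h3 => hr i γ γ' h1 h2 h3)
    have hmi : m (k + 1) i - m k i = x i - y i := by
      have h1 : m (k + 1) i = x i := by
        show (if (i : ℕ) < k + 1 then x i else y i) = x i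
        simp [hi]
      have h2 : m k i = y i := by
        show (if (i : ℕ) < k then x i else y i) = y i
        simp [hi]
      rw [h1, h2]
    rw [hmi] at hst
    have hsk : s k = |x i - y i| := by
      show (∑ j : Fin d, if (j : ℕ) = k then |x j - y j| else 0) = |x i - y i|
      rw [Finset.sum_eq_single i]
      · simp [hi]
      · intro j _ hj
        have : (j : ℕ) ≠ k := fun hcon => hj (Fin.ext hcon)
        simp [this]
      · intro hcon
        exact absurd (Finset.mem_univ i) hcon
    rw [hsk]
    exact hst
  have hssum : ∑ k ∈ Finset.range d, s k = ∑ j : Fin d, |x j - y j| := by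
    rw [hs, Finset.sum_comm]
    refine Finset.sum_congr rfl fun j _ => ?_
    rw [Finset.sum_ite_eq (Finset.range d) ((j : ℕ)) (fun _ => |x j - y j|)]
    simp [j.isLt]
  calc |interp w l g x - interp w l g y|
      ≤ ∑ k ∈ Finset.range d, |interp w l g (m (k + 1)) - interp w l g (m k)| := by
        rw [htel]; exact Finset.abs_sum_le_sum_abs _ _
    _ ≤ ∑ k ∈ Finset.range d, ε * s k := Finset.sum_le_sum hstep
    _ = ε * ∑ i, |x i - y i| := by rw [← Finset.mul_sum, hssum]

end Stmt4Aux

open Stmt4Aux in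
theorem stmt4 {d : ℕ} (V : Set (EuclideanSpace ℝ (Fin d)))
    (hVopen : IsOpen V) (hVconv : Convex ℝ V)
    (w : EuclideanSpace ℝ (Fin d)) (l : ℝ) (hl : 0 < l) (hCV : hcube w l ⊆ V)
    (f : EuclideanSpace ℝ (Fin d) → ℝ) (hf : ContDiffOn ℝ 1 f V)
    (ε δ : ℝ) (hε : 0 < ε) (hδ : 0 < δ) (hlδ : l ≤ δ)
    (hDf : ∀ u ∈ V, ∀ u' ∈ V, ‖u - u'‖ ≤ Real.sqrt d * δ →
      ‖fderiv ℝ f u - fderiv ℝ f u'‖ ≤ ε) :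
    ∀ x ∈ hcube w l, ∀ y ∈ hcube w l,
      |(interp w l f x - f x) - (interp w l f y - f y)|
        ≤ (1 + Real.sqrt d) * ε * ‖x - y‖ := by
  intro x hx y hy
  classical
  have hl0 : l ≠ 0 := ne_of_gt hl
  set L := fderiv ℝ f y with hL
  set r : EuclideanSpace ℝ (Fin d) → ℝ := fun u => f u - (f y + L (u - y)) with hrdef
  -- decomposition of the interpolation
  have hinterp : ∀ u, interp w l r u = interp w l f u - (f y + L (u - y)) := by
    intro u
    rw [hrdef]
    rw [interp_sub w l f (fun v => f y + L (v - y)) u, interp_affine w hl0 L (f y) y u]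
  have hkey : (interp w l f x - f x) - (interp w l f y - f y)
      = (interp w l r x - interp w l r y) - (r x - r y) := by
    rw [hinterp x, hinterp y, hrdef]
    ring
  -- Lipschitz property of the residual r on the cube
  have hrlip : ∀ u ∈ hcube w l, ∀ u' ∈ hcube w l, |r u - r u'| ≤ ε * ‖u - u'‖ := by
    intro u hu u' hu'
    have hder : ∀ v ∈ hcube w l,
        HasFDerivWithinAt r (fderiv ℝ f v - L) (hcube w l) v := by
      intro v hv
      have hVv : v ∈ V := hCV hv
      have hd : DifferentiableAt ℝ f v :=
        (hf.differentiableOn one_ne_zero).differentiableAt (hVopen.mem_nhds hVv)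
      have ha : HasFDerivAt (fun u => f y + L (u - y)) L v := by
        have h1 : HasFDerivAt (fun u => f y + (L u - L y)) L v :=
          ((L.hasFDerivAt).sub_const (L y)).const_add (f y)
        have h2 : (fun u => f y + L (u - y)) = (fun u => f y + (L u - L y)) := by
          funext u; rw [map_sub]
        rw [h2]
        exact h1
      exact ((hd.hasFDerivAt.sub ha)).hasFDerivWithinAt
    have hbound : ∀ v ∈ hcube w l, ‖fderiv ℝ f v - L‖ ≤ ε := by
      intro v hv
      refine hDf v (hCV hv) y (hCV hy) ?_
      refine (hcube_diam w hl hv hy).trans ?_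
      exact mul_le_mul_of_nonneg_left hlδ (Real.sqrt_nonneg d)
    have := Convex.norm_image_sub_le_of_norm_hasFDerivWithin_le
      hder hbound (hcube_convex w l) hu' hu
    simpa [Real.norm_eq_abs] using this
  -- bound on vertex differences
  have hvert : ∀ (i : Fin d) (γ γ' : Fin d → Bool), (∀ j, j ≠ i → γ j = γ' j) →
      γ i = true → γ' i = false → |r (vert w l γ) - r (vert w l γ')| ≤ ε * l := by
    intro i γ γ' hag hT hF
    have hnorm : ‖vert w l γ - vert w l γ'‖ = l := by
      have hco : ∀ j, (vert w l γ - vert w l γ') j = if j = i then l else 0 := by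
        intro j
        rw [PiLp.sub_apply]
        by_cases hj : j = i
        · subst hj
          simp [vert, hT, hF]
        · rw [if_neg hj]
          simp [vert, hag j hj]
      rw [EuclideanSpace.norm_eq]
      have : ∑ j, ‖(vert w l γ - vert w l γ') j‖ ^ 2 = l ^ 2 := by
        have h1 : ∀ j, ‖(vert w l γ - vert w l γ') j‖ ^ 2 = if j = i then l ^ 2 else 0 := by
          intro j
          rw [hco j, Real.norm_eq_abs]
          by_cases hj : j = i <;> simp [hj]
        rw [Finset.sum_congr rfl fun j _ => h1 j]
        simp
      rw [this, Real.sqrt_sq hl.le]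
    have := hrlip (vert w l γ) (vert_mem w hl γ) (vert w l γ') (vert_mem w hl γ')
    rw [hnorm] at this
    exact this
  -- combine
  have h1 : |interp w l r x - interp w l r y| ≤ ε * ∑ i, |x i - y i| :=
    interp_lip w hl r hx hy hvert
  have h2 : ∑ i, |x i - y i| ≤ Real.sqrt d * ‖x - y‖ := l1_le_sqrt_l2
  have h3 : |r x - r y| ≤ ε * ‖x - y‖ := hrlip x hx y hy
  calc |(interp w l f x - f x) - (interp w l f y - f y)|
      = |(interp w l r x - interp w l r y) - (r x - r y)| := by rw [hkey]
    _ ≤ |interp w l r x - interp w l r y| + |r x - r y| := abs_sub _ _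
    _ ≤ ε * (Real.sqrt d * ‖x - y‖) + ε * ‖x - y‖ := by
        refine add_le_add (h1.trans ?_) h3
        exact mul_le_mul_of_nonneg_left h2 hε.le
    _ = (1 + Real.sqrt d) * ε * ‖x - y‖ := by ring

end
end

section
/- Let U ⊆ ℝ^N, let f: U → ℝ be Lipschitz, let ε > 0, let (U_i)_{i=1}^m be an open cover of U with a subordinate partition of unity (α_i)_{i=1}^m consisting of H-Lipschitz functions with values in [0,1], and let f_i: U_i → ℝ satisfy ‖f_i − f|_{U_i}‖_∞ < ε and Lip(f_i − f|_{U_i}) < ε for each i. Then g = Σ_{i=1}^m α_i f_i satisfies ‖g − f‖_∞ ≤ ε and Lip(g − f) ≤ (1 + mH)·ε. -/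
open Set

noncomputable section

theorem stmt7 {E : Type*} [NormedAddCommGroup E] [NormedSpace ℝ E]
    [FiniteDimensional ℝ E]
    (U : Set E) (f : E → ℝ) (Lf : ℝ) (hLf : 0 ≤ Lf)
    (hfLip : ∀ x ∈ U, ∀ y ∈ U, |f x - f y| ≤ Lf * ‖x - y‖)
    (ε H : ℝ) (hε : 0 < ε) (hH : 0 < H)
    (m : ℕ) (Ui : Fin m → Set E) (hUopen : ∀ i, IsOpen (Ui i))
    (hUcover : U ⊆ ⋃ i, Ui i)
    (α : Fin m → E → ℝ)
    (hα01 : ∀ i, ∀ x ∈ U, α i x ∈ Set.Icc (0 : ℝ) 1)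
    (hαsum : ∀ x ∈ U, ∑ i, α i x = 1)
    (hαsupp : ∀ i, ∀ x ∈ U, x ∉ Ui i → α i x = 0)
    (hαLip : ∀ i, ∀ x ∈ U, ∀ y ∈ U, |α i x - α i y| ≤ H * ‖x - y‖)
    (fi : Fin m → E → ℝ)
    (hfisup : ∀ i, ∀ x ∈ U ∩ Ui i, |fi i x - f x| ≤ ε)
    (hfiLip : ∀ i, ∀ x ∈ U ∩ Ui i, ∀ y ∈ U ∩ Ui i,
      |(fi i x - f x) - (fi i y - f y)| ≤ ε * ‖x - y‖) :
    (∀ x ∈ U, |(∑ i, α i x * fi i x) - f x| ≤ ε) ∧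
    (∀ x ∈ U, ∀ y ∈ U,
      |((∑ i, α i x * fi i x) - f x) - ((∑ i, α i y * fi i y) - f y)|
        ≤ (1 + m * H) * ε * ‖x - y‖) := by
  have key : ∀ x ∈ U, (∑ i, α i x * fi i x) - f x = ∑ i, α i x * (fi i x - f x) := by
    intro x hx
    have : ∑ i, α i x * (fi i x - f x) = (∑ i, α i x * fi i x) - (∑ i, α i x) * f x := by
      rw [Finset.sum_mul, ← Finset.sum_sub_distrib]
      exact Finset.sum_congr rfl fun i _ => by ring
    rw [this, hαsum x hx, one_mul]
  constructor
  · intro x hx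
    rw [key x hx]
    calc |∑ i, α i x * (fi i x - f x)| ≤ ∑ i, |α i x * (fi i x - f x)| :=
          Finset.abs_sum_le_sum_abs _ _
      _ ≤ ∑ i, α i x * ε := by
          refine Finset.sum_le_sum fun i _ => ?_
          by_cases hxi : x ∈ Ui i
          · rw [abs_mul, abs_of_nonneg (hα01 i x hx).1]
            exact mul_le_mul_of_nonneg_left (hfisup i x ⟨hx, hxi⟩) (hα01 i x hx).1
          · simp [hαsupp i x hx hxi]
      _ = ε := by rw [← Finset.sum_mul, hαsum x hx, one_mul]
  · intro x hx y hy
    rw [key x hx, key y hy, ← Finset.sum_sub_distrib]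
    have hterm : ∀ i ∈ Finset.univ,
        |α i x * (fi i x - f x) - α i y * (fi i y - f y)|
          ≤ α i x * (ε * ‖x - y‖) + H * ε * ‖x - y‖ := by
      intro i _
      set a := α i x with ha
      set b := α i y with hb
      have a0 : 0 ≤ a := (hα01 i x hx).1
      have hab : |a - b| ≤ H * ‖x - y‖ := hαLip i x hx y hy
      by_cases hxi : x ∈ Ui i
      · by_cases hyi : y ∈ Ui i
        · have heq : a * (fi i x - f x) - b * (fi i y - f y)
              = a * ((fi i x - f x) - (fi i y - f y)) + (a - b) * (fi i y - f y) := by ring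
          rw [heq]
          refine (abs_add_le _ _).trans (add_le_add ?_ ?_)
          · rw [abs_mul, abs_of_nonneg a0]
            exact mul_le_mul_of_nonneg_left (hfiLip i x ⟨hx, hxi⟩ y ⟨hy, hyi⟩) a0
          · rw [abs_mul]
            calc |a - b| * |fi i y - f y| ≤ (H * ‖x - y‖) * ε :=
                  mul_le_mul hab (hfisup i y ⟨hy, hyi⟩) (abs_nonneg _)
                    (by positivity)
              _ = H * ε * ‖x - y‖ := by ring
        · have hb0 : b = 0 := hαsupp i y hy hyi
          have : a * (fi i x - f x) - b * (fi i y - f y) = (a - b) * (fi i x - f x) := by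
            rw [hb0]; ring
          rw [this, abs_mul]
          have h1 : |a - b| * |fi i x - f x| ≤ (H * ‖x - y‖) * ε :=
            mul_le_mul hab (hfisup i x ⟨hx, hxi⟩) (abs_nonneg _) (by positivity)
          have h2 : (0:ℝ) ≤ a * (ε * ‖x - y‖) := by positivity
          nlinarith
      · have ha0 : a = 0 := hαsupp i x hx hxi
        by_cases hyi : y ∈ Ui i
        · have : a * (fi i x - f x) - b * (fi i y - f y) = (a - b) * (fi i y - f y) := by
            rw [ha0]; ring
          rw [this, abs_mul]
          have h1 : |a - b| * |fi i y - f y| ≤ (H * ‖x - y‖) * ε :=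
            mul_le_mul hab (hfisup i y ⟨hy, hyi⟩) (abs_nonneg _) (by positivity)
          have h2 : (0:ℝ) ≤ a * (ε * ‖x - y‖) := by positivity
          nlinarith
        · have hb0 : b = 0 := hαsupp i y hy hyi
          rw [ha0, hb0]
          simp
          positivity
    calc |∑ i, (α i x * (fi i x - f x) - α i y * (fi i y - f y))|
        ≤ ∑ i, |α i x * (fi i x - f x) - α i y * (fi i y - f y)| :=
          Finset.abs_sum_le_sum_abs _ _
      _ ≤ ∑ i, (α i x * (ε * ‖x - y‖) + H * ε * ‖x - y‖) := Finset.sum_le_sum hterm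
      _ = (∑ i, α i x) * (ε * ‖x - y‖) + m * (H * ε * ‖x - y‖) := by
          rw [Finset.sum_add_distrib, ← Finset.sum_mul, Finset.sum_const, Finset.card_univ,
            Fintype.card_fin, nsmul_eq_mul]
      _ = (1 + m * H) * ε * ‖x - y‖ := by rw [hαsum x hx]; ring

end
end

section
/- Let ‖·‖ be a norm on ℝ^N with K⁻¹‖·‖₂ ≤ ‖·‖ ≤ K‖·‖₂ for some K ≥ 1, let M ⊆ ℝ^N contain 0, let R > 1, and define μ: [0,∞) → [0,1] by μ(t) = 1 for t ≤ R, μ(t) = (log R)⁻¹(2 log R − log t) for R ≤ t ≤ R², and μ(t) = 0 for t ≥ R². For f: M ∩ B_{R²} → ℝ Lipschitz (w.r.t. ‖·‖) with f(0) = 0, define Φ(f)(x) = μ(‖x‖₂)·f(x) for x ∈ M ∩ B_{R²} and Φ(f)(x) = 0 for x ∈ M \ B_{R²}. Then Φ(f) is Lipschitz on M with Lip(Φ(f)) ≤ (1 + K²/log R)·Lip(f). -/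
open Set

noncomputable section

theorem stmt8 {N : ℕ} (n : EuclideanSpace ℝ (Fin N) → ℝ)
    (hn_add : ∀ x y, n (x + y) ≤ n x + n y)
    (hn_smul : ∀ (c : ℝ) x, n (c • x) = |c| * n x)
    (hn_pos : ∀ x, x ≠ 0 → 0 < n x)
    (K : ℝ) (hK : 1 ≤ K)
    (hK1 : ∀ x, K⁻¹ * ‖x‖ ≤ n x) (hK2 : ∀ x, n x ≤ K * ‖x‖)
    (M : Set (EuclideanSpace ℝ (Fin N))) (h0M : (0 : EuclideanSpace ℝ (Fin N)) ∈ M)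
    (R : ℝ) (hR : 1 < R)
    (μ : ℝ → ℝ)
    (hμ : ∀ t, μ t =
      if t ≤ R then 1
      else if t ≤ R ^ 2 then (Real.log R)⁻¹ * (2 * Real.log R - Real.log t)
      else 0)
    (f : EuclideanSpace ℝ (Fin N) → ℝ) (hf0 : f 0 = 0)
    (Lf : ℝ) (hLf : 0 ≤ Lf)
    (hfLip : ∀ x ∈ M ∩ Metric.closedBall 0 (R ^ 2),
      ∀ y ∈ M ∩ Metric.closedBall 0 (R ^ 2), |f x - f y| ≤ Lf * n (x - y))
    (Φf : EuclideanSpace ℝ (Fin N) → ℝ)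
    (hΦf : ∀ x ∈ M, Φf x = if ‖x‖ ≤ R ^ 2 then μ ‖x‖ * f x else 0) :
    ∀ x ∈ M, ∀ y ∈ M, |Φf x - Φf y| ≤ (1 + K ^ 2 / Real.log R) * Lf * n (x - y) := by
  have hR0 : (0:ℝ) < R := lt_trans one_pos hR
  have hK0 : (0:ℝ) < K := lt_of_lt_of_le one_pos hK
  have hlogR : 0 < Real.log R := Real.log_pos hR
  have hRR2 : R ≤ R ^ 2 := by nlinarith
  have hnnonneg : ∀ z, 0 ≤ n z := fun z =>
    le_trans (by positivity) (hK1 z)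
  have hnsub : ∀ a b, n (a - b) = n (b - a) := by
    intro a b
    have h : a - b = (-1 : ℝ) • (b - a) := by
      simp [neg_smul, one_smul, neg_sub]
    rw [h, hn_smul]; norm_num
  have hnK : ∀ z, ‖z‖ ≤ K * n z := by
    intro z
    have := hK1 z
    have : K⁻¹ * ‖z‖ * K ≤ n z * K := by nlinarith
    calc ‖z‖ = K⁻¹ * ‖z‖ * K := by field_simp
    _ ≤ n z * K := this
    _ = K * n z := by ring
  -- log lemma
  have hlog_le : ∀ a b : ℝ, 0 < a → a ≤ b → Real.log b - Real.log a ≤ (b - a) / a := by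
    intro a b ha hab
    have hb : 0 < b := lt_of_lt_of_le ha hab
    have h1 := Real.log_le_sub_one_of_pos (show 0 < b / a by positivity)
    rw [Real.log_div hb.ne' ha.ne'] at h1
    have : b / a - 1 = (b - a) / a := by field_simp
    linarith [this ▸ h1]
  -- μ bounds
  have hμ0 : ∀ t, 0 ≤ μ t := by
    intro t
    rw [hμ t]
    split_ifs with h1 h2
    · norm_num
    · push_neg at h1
      have ht0 : 0 < t := lt_trans hR0 h1
      have : Real.log t ≤ Real.log (R ^ 2) := Real.log_le_log ht0 h2
      rw [Real.log_pow] at this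
      push_cast at this
      have : 0 ≤ 2 * Real.log R - Real.log t := by linarith
      positivity
    · exact le_refl _
  have hμv1 : ∀ u : ℝ, u ≤ R → μ u = 1 := by
    intro u hu; rw [hμ u, if_pos hu]
  have hμv2 : ∀ u : ℝ, R < u → u ≤ R ^ 2 →
      μ u = (Real.log R)⁻¹ * (2 * Real.log R - Real.log u) := by
    intro u h1 h2; rw [hμ u, if_neg (not_le.mpr h1), if_pos h2]
  have hμv3 : ∀ u : ℝ, R ^ 2 < u → μ u = 0 := by
    intro u h2
    have h1 : R < u := lt_of_le_of_lt hRR2 h2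
    rw [hμ u, if_neg (not_le.mpr h1), if_neg (not_le.mpr h2)]
  have hμ1 : ∀ t, μ t ≤ 1 := by
    intro t
    rw [hμ t]
    split_ifs with h1 h2
    · exact le_refl _
    · push_neg at h1
      have hlt : Real.log R ≤ Real.log t := Real.log_le_log hR0 h1.le
      rw [inv_mul_le_iff₀ hlogR]
      linarith
    · norm_num
  have hμmono : ∀ s t : ℝ, s ≤ t → μ t ≤ μ s := by
    intro s t hst
    by_cases hsR : s ≤ R
    · rw [hμv1 s hsR]; exact hμ1 t
    push_neg at hsR
    by_cases ht2 : t ≤ R ^ 2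
    · have hs2 : s ≤ R ^ 2 := le_trans hst ht2
      have htR : R < t := lt_of_lt_of_le hsR hst
      rw [hμv2 s hsR hs2, hμv2 t htR ht2]
      have hs0 : 0 < s := lt_trans hR0 hsR
      have hlt : Real.log s ≤ Real.log t := Real.log_le_log hs0 hst
      have h2 : 0 < (Real.log R)⁻¹ := by positivity
      nlinarith
    · push_neg at ht2
      rw [hμv3 t ht2]; exact hμ0 s
  have hμkey : ∀ s t : ℝ, 0 ≤ s → s ≤ t → (μ s - μ t) * s ≤ (t - s) / Real.log R := by
    intro s t hs0 hst
    have hts0 : 0 ≤ (t - s) / Real.log R :=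
      div_nonneg (by linarith) hlogR.le
    by_cases htR : t ≤ R
    · rw [hμv1 s (le_trans hst htR), hμv1 t htR]; simpa using hts0
    push_neg at htR
    by_cases hs2 : s ≤ R ^ 2
    · by_cases hsR : s ≤ R
      · by_cases ht2 : t ≤ R ^ 2
        · -- s ≤ R < t ≤ R²
          have hlog := hlog_le R t hR0 htR.le
          rw [hμv1 s hsR, hμv2 t htR ht2]
          have key : (1 - (Real.log R)⁻¹ * (2 * Real.log R - Real.log t)) * s
              = (Real.log R)⁻¹ * ((Real.log t - Real.log R) * s) := by
            have ha : Real.log R ≠ 0 := hlogR.ne'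
            field_simp
            try ring
            try exact Or.inl trivial
          rw [key, div_eq_inv_mul]
          have h2' : 0 < (Real.log R)⁻¹ := by positivity
          have hB : (Real.log t - Real.log R) * s ≤ t - R := by
            have h := mul_le_mul_of_nonneg_right hlog hs0
            have hC : (t - R) / R * s ≤ t - R := by
              rw [div_mul_eq_mul_div, div_le_iff₀ hR0]
              nlinarith
            linarith
          nlinarith
        · -- s ≤ R, t > R²
          push_neg at ht2
          rw [hμv1 s hsR, hμv3 t ht2]
          have hlogR' : Real.log R ≤ R - 1 := by
            have := Real.log_le_sub_one_of_pos hR0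
            linarith
          rw [sub_zero, one_mul, le_div_iff₀ hlogR]
          nlinarith
      · -- R < s ≤ R²
        push_neg at hsR
        have hs0' : 0 < s := lt_trans hR0 hsR
        by_cases ht2 : t ≤ R ^ 2
        · rw [hμv2 s hsR hs2, hμv2 t htR ht2]
          have hlog := hlog_le s t hs0' hst
          have key : ((Real.log R)⁻¹ * (2 * Real.log R - Real.log s)
              - (Real.log R)⁻¹ * (2 * Real.log R - Real.log t)) * s
              = (Real.log R)⁻¹ * ((Real.log t - Real.log s) * s) := by ring
          rw [key, div_eq_inv_mul]
          have h2' : 0 < (Real.log R)⁻¹ := by positivity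
          have hB : (Real.log t - Real.log s) * s ≤ t - s := by
            have h := mul_le_mul_of_nonneg_right hlog hs0
            rwa [div_mul_cancel₀ _ hs0'.ne'] at h
          nlinarith
        · push_neg at ht2
          rw [hμv2 s hsR hs2, hμv3 t ht2]
          have hlog := hlog_le s (R ^ 2) hs0' hs2
          rw [Real.log_pow] at hlog; push_cast at hlog
          have key : ((Real.log R)⁻¹ * (2 * Real.log R - Real.log s) - 0) * s
              = (Real.log R)⁻¹ * ((2 * Real.log R - Real.log s) * s) := by ring
          rw [key, div_eq_inv_mul]
          have h2' : 0 < (Real.log R)⁻¹ := by positivity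
          have hB : (2 * Real.log R - Real.log s) * s ≤ R ^ 2 - s := by
            have h := mul_le_mul_of_nonneg_right hlog hs0
            rw [div_mul_cancel₀ _ hs0'.ne'] at h
            linarith
          nlinarith
    · -- s > R²
      push_neg at hs2
      rw [hμv3 s hs2, hμv3 t (lt_of_lt_of_le hs2 hst)]
      simpa using hts0
  -- Φf equals μ‖x‖ * f x on M
  have hΦ : ∀ x ∈ M, Φf x = μ ‖x‖ * f x := by
    intro x hx
    rw [hΦf x hx]
    split_ifs with h
    · rfl
    · push_neg at h
      rw [hμv3 ‖x‖ h, zero_mul]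
  have hball : ∀ x : EuclideanSpace ℝ (Fin N), ‖x‖ ≤ R ^ 2 →
      x ∈ Metric.closedBall (0 : EuclideanSpace ℝ (Fin N)) (R ^ 2) := by
    intro x hx
    rw [Metric.mem_closedBall, dist_zero_right]; exact hx
  -- bound on |f x| for x in the ball
  have hfx_bd : ∀ x ∈ M, ‖x‖ ≤ R ^ 2 → |f x| ≤ Lf * (K * ‖x‖) := by
    intro x hx hx2
    have h0b : (0 : EuclideanSpace ℝ (Fin N)) ∈ Metric.closedBall
        (0 : EuclideanSpace ℝ (Fin N)) (R ^ 2) := by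
      rw [Metric.mem_closedBall, dist_self]; positivity
    have h := hfLip x ⟨hx, hball x hx2⟩ 0 ⟨h0M, h0b⟩
    rw [hf0, sub_zero, sub_zero] at h
    calc |f x| ≤ Lf * n x := h
    _ ≤ Lf * (K * ‖x‖) := mul_le_mul_of_nonneg_left (hK2 x) hLf
  -- main inequality for ordered norms
  have key : ∀ x ∈ M, ∀ y ∈ M, ‖x‖ ≤ ‖y‖ →
      |Φf x - Φf y| ≤ (1 + K ^ 2 / Real.log R) * Lf * n (x - y) := by
    intro x hx y hy hst
    have hn0 : 0 ≤ n (x - y) := hnnonneg _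
    have hts : ‖y‖ - ‖x‖ ≤ K * n (x - y) := by
      have h1 : ‖y‖ - ‖x‖ ≤ ‖y - x‖ := by
        have := norm_sub_norm_le y x
        linarith
      have h2 : ‖y - x‖ = ‖x - y‖ := norm_sub_rev y x
      have h3 := hnK (x - y)
      linarith
    have hdecomp : Φf x - Φf y = μ ‖y‖ * (f x - f y) + (μ ‖x‖ - μ ‖y‖) * f x := by
      rw [hΦ x hx, hΦ y hy]; ring
    have term1 : |μ ‖y‖ * (f x - f y)| ≤ Lf * n (x - y) := by
      by_cases ht2 : ‖y‖ ≤ R ^ 2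
      · have hs2 : ‖x‖ ≤ R ^ 2 := le_trans hst ht2
        have hf := hfLip x ⟨hx, hball x hs2⟩ y ⟨hy, hball y ht2⟩
        rw [abs_mul, abs_of_nonneg (hμ0 _)]
        calc μ ‖y‖ * |f x - f y| ≤ 1 * (Lf * n (x - y)) := by
              apply mul_le_mul (hμ1 _) hf (abs_nonneg _) zero_le_one
        _ = Lf * n (x - y) := one_mul _
      · push_neg at ht2
        rw [hμv3 _ ht2, zero_mul, abs_zero]
        positivity
    have term2 : |(μ ‖x‖ - μ ‖y‖) * f x| ≤ K ^ 2 / Real.log R * (Lf * n (x - y)) := by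
      by_cases hs2 : ‖x‖ ≤ R ^ 2
      · have hmono := hμmono ‖x‖ ‖y‖ hst
        have hkey := hμkey ‖x‖ ‖y‖ (norm_nonneg x) hst
        have hfx := hfx_bd x hx hs2
        rw [abs_mul, abs_of_nonneg (by linarith : (0:ℝ) ≤ μ ‖x‖ - μ ‖y‖)]
        have h1 : (μ ‖x‖ - μ ‖y‖) * |f x| ≤ (μ ‖x‖ - μ ‖y‖) * (Lf * (K * ‖x‖)) :=
          mul_le_mul_of_nonneg_left hfx (by linarith)
        have h2 : (μ ‖x‖ - μ ‖y‖) * (Lf * (K * ‖x‖))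
            = Lf * K * ((μ ‖x‖ - μ ‖y‖) * ‖x‖) := by ring
        have h3 : Lf * K * ((μ ‖x‖ - μ ‖y‖) * ‖x‖)
            ≤ Lf * K * ((‖y‖ - ‖x‖) / Real.log R) :=
          mul_le_mul_of_nonneg_left hkey (by positivity)
        have h4 : Lf * K * ((‖y‖ - ‖x‖) / Real.log R)
            ≤ Lf * K * (K * n (x - y) / Real.log R) := by
          apply mul_le_mul_of_nonneg_left _ (by positivity)
          exact div_le_div_of_nonneg_right hts hlogR.le
        have h5 : Lf * K * (K * n (x - y) / Real.log R)
            = K ^ 2 / Real.log R * (Lf * n (x - y)) := by ring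
        linarith
      · push_neg at hs2
        rw [hμv3 _ hs2, hμv3 _ (lt_of_lt_of_le hs2 hst), sub_zero, zero_mul, abs_zero]
        positivity
    calc |Φf x - Φf y| = |μ ‖y‖ * (f x - f y) + (μ ‖x‖ - μ ‖y‖) * f x| := by
          rw [hdecomp]
    _ ≤ |μ ‖y‖ * (f x - f y)| + |(μ ‖x‖ - μ ‖y‖) * f x| := abs_add_le _ _
    _ ≤ Lf * n (x - y) + K ^ 2 / Real.log R * (Lf * n (x - y)) := add_le_add term1 term2
    _ = (1 + K ^ 2 / Real.log R) * Lf * n (x - y) := by ring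
  intro x hx y hy
  rcases le_total ‖x‖ ‖y‖ with h | h
  · exact key x hx y hy h
  · have hk := key y hy x hx h
    rw [abs_sub_comm, hnsub]
    exact hk


end
end

section
/- Let ‖·‖' be a norm on ℝ³ such that the subspace ℝ² × {0} is not the range of any norm-one linear projection. Let C = [0,1]² × {0} and D = [−1/2, 3/2]² × {0}. Then it is NOT the case that for every ξ > 0 there exist an open set U ⊆ ℝ³ containing C and a map Ψ: U → D with Lip(Ψ) ≤ 1 + ξ (w.r.t. ‖·‖') and ‖Ψ(x) − x‖' ≤ ξ for all x ∈ U. -/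
open Set MeasureTheory Filter

noncomputable section

section aux

variable {n : (Fin 3 → ℝ) → ℝ}
variable (hn_add : ∀ x y, n (x + y) ≤ n x + n y)
variable (hn_smul : ∀ (c : ℝ) x, n (c • x) = |c| * n x)
variable (hn_pos : ∀ x, x ≠ 0 → 0 < n x)

include hn_smul in
lemma n_zero : n 0 = 0 := by simpa using hn_smul 0 0

include hn_add hn_smul hn_pos in
lemma n_nonneg (x) : 0 ≤ n x := by
  rcases eq_or_ne x 0 with rfl | h
  · exact (n_zero hn_smul).ge
  · exact (hn_pos x h).le

include hn_smul in
lemma n_neg (x) : n (-x) = n x := by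
  have := hn_smul (-1) x; simpa using this

include hn_add hn_smul hn_pos in
lemma n_upper : ∃ Cu > 0, ∀ x, n x ≤ Cu * ‖x‖ := by
  classical
  set b : Fin 3 → (Fin 3 → ℝ) := fun i j => if i = j then 1 else 0 with hb
  refine ⟨(∑ i, n (b i)) + 1, ?_, fun x => ?_⟩
  · have : ∀ i, 0 ≤ n (b i) := fun i => n_nonneg hn_add hn_smul hn_pos _
    have := Finset.sum_nonneg (fun i (_ : i ∈ Finset.univ) => this i)
    linarith
  · have hx : x = ∑ i, x i • b i := pi_eq_sum_univ x
    have h1 : n x ≤ ∑ i, n (x i • b i) := by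
      nth_rewrite 1 [hx]
      exact Finset.le_sum_of_subadditive n (n_zero hn_smul).le hn_add _ _
    have h2 : ∀ i, n (x i • b i) ≤ ‖x‖ * n (b i) := by
      intro i
      rw [hn_smul]
      have : |x i| ≤ ‖x‖ := by
        rw [← Real.norm_eq_abs]
        exact norm_le_pi_norm x i
      have hnb : 0 ≤ n (b i) := n_nonneg hn_add hn_smul hn_pos _
      nlinarith
    calc n x ≤ ∑ i, ‖x‖ * n (b i) := h1.trans (Finset.sum_le_sum fun i _ => h2 i)
    _ = (∑ i, n (b i)) * ‖x‖ := by rw [← Finset.mul_sum]; ring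
    _ ≤ ((∑ i, n (b i)) + 1) * ‖x‖ := by nlinarith [norm_nonneg x]

include hn_add hn_smul in
lemma n_sub_le (x y : Fin 3 → ℝ) : n x - n y ≤ n (x - y) := by
  have := hn_add (x - y) y
  simp only [sub_add_cancel] at this
  linarith

include hn_add hn_smul hn_pos in
lemma n_continuous : Continuous n := by
  rcases n_upper hn_add hn_smul hn_pos with ⟨Cu, hCu, hup⟩
  rw [Metric.continuous_iff]
  intro x ε hε
  refine ⟨ε / Cu, by positivity, fun y hy => ?_⟩
  have h1 : n y - n x ≤ n (y - x) := n_sub_le hn_add hn_smul y x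
  have h2 : n x - n y ≤ n (x - y) := n_sub_le hn_add hn_smul x y
  have h3 : n (x - y) = n (y - x) := by
    rw [← n_neg hn_smul (y - x)]; congr 1; abel
  have h4 : n (y - x) ≤ Cu * ‖y - x‖ := hup _
  have h5 : ‖y - x‖ < ε / Cu := by rwa [← dist_eq_norm]
  have h6 : Cu * ‖y - x‖ < ε := by
    rw [mul_comm]
    exact (lt_div_iff₀ hCu).1 h5
  rw [Real.dist_eq, abs_lt]
  constructor <;> linarith
include hn_add hn_smul hn_pos in
lemma n_lower : ∃ cl > 0, ∀ x, cl * ‖x‖ ≤ n x := by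
  have hcs : IsCompact (Metric.sphere (0 : Fin 3 → ℝ) 1) := isCompact_sphere _ _
  have hne : (Metric.sphere (0 : Fin 3 → ℝ) 1).Nonempty := by
    exact NormedSpace.sphere_nonempty.mpr zero_le_one
  obtain ⟨z, hz, hmin'⟩ := hcs.exists_isMinOn hne
    ((n_continuous hn_add hn_smul hn_pos).continuousOn)
  have hmin : ∀ y ∈ Metric.sphere (0 : Fin 3 → ℝ) 1, n z ≤ n y := fun y hy => hmin' hy
  have hz0 : z ≠ 0 := by
    intro h
    rw [Metric.mem_sphere, dist_zero_right, h] at hz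
    simp at hz
  refine ⟨n z, hn_pos z hz0, fun x => ?_⟩
  rcases eq_or_ne x 0 with rfl | hx
  · simp [n_zero hn_smul]
  · have hxn : ‖x‖ ≠ 0 := norm_ne_zero_iff.mpr hx
    have hmem : ‖x‖⁻¹ • x ∈ Metric.sphere (0 : Fin 3 → ℝ) 1 := by
      simp [norm_smul, abs_of_nonneg (norm_nonneg x), inv_mul_cancel₀ hxn]
    have := hmin _ hmem
    rw [hn_smul] at this
    rw [abs_of_nonneg (by positivity)] at this
    have hpos : (0:ℝ) < ‖x‖ := lt_of_le_of_ne (norm_nonneg x) (Ne.symm hxn)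
    calc n z * ‖x‖ ≤ (‖x‖⁻¹ * n x) * ‖x‖ := by nlinarith
    _ = n x := by field_simp

include hn_add hn_smul hn_pos in
lemma n_convex : ConvexOn ℝ Set.univ n := by
  refine ⟨convex_univ, fun x _ y _ a b ha hb _ => ?_⟩
  calc n (a • x + b • y) ≤ n (a • x) + n (b • y) := hn_add _ _
  _ = a * n x + b * n y := by
      rw [hn_smul, hn_smul, abs_of_nonneg ha, abs_of_nonneg hb]

include hn_add hn_smul hn_pos in
lemma n_jensen {α : Type*} [MeasurableSpace α] (μ : Measure α) [IsFiniteMeasure μ] [NeZero μ]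
    (f : α → Fin 3 → ℝ) (hfi : Integrable f μ) :
    n (⨍ x, f x ∂μ) ≤ ⨍ x, n (f x) ∂μ := by
  have hcont := n_continuous hn_add hn_smul hn_pos
  refine (n_convex hn_add hn_smul hn_pos).map_average_le hcont.continuousOn isClosed_univ
    (Filter.Eventually.of_forall fun x => mem_univ _) hfi ?_
  rcases n_upper hn_add hn_smul hn_pos with ⟨Cu, hCu, hup⟩
  refine (hfi.norm.const_mul Cu).mono' (hcont.comp_aestronglyMeasurable hfi.1) ?_
  refine Filter.Eventually.of_forall fun x => ?_
  show ‖n (f x)‖ ≤ Cu * ‖f x‖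
  rw [Real.norm_eq_abs, abs_of_nonneg (n_nonneg hn_add hn_smul hn_pos _)]
  exact hup _

end aux

set_option maxHeartbeats 2000000 in
theorem stmt9 (n : (Fin 3 → ℝ) → ℝ)
    (hn_add : ∀ x y, n (x + y) ≤ n x + n y)
    (hn_smul : ∀ (c : ℝ) x, n (c • x) = |c| * n x)
    (hn_pos : ∀ x, x ≠ 0 → 0 < n x)
    (hproj : ¬ ∃ T : (Fin 3 → ℝ) →ₗ[ℝ] (Fin 3 → ℝ),
      (∀ x, T x 2 = 0) ∧ (∀ x, x 2 = 0 → T x = x) ∧ (∀ x, n (T x) ≤ n x)) :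
    ¬ (∀ ξ > (0 : ℝ), ∃ (U : Set (Fin 3 → ℝ)) (Ψ : (Fin 3 → ℝ) → (Fin 3 → ℝ)),
      IsOpen U ∧
      {x : Fin 3 → ℝ | x 0 ∈ Set.Icc (0 : ℝ) 1 ∧ x 1 ∈ Set.Icc (0 : ℝ) 1 ∧ x 2 = 0} ⊆ U ∧
      (∀ x ∈ U, Ψ x ∈
        {x : Fin 3 → ℝ | x 0 ∈ Set.Icc (-(1 / 2) : ℝ) (3 / 2) ∧
          x 1 ∈ Set.Icc (-(1 / 2) : ℝ) (3 / 2) ∧ x 2 = 0}) ∧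
      (∀ x ∈ U, ∀ y ∈ U, n (Ψ x - Ψ y) ≤ (1 + ξ) * n (x - y)) ∧
      (∀ x ∈ U, n (Ψ x - x) ≤ ξ)) := by
  intro h
  classical
  obtain ⟨Cu, hCu, hup⟩ := n_upper hn_add hn_smul hn_pos
  obtain ⟨cl, hcl, hlow⟩ := n_lower hn_add hn_smul hn_pos
  have hncont := n_continuous hn_add hn_smul hn_pos
  have hnn : ∀ x, 0 ≤ n x := n_nonneg hn_add hn_smul hn_pos
  set e : Fin 3 → (Fin 3 → ℝ) := fun i => Pi.single i 1 with he
  have hdecomp : ∀ v : Fin 3 → ℝ, v = v 0 • e 0 + v 1 • e 1 + v 2 • e 2 := by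
    intro v; funext j; fin_cases j <;> simp [he, Pi.single_apply]
  set ξ : ℕ → ℝ := fun k => 1 / (k + 1) with hξdef
  have hξpos : ∀ k, 0 < ξ k := fun k => by positivity
  have hξle : ∀ k, ξ k ≤ 1 := by
    intro k
    rw [hξdef]
    rw [div_le_one (by positivity)]
    simp
  have hξ0 : Filter.Tendsto ξ atTop (nhds 0) := tendsto_one_div_add_atTop_nhds_zero_nat
  choose U Ψ hUopen hUsub hmaps hlip hclose using fun k => h (ξ k) (hξpos k)
  -- the unit square
  set S : Set (Fin 3 → ℝ) :=
    {x : Fin 3 → ℝ | x 0 ∈ Set.Icc (0 : ℝ) 1 ∧ x 1 ∈ Set.Icc (0 : ℝ) 1 ∧ x 2 = 0} with hSdef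
  have hSeq : S = Icc (0 : Fin 3 → ℝ) ![1, 1, 0] := by
    ext x
    simp only [hSdef, mem_setOf_eq, Set.mem_Icc, Pi.le_def]
    constructor
    · rintro ⟨⟨h00, h01⟩, ⟨h10, h11⟩, h2⟩
      constructor
      · intro i; fin_cases i <;> simp [h00, h10, h2]
      · intro i; fin_cases i <;> simp [h01, h11, h2]
    · rintro ⟨hl, hu⟩
      have hl0 := hl 0; have hl1 := hl 1; have hl2 := hl 2
      have hu0 := hu 0; have hu1 := hu 1; have hu2 := hu 2
      simp only [Pi.zero_apply] at hl0 hl1 hl2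
      refine ⟨⟨hl0, by simpa using hu0⟩, ⟨hl1, by simpa using hu1⟩, le_antisymm (by simpa using hu2) hl2⟩
  have hScompact : IsCompact S := by rw [hSeq]; exact isCompact_Icc
  choose ε hεpos hthick using fun k =>
    hScompact.exists_thickening_subset_open (hUopen k) (hUsub k)
  set δ : ℕ → ℝ := fun k => min (ε k / 2) 1 with hδdef
  have hδpos : ∀ k, 0 < δ k := fun k => lt_min (by linarith [hεpos k]) one_pos
  have hδle : ∀ k, δ k ≤ ε k / 2 := fun k => min_le_left _ _
  -- the boxes
  set u : ℕ → (Fin 3 → ℝ) := fun k j => if j = 2 then δ k else 1 with hudef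
  have hbox : ∀ k (i : Fin 3), i ≠ 2 → ∀ h' : ℝ, 0 ≤ h' → h' ≤ δ k →
      Icc (0 : Fin 3 → ℝ) (u k + h' • e i) ⊆ U k := by
    intro k i hi h' hh0 hhδ x hx
    rw [Set.mem_Icc] at hx
    have hxl : ∀ j, 0 ≤ x j := fun j => by simpa using hx.1 j
    have hxu : ∀ j, x j ≤ u k j + h' * e i j := fun j => by simpa using hx.2 j
    have heb : ∀ j, e i j ≤ 1 := by
      intro j; simp only [he, Pi.single_apply]; split <;> norm_num
    have heb0 : ∀ j, 0 ≤ e i j := by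
      intro j; simp only [he, Pi.single_apply]; split <;> norm_num
    have he2 : e i 2 = 0 := by simp [he, Pi.single_apply, hi]
    apply hthick k
    rw [Metric.mem_thickening_iff]
    refine ⟨fun j => if j = 2 then 0 else min (x j) 1, ?_, ?_⟩
    · refine ⟨⟨?_, ?_⟩, ⟨?_, ?_⟩, ?_⟩
      · simpa using le_min (hxl 0) zero_le_one
      · simpa using min_le_right (x 0) 1
      · simpa using le_min (hxl 1) zero_le_one
      · simpa using min_le_right (x 1) 1
      · simp
    · rw [dist_pi_lt_iff (hεpos k)]
      intro j
      by_cases hj : j = 2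
      · subst hj
        have hx2 : x 2 ≤ δ k := by
          have := hxu 2
          rw [he2] at this
          simpa [hudef] using this
        have hw : (if (2:Fin 3) = 2 then (0:ℝ) else min (x 2) 1) = 0 := if_pos rfl
        rw [hw, Real.dist_0_eq_abs, abs_of_nonneg (hxl 2)]
        linarith [hεpos k, hδle k]
      · have hw : (if j = 2 then (0:ℝ) else min (x j) 1) = min (x j) 1 := if_neg hj
        rw [hw]
        rcases le_or_gt (x j) 1 with hle | hlt
        · rw [min_eq_left hle]
          simpa using hεpos k
        · rw [min_eq_right hlt.le]
          have huj : u k j = 1 := by simp [hudef, hj]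
          have hxj : x j ≤ 1 + h' := by
            have h1 := hxu j
            nlinarith [heb j, heb0 j, hh0]
          rw [Real.dist_eq, abs_of_nonneg (by linarith)]
          linarith [hδle k, hεpos k]
  set Q : ℕ → Set (Fin 3 → ℝ) := fun k => Icc 0 (u k) with hQdef
  have hQsub : ∀ k, Q k ⊆ U k := by
    intro k
    have := hbox k 0 (by decide) 0 le_rfl (hδpos k).le
    simpa [hQdef] using this
  have hQmeas : ∀ k, MeasurableSet (Q k) := fun k => measurableSet_Icc
  have hQvol : ∀ k, volume (Q k) = ENNReal.ofReal (δ k) := by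
    intro k
    rw [hQdef, Real.volume_Icc_pi, Fin.prod_univ_three]
    have h0 : u k 0 = 1 := show (if (0:Fin 3) = 2 then δ k else 1) = 1 from if_neg (by decide)
    have h1 : u k 1 = 1 := show (if (1:Fin 3) = 2 then δ k else 1) = 1 from if_neg (by decide)
    have h2 : u k 2 = δ k := show (if (2:Fin 3) = 2 then δ k else 1) = δ k from if_pos rfl
    simp [h0, h1, h2]
  have hQvolR : ∀ k, volume.real (Q k) = δ k := by
    intro k; rw [measureReal_def, hQvol k, ENNReal.toReal_ofReal (hδpos k).le]
  -- Lipschitz extension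
  set K : NNReal := Real.toNNReal (2 * Cu / cl) with hKdef
  have hKval : (K : ℝ) = 2 * Cu / cl := Real.coe_toNNReal _ (by positivity)
  have hlipOn : ∀ k, LipschitzOnWith K (Ψ k) (U k) := by
    intro k
    apply LipschitzOnWith.of_dist_le_mul
    intro x hx y hy
    rw [dist_eq_norm, dist_eq_norm, hKval]
    have h1 : cl * ‖Ψ k x - Ψ k y‖ ≤ n (Ψ k x - Ψ k y) := hlow _
    have h2 := hlip k x hx y hy
    have h3 : n (x - y) ≤ Cu * ‖x - y‖ := hup _
    have h4 : (1 + ξ k) ≤ 2 := by linarith [hξle k]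
    have h5 : cl * ‖Ψ k x - Ψ k y‖ ≤ 2 * Cu * ‖x - y‖ := by
      nlinarith [hnn (x - y), norm_nonneg (x - y), hξpos k]
    rw [div_mul_eq_mul_div, le_div_iff₀ hcl]
    nlinarith
  choose F hFlip hFeq using fun k => (hlipOn k).extend_pi
  -- a.e. differentiability
  have hdiffae : ∀ k, ∀ᵐ x : Fin 3 → ℝ, DifferentiableAt ℝ (F k) x :=
    fun k => (hFlip k).ae_differentiableAt
  have hgbdd : ∀ k x, ‖fderiv ℝ (F k) x‖ ≤ K := fun k x =>
    norm_fderiv_le_of_lipschitz ℝ (hFlip k)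
  have hgi : ∀ k, IntegrableOn (fun x => fderiv ℝ (F k) x) (Q k) volume := by
    intro k
    refine Integrable.mono' (g := fun _ => (K : ℝ))
      (integrableOn_const (by rw [hQvol k]; exact ENNReal.ofReal_ne_top))
      ((measurable_fderiv ℝ (F k)).aestronglyMeasurable) ?_
    exact Filter.Eventually.of_forall fun x => hgbdd k x
  -- pointwise derivative facts
  have hpt : ∀ k x, x ∈ U k → DifferentiableAt ℝ (F k) x →
      ∀ v, n (fderiv ℝ (F k) x v) ≤ (1 + ξ k) * n v ∧ (fderiv ℝ (F k) x v) 2 = 0 := by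
    intro k x hxU hdx v
    have hFd := hdx.hasFDerivAt
    have hcpos : ∀ j : ℕ, (0 : ℝ) < (j : ℝ) + 1 := fun j => by positivity
    have hc : Filter.Tendsto (fun j : ℕ => ‖((j : ℝ) + 1)‖) atTop atTop := by
      have h1 : Filter.Tendsto (fun j : ℕ => (j : ℝ) + 1) atTop atTop :=
        Filter.tendsto_atTop_add_const_right _ 1 tendsto_natCast_atTop_atTop
      exact h1.congr fun j => by rw [Real.norm_eq_abs, abs_of_nonneg (hcpos j).le]
    have htend := hFd.lim v hc
    have hmem : Filter.Tendsto (fun j : ℕ => x + ((j : ℝ) + 1)⁻¹ • v) atTop (nhds x) := by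
      have h2 : Filter.Tendsto (fun j : ℕ => ((j : ℝ) + 1)⁻¹) atTop (nhds 0) := by
        exact tendsto_one_div_add_atTop_nhds_zero_nat.congr fun j => one_div _
      simpa using Filter.Tendsto.add (tendsto_const_nhds (x := x)) (h2.smul_const v)
    have hev : ∀ᶠ j : ℕ in atTop, x + ((j : ℝ) + 1)⁻¹ • v ∈ U k :=
      hmem ((hUopen k).mem_nhds hxU)
    have hquot : ∀ᶠ j : ℕ in atTop,
        n (((j : ℝ) + 1) • (F k (x + ((j : ℝ) + 1)⁻¹ • v) - F k x)) ≤ (1 + ξ k) * n v ∧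
        (((j : ℝ) + 1) • (F k (x + ((j : ℝ) + 1)⁻¹ • v) - F k x)) 2 = 0 := by
      filter_upwards [hev] with j hj
      have hFp : F k (x + ((j : ℝ) + 1)⁻¹ • v) = Ψ k (x + ((j : ℝ) + 1)⁻¹ • v) :=
        (hFeq k hj).symm
      have hFx : F k x = Ψ k x := (hFeq k hxU).symm
      constructor
      · rw [hn_smul, hFp, hFx, abs_of_nonneg (hcpos j).le]
        have hd := hlip k _ hj x hxU
        have hpx : x + ((j : ℝ) + 1)⁻¹ • v - x = ((j : ℝ) + 1)⁻¹ • v := by abel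
        rw [hpx, hn_smul, abs_of_nonneg (by positivity : (0:ℝ) ≤ ((j : ℝ) + 1)⁻¹)] at hd
        calc ((j : ℝ) + 1) * n (Ψ k (x + ((j : ℝ) + 1)⁻¹ • v) - Ψ k x)
            ≤ ((j : ℝ) + 1) * ((1 + ξ k) * (((j : ℝ) + 1)⁻¹ * n v)) :=
              mul_le_mul_of_nonneg_left hd (hcpos j).le
          _ = (1 + ξ k) * n v := by
              field_simp
      · have h1 := (hmaps k _ hj).2.2
        have h2 := (hmaps k x hxU).2.2
        simp [hFp, hFx, h1, h2]
    constructor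
    · exact le_of_tendsto ((hncont.tendsto _).comp htend) (hquot.mono fun j hj => hj.1)
    · have ht2 : Filter.Tendsto
          (fun j : ℕ => (((j : ℝ) + 1) • (F k (x + ((j : ℝ) + 1)⁻¹ • v) - F k x)) 2) atTop
          (nhds ((fderiv ℝ (F k) x v) 2)) := ((continuous_apply 2).tendsto _).comp htend
      have ht0 : Filter.Tendsto
          (fun j : ℕ => (((j : ℝ) + 1) • (F k (x + ((j : ℝ) + 1)⁻¹ • v) - F k x)) 2) atTop
          (nhds 0) := by
        refine Filter.Tendsto.congr' ?_ tendsto_const_nhds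
        filter_upwards [hquot] with j hj using hj.2.symm
      exact tendsto_nhds_unique ht2 ht0
  -- the averaged operator
  set A : ℕ → (Fin 3 → ℝ) →L[ℝ] (Fin 3 → ℝ) :=
    fun k => (δ k)⁻¹ • ∫ x in Q k, fderiv ℝ (F k) x ∂volume with hAdef
  have hAapp : ∀ k v, A k v = (δ k)⁻¹ • ∫ x in Q k, fderiv ℝ (F k) x v ∂volume := by
    intro k v
    rw [hAdef]
    simp only [ContinuousLinearMap.smul_apply]
    rw [ContinuousLinearMap.integral_apply (hgi k)]
  have hQfin : ∀ k, volume (Q k) < ⊤ := fun k => by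
    rw [hQvol k]; exact ENNReal.ofReal_lt_top
  have hfiv : ∀ k v, Integrable (fun x => fderiv ℝ (F k) x v) (volume.restrict (Q k)) :=
    fun k v => (ContinuousLinearMap.apply ℝ (Fin 3 → ℝ) v).integrable_comp (hgi k)
  have haept : ∀ k, ∀ᵐ x ∂(volume.restrict (Q k)),
      ∀ v, n (fderiv ℝ (F k) x v) ≤ (1 + ξ k) * n v ∧ (fderiv ℝ (F k) x v) 2 = 0 := by
    intro k
    have h1 : ∀ᵐ x ∂(volume.restrict (Q k)), DifferentiableAt ℝ (F k) x :=
      ae_restrict_of_ae (hdiffae k)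
    have h2 : ∀ᵐ x ∂(volume.restrict (Q k)), x ∈ Q k := ae_restrict_mem (hQmeas k)
    filter_upwards [h1, h2] with x hx1 hx2
    exact hpt k x (hQsub k hx2) hx1
  have hP1 : ∀ k v, n (A k v) ≤ (1 + ξ k) * n v := by
    intro k v
    haveI hfin : IsFiniteMeasure (volume.restrict (Q k)) := ⟨by
      rw [Measure.restrict_apply_univ]; exact hQfin k⟩
    haveI hnz : NeZero (volume.restrict (Q k)) := by
      refine ⟨Measure.measure_univ_ne_zero.mp ?_⟩
      rw [Measure.restrict_apply_univ, hQvol k]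
      simp only [ne_eq, ENNReal.ofReal_eq_zero, not_le]
      exact hδpos k
    have hfi := hfiv k v
    have havg : A k v = ⨍ x in Q k, fderiv ℝ (F k) x v ∂volume := by
      rw [hAapp k v, setAverage_eq, hQvolR k]
    have hnfi : Integrable (fun x => n (fderiv ℝ (F k) x v)) (volume.restrict (Q k)) := by
      refine (hfi.norm.const_mul Cu).mono' (hncont.comp_aestronglyMeasurable hfi.1) ?_
      refine Filter.Eventually.of_forall fun x => ?_
      rw [Real.norm_eq_abs, abs_of_nonneg (hnn _)]
      exact hup _
    calc n (A k v) = n (⨍ x in Q k, fderiv ℝ (F k) x v ∂volume) := by rw [havg]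
      _ ≤ ⨍ x in Q k, n (fderiv ℝ (F k) x v) ∂volume :=
          n_jensen hn_add hn_smul hn_pos _ _ hfi
      _ ≤ (1 + ξ k) * n v := by
          rw [setAverage_eq, hQvolR k]
          have hub : ∫ x in Q k, n (fderiv ℝ (F k) x v) ∂volume ≤ δ k * ((1 + ξ k) * n v) := by
            have hconst : ∫ _x in Q k, ((1 + ξ k) * n v) ∂volume = δ k * ((1 + ξ k) * n v) := by
              rw [setIntegral_const, hQvolR k, smul_eq_mul]
            rw [← hconst]
            refine integral_mono_ae hnfi (integrable_const _) ?_
            filter_upwards [haept k] with x hx using (hx v).1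
          rw [smul_eq_mul]
          calc (δ k)⁻¹ * ∫ x in Q k, n (fderiv ℝ (F k) x v) ∂volume
              ≤ (δ k)⁻¹ * (δ k * ((1 + ξ k) * n v)) :=
                mul_le_mul_of_nonneg_left hub (inv_nonneg.mpr (hδpos k).le)
            _ = (1 + ξ k) * n v := inv_mul_cancel_left₀ (hδpos k).ne' _
  have hP2 : ∀ k v, (A k v) 2 = 0 := by
    intro k v
    rw [hAapp k v, Pi.smul_apply]
    have hco : (∫ x in Q k, fderiv ℝ (F k) x v ∂volume) 2
        = ∫ x in Q k, (fderiv ℝ (F k) x v) 2 ∂volume := by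
      have := (ContinuousLinearMap.proj (R := ℝ) (φ := fun _ : Fin 3 => ℝ) 2).integral_comp_comm
        (hfiv k v)
      simpa using this.symm
    rw [hco]
    have h0 : ∫ x in Q k, (fderiv ℝ (F k) x v) 2 ∂volume = 0 := by
      apply integral_eq_zero_of_ae
      filter_upwards [haept k] with x hx using (hx v).2
    rw [h0, smul_zero]
  have hP3 : ∀ k (i : Fin 3), i ≠ 2 → ‖A k (e i) - e i‖ ≤ 2 * ξ k / cl := by
    intro k i hi
    haveI hfin : IsFiniteMeasure (volume.restrict (Q k)) := ⟨by
      rw [Measure.restrict_apply_univ]; exact hQfin k⟩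
    have hi01 : i = 0 ∨ i = 1 := by omega
    have hui : u k i = 1 := by
      rw [hudef]
      simp [hi]
    have hei : e i i = 1 := by simp [he]
    have heij : ∀ j, j ≠ i → e i j = 0 := by
      intro j hj
      rw [he]
      simp only
      rw [Pi.single_apply]
      exact if_neg hj
    have he0 : ∀ j, (0:ℝ) ≤ e i j := by
      intro j
      by_cases hj : j = i
      · subst hj; rw [hei]; norm_num
      · rw [heij j hj]
    have hu2 : u k 2 = δ k := by rw [hudef]; simp
    -- the error function
    set E' : (Fin 3 → ℝ) → (Fin 3 → ℝ) := fun y => F k y - y with hE'def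
    have hE'cont : Continuous E' := (hFlip k).continuous.sub continuous_id
    have hE'bdd : ∀ y ∈ U k, ‖E' y‖ ≤ ξ k / cl := by
      intro y hy
      have h1 : cl * ‖E' y‖ ≤ n (E' y) := hlow _
      have h2 : n (E' y) ≤ ξ k := by
        rw [hE'def]
        simp only
        rw [← hFeq k hy]
        exact hclose k y hy
      rw [le_div_iff₀ hcl]
      nlinarith [norm_nonneg (E' y)]
    -- the key quantitative estimate for a fixed shift size
    have key : ∀ h' : ℝ, 0 < h' → h' ≤ δ k →
        ‖(∫ x in Q k, (F k (x + h' • e i) - F k x) ∂volume) - (h' * δ k) • e i‖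
          ≤ 2 * (ξ k / cl) * (h' * δ k) := by
      intro h' hh0 hhδ
      set a : Fin 3 → ℝ := h' • e i with hadef
      have hai : a i = h' := by rw [hadef]; simp [hei]
      have haj : ∀ j, j ≠ i → a j = 0 := by
        intro j hj; rw [hadef]; simp [heij j hj]
      have ha0 : (0 : Fin 3 → ℝ) ≤ a := by
        intro j
        simp only [Pi.zero_apply, hadef, Pi.smul_apply, smul_eq_mul]
        exact mul_nonneg hh0.le (he0 j)
      set Q' : Set (Fin 3 → ℝ) := Icc a (u k + a) with hQ'def
      have hBig : Icc (0 : Fin 3 → ℝ) (u k + a) ⊆ U k := hbox k i hi h' hh0.le hhδ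
      have hQQ : Q k ⊆ Icc 0 (u k + a) := by
        rw [hQdef]
        exact Icc_subset_Icc le_rfl (le_add_of_nonneg_right ha0)
      have hQ'Q : Q' ⊆ Icc 0 (u k + a) := by
        rw [hQ'def]
        exact Icc_subset_Icc ha0 le_rfl
      have hIE'Big : IntegrableOn E' (Icc 0 (u k + a)) volume :=
        hE'cont.continuousOn.integrableOn_compact isCompact_Icc
      have hQ'int : IntegrableOn E' Q' volume := hIE'Big.mono_set hQ'Q
      have hQint : IntegrableOn E' (Q k) volume := hIE'Big.mono_set hQQ
      have hint1 : IntegrableOn (fun x => E' (x + a)) (Q k) volume :=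
        (hE'cont.comp (continuous_id.add continuous_const)).continuousOn.integrableOn_compact
          (by rw [hQdef]; exact isCompact_Icc)
      -- translation invariance
      have htrans : ∫ x in Q k, E' (x + a) ∂volume = ∫ y in Q', E' y ∂volume := by
        have hmp := measurePreserving_add_right (volume : Measure (Fin 3 → ℝ)) a
        have hemb : MeasurableEmbedding (fun x : Fin 3 → ℝ => x + a) :=
          (MeasurableEquiv.addRight a).measurableEmbedding
        have himg : (fun x : Fin 3 → ℝ => x + a) '' (Q k) = Q' := by
          rw [hQdef, hQ'def, Set.image_add_const_Icc, zero_add]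
        have := hmp.setIntegral_image_emb hemb E' (Q k)
        rw [himg] at this
        exact this.symm
      -- decomposition
      have hsplit : ∫ x in Q k, (F k (x + a) - F k x) ∂volume
          = ((∫ y in Q', E' y ∂volume) - ∫ x in Q k, E' x ∂volume) + δ k • a := by
        have hfun : ∀ x : Fin 3 → ℝ, F k (x + a) - F k x = (E' (x + a) - E' x) + a := by
          intro x
          rw [hE'def]
          simp only
          abel
        rw [integral_congr_ae (Filter.Eventually.of_forall fun x => hfun x)]
        have hint1' : Integrable (fun x => E' (x + a)) (volume.restrict (Q k)) := hint1
        have hQint' : Integrable (fun x => E' x) (volume.restrict (Q k)) := hQint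
        have hsubint : Integrable (fun x => E' (x + a) - E' x) (volume.restrict (Q k)) :=
          hint1'.sub hQint'
        rw [integral_add hsubint (integrable_const a),
          integral_sub hint1' hQint', setIntegral_const, hQvolR, htrans]
      -- strips
      have hsets1 : Q' \ Q k ⊆ Icc (e i) (u k + a) := by
        rintro y ⟨hyQ', hyN⟩
        rw [hQ'def, Set.mem_Icc] at hyQ'
        rw [Set.mem_Icc]
        refine ⟨?_, hyQ'.2⟩
        intro j
        by_cases hj : j = i
        · subst hj
          rw [hei]
          by_contra hlt
          push_neg at hlt
          apply hyN
          rw [hQdef, Set.mem_Icc]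
          constructor
          · exact le_trans ha0 hyQ'.1
          · intro j'
            by_cases hj' : j' = j
            · subst hj'
              rw [hui]
              linarith
            · have := hyQ'.2 j'
              simp only [Pi.add_apply] at this
              rw [haj j' hj'] at this
              linarith
        · rw [heij j hj]
          exact le_trans (ha0 j) (hyQ'.1 j)
      have hsets2 : Q k \ Q' ⊆ Icc (0 : Fin 3 → ℝ) (u k + a - e i) := by
        rintro y ⟨hyQ, hyN⟩
        rw [hQdef, Set.mem_Icc] at hyQ
        have hyi : y i < a i := by
          by_contra hge
          push_neg at hge
          apply hyN
          rw [hQ'def, Set.mem_Icc]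
          constructor
          · intro j
            by_cases hj : j = i
            · subst hj; exact hge
            · rw [haj j hj]
              exact hyQ.1 j
          · exact le_trans hyQ.2 (le_add_of_nonneg_right ha0)
        rw [Set.mem_Icc]
        refine ⟨hyQ.1, ?_⟩
        intro j
        by_cases hj : j = i
        · subst hj
          simp only [Pi.add_apply, Pi.sub_apply]
          rw [hui, hei, hai]
          rw [hai] at hyi
          linarith
        · simp only [Pi.add_apply, Pi.sub_apply]
          rw [heij j hj, haj j hj]
          have := hyQ.2 j
          linarith
      -- coordinates of the strip boxes
      have hcoord1 : ∀ j, (u k + a) j - e i j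
          = if j = 2 then δ k else if j = i then h' else 1 := by
        intro j
        simp only [Pi.add_apply]
        by_cases hj : j = i
        · subst hj
          have hj2 : ¬ (j = 2) := hi
          rw [hui, hei, hai, if_neg hj2, if_pos rfl]
          ring
        · rw [heij j hj, haj j hj]
          by_cases hj2 : j = 2
          · subst hj2; rw [hu2, if_pos rfl]; ring
          · rw [if_neg hj2, if_neg hj, hudef]
            simp [hj2]
      have hle1 : e i ≤ u k + a := by
        intro j
        have h1 := hcoord1 j
        simp only [Pi.add_apply] at h1 ⊢
        have h2 : (0:ℝ) ≤ if j = 2 then δ k else if j = i then h' else 1 := by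
          split
          · exact (hδpos k).le
          · split
            · exact hh0.le
            · norm_num
        linarith
      have hvol1 : (volume (Icc (e i) (u k + a))).toReal = h' * δ k := by
        rw [Real.volume_Icc_pi_toReal hle1, Fin.prod_univ_three]
        rw [hcoord1 0, hcoord1 1, hcoord1 2]
        rcases hi01 with rfl | rfl <;> norm_num [Fin.ext_iff] <;> try ring
      have hcoord2 : ∀ j, (u k + a - e i) j - (0:Fin 3 → ℝ) j
          = if j = 2 then δ k else if j = i then h' else 1 := by
        intro j
        simp only [Pi.sub_apply, Pi.add_apply, Pi.zero_apply, sub_zero]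
        have h1 := hcoord1 j
        simp only [Pi.add_apply] at h1
        linarith
      have hle2 : (0 : Fin 3 → ℝ) ≤ u k + a - e i := by
        intro j
        have h1 := hcoord2 j
        simp only [Pi.zero_apply, Pi.sub_apply, Pi.add_apply] at h1 ⊢
        have h2 : (0:ℝ) ≤ if j = 2 then δ k else if j = i then h' else 1 := by
          split
          · exact (hδpos k).le
          · split
            · exact hh0.le
            · norm_num
        linarith
      have hvol2 : (volume (Icc (0:Fin 3 → ℝ) (u k + a - e i))).toReal = h' * δ k := by
        rw [Real.volume_Icc_pi_toReal hle2, Fin.prod_univ_three]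
        rw [hcoord2 0, hcoord2 1, hcoord2 2]
        rcases hi01 with rfl | rfl <;> norm_num [Fin.ext_iff] <;> try ring
      -- integral difference over strips
      have hQ'meas : MeasurableSet Q' := measurableSet_Icc
      have hdiffint : (∫ y in Q', E' y ∂volume) - ∫ x in Q k, E' x ∂volume
          = (∫ y in Q' \ Q k, E' y ∂volume) - ∫ x in Q k \ Q', E' x ∂volume := by
        have h1 := integral_inter_add_diff (μ := volume) (f := E') (hQmeas k) hQ'int
        have h2 := integral_inter_add_diff (μ := volume) (f := E') hQ'meas hQint
        rw [Set.inter_comm] at h2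
        rw [← h1, ← h2]
        abel
      -- bounds over the strips
      have hstrip1 : ‖∫ y in Q' \ Q k, E' y ∂volume‖ ≤ (ξ k / cl) * (h' * δ k) := by
        have hmfin : volume (Q' \ Q k) < ⊤ :=
          lt_of_le_of_lt (measure_mono hsets1)
            (lt_of_le_of_lt (measure_mono Set.Subset.rfl)
              (IsCompact.measure_lt_top isCompact_Icc))
        refine le_trans (norm_setIntegral_le_of_norm_le_const (C := ξ k / cl) hmfin ?_) ?_
        · intro y hy
          exact hE'bdd y (hBig (hQ'Q hy.1))
        · have hm1 : volume.real (Q' \ Q k) ≤ h' * δ k := by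
            rw [← hvol1]
            exact ENNReal.toReal_mono (IsCompact.measure_lt_top isCompact_Icc).ne
              (measure_mono hsets1)
          have : (0:ℝ) ≤ ξ k / cl := div_nonneg (hξpos k).le hcl.le
          nlinarith
      have hstrip2 : ‖∫ y in Q k \ Q', E' y ∂volume‖ ≤ (ξ k / cl) * (h' * δ k) := by
        have hmfin : volume (Q k \ Q') < ⊤ :=
          lt_of_le_of_lt (measure_mono hsets2)
            (IsCompact.measure_lt_top isCompact_Icc)
        refine le_trans (norm_setIntegral_le_of_norm_le_const (C := ξ k / cl) hmfin ?_) ?_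
        · intro y hy
          exact hE'bdd y (hBig (hQQ hy.1))
        · have hm1 : volume.real (Q k \ Q') ≤ h' * δ k := by
            rw [← hvol2]
            exact ENNReal.toReal_mono (IsCompact.measure_lt_top isCompact_Icc).ne
              (measure_mono hsets2)
          have : (0:ℝ) ≤ ξ k / cl := div_nonneg (hξpos k).le hcl.le
          nlinarith
      -- assemble
      have hfinal : (∫ x in Q k, (F k (x + a) - F k x) ∂volume) - (h' * δ k) • e i
          = (∫ y in Q' \ Q k, E' y ∂volume) - ∫ x in Q k \ Q', E' x ∂volume := by
        rw [hsplit, hdiffint]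
        have : δ k • a = (h' * δ k) • e i := by
          rw [hadef, smul_smul, mul_comm]
        rw [this]
        abel
      rw [hfinal]
      calc ‖(∫ y in Q' \ Q k, E' y ∂volume) - ∫ x in Q k \ Q', E' x ∂volume‖
          ≤ ‖∫ y in Q' \ Q k, E' y ∂volume‖ + ‖∫ x in Q k \ Q', E' x ∂volume‖ :=
            norm_sub_le _ _
        _ ≤ (ξ k / cl) * (h' * δ k) + (ξ k / cl) * (h' * δ k) := add_le_add hstrip1 hstrip2
        _ = 2 * (ξ k / cl) * (h' * δ k) := by ring
    -- limit of difference quotients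
    set Dv : Fin 3 → ℝ := ∫ x in Q k, fderiv ℝ (F k) x (e i) ∂volume with hDvdef
    have hnormei : ‖e i‖ = 1 := by
      rw [he]
      simp only
      rw [Pi.norm_single]
      norm_num
    have hDclose : ‖Dv - δ k • e i‖ ≤ 2 * (ξ k / cl) * δ k := by
      set hs : ℕ → ℝ := fun j => δ k / ((j:ℝ) + 1) with hhsdef
      have hhs_pos : ∀ j, 0 < hs j := fun j =>
        div_pos (hδpos k) (by positivity)
      have hhs_le : ∀ j, hs j ≤ δ k := by
        intro j
        show δ k / ((j:ℝ) + 1) ≤ δ k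
        apply div_le_self (hδpos k).le
        have : (0:ℝ) ≤ (j:ℝ) := Nat.cast_nonneg j
        linarith
      have hDCT : Filter.Tendsto
          (fun j : ℕ => ∫ x in Q k, (hs j)⁻¹ • (F k (x + hs j • e i) - F k x) ∂volume)
          atTop (nhds Dv) := by
        rw [hDvdef]
        apply tendsto_integral_of_dominated_convergence (bound := fun _ => (K:ℝ))
        · intro j
          exact (show Continuous (fun a : Fin 3 → ℝ => (hs j)⁻¹ • (F k (a + hs j • e i) - F k a)) by
            have hc := (hFlip k).continuous
            fun_prop) |>.aestronglyMeasurable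
        · exact integrable_const _
        · intro j
          refine Filter.Eventually.of_forall fun x => ?_
          rw [norm_smul, Real.norm_eq_abs, abs_of_pos (inv_pos.mpr (hhs_pos j))]
          have hd : ‖F k (x + hs j • e i) - F k x‖ ≤ (K:ℝ) * (hs j) := by
            have := (hFlip k).dist_le_mul (x + hs j • e i) x
            rw [dist_eq_norm, dist_eq_norm] at this
            have heq : ‖x + hs j • e i - x‖ = hs j := by
              rw [add_sub_cancel_left, norm_smul, Real.norm_eq_abs,
                abs_of_pos (hhs_pos j), hnormei, mul_one]
            rw [heq] at this
            exact this
          calc (hs j)⁻¹ * ‖F k (x + hs j • e i) - F k x‖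
              ≤ (hs j)⁻¹ * ((K:ℝ) * hs j) :=
                mul_le_mul_of_nonneg_left hd (inv_nonneg.mpr (hhs_pos j).le)
            _ = (K:ℝ) := by
                rw [inv_mul_eq_div, mul_div_assoc, div_self (hhs_pos j).ne', mul_one]
        · have h1 : ∀ᵐ x ∂(volume.restrict (Q k)), DifferentiableAt ℝ (F k) x :=
            ae_restrict_of_ae (hdiffae k)
          filter_upwards [h1] with x hx
          have hc : Filter.Tendsto (fun j : ℕ => ‖(hs j)⁻¹‖) atTop atTop := by
            have h2 : Filter.Tendsto (fun j : ℕ => ((j:ℝ) + 1) / δ k) atTop atTop := by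
              apply Filter.Tendsto.atTop_div_const (hδpos k)
              exact Filter.tendsto_atTop_add_const_right _ 1 tendsto_natCast_atTop_atTop
            refine h2.congr fun j => ?_
            rw [Real.norm_eq_abs, abs_of_pos (inv_pos.mpr (hhs_pos j)), hhsdef]
            simp only
            rw [inv_div]
          have hlim0 := hx.hasFDerivAt.lim (e i) hc
          refine hlim0.congr fun j => ?_
          rw [inv_inv]
      have hIbnd : ∀ j : ℕ,
          ‖(∫ x in Q k, (hs j)⁻¹ • (F k (x + hs j • e i) - F k x) ∂volume) - δ k • e i‖
            ≤ 2 * (ξ k / cl) * δ k := by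
        intro j
        rw [integral_smul]
        have hkey := key (hs j) (hhs_pos j) (hhs_le j)
        have heq : (hs j)⁻¹ • (∫ x in Q k, (F k (x + hs j • e i) - F k x) ∂volume) - δ k • e i
            = (hs j)⁻¹ • ((∫ x in Q k, (F k (x + hs j • e i) - F k x) ∂volume)
                - (hs j * δ k) • e i) := by
          rw [smul_sub, smul_smul, inv_mul_cancel_left₀ (hhs_pos j).ne']
        rw [heq, norm_smul, Real.norm_eq_abs, abs_of_pos (inv_pos.mpr (hhs_pos j))]
        calc (hs j)⁻¹ * ‖(∫ x in Q k, (F k (x + hs j • e i) - F k x) ∂volume)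
              - (hs j * δ k) • e i‖
            ≤ (hs j)⁻¹ * (2 * (ξ k / cl) * (hs j * δ k)) :=
              mul_le_mul_of_nonneg_left hkey (inv_nonneg.mpr (hhs_pos j).le)
          _ = 2 * (ξ k / cl) * δ k := by
              rw [show 2 * (ξ k / cl) * (hs j * δ k) = hs j * (2 * (ξ k / cl) * δ k) by ring,
                inv_mul_cancel_left₀ (hhs_pos j).ne']
      have hnt : Filter.Tendsto
          (fun j : ℕ => ‖(∫ x in Q k, (hs j)⁻¹ • (F k (x + hs j • e i) - F k x) ∂volume)
            - δ k • e i‖) atTop (nhds ‖Dv - δ k • e i‖) :=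
        ((hDCT.sub tendsto_const_nhds).norm)
      exact le_of_tendsto hnt (Filter.Eventually.of_forall hIbnd)
    -- conclude
    have hA : A k (e i) - e i = (δ k)⁻¹ • (Dv - δ k • e i) := by
      rw [hAapp k (e i), smul_sub, smul_smul, inv_mul_cancel₀ (hδpos k).ne', one_smul, hDvdef]
    rw [hA, norm_smul, Real.norm_eq_abs, abs_of_pos (inv_pos.mpr (hδpos k))]
    calc (δ k)⁻¹ * ‖Dv - δ k • e i‖ ≤ (δ k)⁻¹ * (2 * (ξ k / cl) * δ k) :=
        mul_le_mul_of_nonneg_left hDclose (inv_nonneg.mpr (hδpos k).le)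
      _ = 2 * ξ k / cl := by
          rw [show 2 * (ξ k / cl) * δ k = δ k * (2 * ξ k / cl) by ring,
            inv_mul_cancel_left₀ (hδpos k).ne']
  -- pass to the limit along a convergent subsequence of A k (e 2)
  have hM : ∀ k, A k (e 2) ∈ Metric.closedBall (0 : Fin 3 → ℝ) (2 * n (e 2) / cl) := by
    intro k
    rw [Metric.mem_closedBall, dist_zero_right]
    have h1 := hP1 k (e 2)
    have h2 : cl * ‖A k (e 2)‖ ≤ n (A k (e 2)) := hlow _
    have h3 : (1 + ξ k) * n (e 2) ≤ 2 * n (e 2) := by nlinarith [hξle k, hnn (e 2)]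
    rw [le_div_iff₀ hcl]
    nlinarith
  obtain ⟨w, hwball, φ, hφmono, hφtend⟩ :=
    (isCompact_closedBall (0 : Fin 3 → ℝ) _).tendsto_subseq hM
  have hφtop : Filter.Tendsto φ atTop atTop := hφmono.tendsto_atTop
  have hw2 : w 2 = 0 := by
    have h1 : Filter.Tendsto (fun j => A (φ j) (e 2) 2) atTop (nhds (w 2)) :=
      ((continuous_apply 2).tendsto w).comp hφtend
    have h2 : Filter.Tendsto (fun j => A (φ j) (e 2) 2) atTop (nhds 0) := by
      simp only [hP2]
      exact tendsto_const_nhds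
    exact tendsto_nhds_unique h1 h2
  have hg0 : Filter.Tendsto (fun k => 2 * ξ k / cl) atTop (nhds 0) := by
    have h := hξ0.const_mul (2 / cl)
    simp only [mul_zero] at h
    exact h.congr fun k => by ring
  have htendei : ∀ i : Fin 3, i ≠ 2 →
      Filter.Tendsto (fun k => A k (e i)) atTop (nhds (e i)) := by
    intro i hi
    have h0 : Filter.Tendsto (fun k => A k (e i) - e i) atTop (nhds 0) :=
      squeeze_zero_norm (fun k => hP3 k i hi) hg0
    have h1 := h0.add_const (e i)
    simpa using h1
  set T : (Fin 3 → ℝ) →ₗ[ℝ] (Fin 3 → ℝ) :=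
    { toFun := fun v => v 0 • e 0 + v 1 • e 1 + v 2 • w
      map_add' := by
        intro v₁ v₂
        simp only [Pi.add_apply, add_smul]
        abel
      map_smul' := by
        intro c v
        simp only [Pi.smul_apply, smul_eq_mul, RingHom.id_apply, mul_smul, smul_add] } with hTdef
  have hTapp : ∀ v, T v = v 0 • e 0 + v 1 • e 1 + v 2 • w := fun v => rfl
  refine hproj ⟨T, ?_, ?_, ?_⟩
  · intro v
    rw [hTapp]
    have h1 : e 0 2 = 0 := by simp [he, Pi.single_apply]
    have h2 : e 1 2 = 0 := by simp [he, Pi.single_apply]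
    simp [h1, h2, hw2]
  · intro v hv2
    rw [hTapp]
    conv_rhs => rw [hdecomp v]
    rw [hv2]
    simp
  · intro v
    rw [hTapp]
    have h1 : ∀ k, A k v = v 0 • A k (e 0) + v 1 • A k (e 1) + v 2 • A k (e 2) := by
      intro k
      conv_lhs => rw [hdecomp v]
      simp [map_add, _root_.map_smul]
    have h2 : Filter.Tendsto (fun j => A (φ j) v) atTop
        (nhds (v 0 • e 0 + v 1 • e 1 + v 2 • w)) := by
      simp only [h1]
      exact ((((htendei 0 (by decide)).comp hφtop).const_smul (v 0)).add
        (((htendei 1 (by decide)).comp hφtop).const_smul (v 1))).add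
        (hφtend.const_smul (v 2))
    have h3 : Filter.Tendsto (fun j => n (A (φ j) v)) atTop
        (nhds (n (v 0 • e 0 + v 1 • e 1 + v 2 • w))) := (hncont.tendsto _).comp h2
    have h4 : Filter.Tendsto (fun j => (1 + ξ (φ j)) * n v) atTop (nhds (n v)) := by
      have h5 : Filter.Tendsto (fun j => ξ (φ j)) atTop (nhds 0) := hξ0.comp hφtop
      have h6 := ((tendsto_const_nhds :
        Filter.Tendsto (fun _ : ℕ => (1:ℝ)) atTop (nhds 1)).add h5).mul_const (n v)
      simpa using h6
    exact le_of_tendsto_of_tendsto' h3 h4 fun j => hP1 (φ j) v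

end
end

section
/- Let Ψ: U → ℝ² × {0} be a C^1 map on an open set U ⊆ ℝ³ containing C = [0,1]² × {0}, and suppose ‖Ψ(x) − x‖' ≤ ξ for all x ∈ U, for some norm ‖·‖' on ℝ³ and ξ > 0. Define the linear map T: ℝ³ → ℝ² × {0} by T(v) = ∫_{[0,1]²} DΨ(x, y, 0)(v) dx dy. Then ‖T(e₁) − e₁‖' ≤ 2ξ and ‖T(e₂) − e₂‖' ≤ 2ξ, where e₁ = (1,0,0) and e₂ = (0,1,0). -/
open Set MeasureTheory

noncomputable section

-- FTC along a line segment
lemma ftc_line (U : Set (Fin 3 → ℝ)) (hUopen : IsOpen U)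
    (Ψ : (Fin 3 → ℝ) → (Fin 3 → ℝ)) (hΨC1 : ContDiffOn ℝ 1 Ψ U)
    (d c : Fin 3 → ℝ) (hmem : ∀ t ∈ Set.Icc (0:ℝ) 1, t • d + c ∈ U) :
    ∫ t in Set.Icc (0:ℝ) 1, fderiv ℝ Ψ (t • d + c) d
      = Ψ ((1:ℝ) • d + c) - Ψ ((0:ℝ) • d + c) := by
  have hpath : ∀ t : ℝ, HasDerivAt (fun s : ℝ => s • d + c) d t := by
    intro t
    simpa using ((hasDerivAt_id t).smul_const d).add_const c
  have hderiv : ∀ t ∈ Set.Icc (0:ℝ) 1,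
      HasDerivAt (fun s : ℝ => Ψ (s • d + c)) (fderiv ℝ Ψ (t • d + c) d) t := by
    intro t ht
    have hΨd : HasFDerivAt Ψ (fderiv ℝ Ψ (t • d + c)) (t • d + c) :=
      (((hΨC1.differentiableOn one_ne_zero).differentiableAt
        (hUopen.mem_nhds (hmem t ht)))).hasFDerivAt
    exact hΨd.comp_hasDerivAt t (hpath t)
  have hcontpath : Continuous (fun t : ℝ => t • d + c) :=
    (continuous_id.smul continuous_const).add continuous_const
  have hcont : ContinuousOn (fun t : ℝ => fderiv ℝ Ψ (t • d + c) d) (Set.Icc (0:ℝ) 1) := by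
    have h1 : ContinuousOn (fderiv ℝ Ψ) U :=
      hΨC1.continuousOn_fderiv_of_isOpen hUopen le_rfl
    exact (h1.comp hcontpath.continuousOn hmem).clm_apply continuousOn_const
  have hint : IntervalIntegrable (fun t : ℝ => fderiv ℝ Ψ (t • d + c) d) volume 0 1 := by
    apply ContinuousOn.intervalIntegrable
    rwa [Set.uIcc_of_le (zero_le_one)]
  rw [MeasureTheory.integral_Icc_eq_integral_Ioc,
    ← intervalIntegral.integral_of_le zero_le_one]
  have := intervalIntegral.integral_eq_sub_of_hasDerivAt
    (f := fun s : ℝ => Ψ (s • d + c)) (fun t ht => hderiv t (by rwa [Set.uIcc_of_le zero_le_one] at ht)) hint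
  simpa using this

abbrev ee (i : Fin 3) : Fin 3 → ℝ := Pi.single i 1

lemma n_key (n : (Fin 3 → ℝ) → ℝ)
    (hn_add : ∀ x y, n (x + y) ≤ n x + n y)
    (hn_smul : ∀ (c : ℝ) x, n (c • x) = |c| * n x)
    (hn_pos : ∀ x, x ≠ 0 → 0 < n x)
    (G : ℝ → Fin 3 → ℝ) (hG : ContinuousOn G (Set.Icc (0:ℝ) 1))
    (M : ℝ) (hM : ∀ q ∈ Set.Icc (0:ℝ) 1, n (G q) ≤ M) :
    n (∫ q in Set.Icc (0:ℝ) 1, G q) ≤ M := by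
  have hn0 : n 0 = 0 := by
    have := hn_smul 0 0; simpa using this
  have hn_nonneg : ∀ x, 0 ≤ n x := by
    intro x
    rcases eq_or_ne x 0 with h | h
    · simp [h, hn0]
    · exact (hn_pos x h).le
  -- n is Lipschitz, hence continuous
  set C : ℝ := n (ee 0) + n (ee 1) + n (ee 2) with hC
  have hCnonneg : 0 ≤ C := by
    have := hn_nonneg (ee 0); have := hn_nonneg (ee 1)
    have := hn_nonneg (ee 2); positivity
  have hbound : ∀ x : Fin 3 → ℝ, n x ≤ C * ‖x‖ := by
    intro x
    have hdecomp : x = x 0 • ee 0 + (x 1 • ee 1 + x 2 • ee 2) := by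
      funext i; fin_cases i <;> simp [ee, Pi.single_apply]
    calc n x = n (x 0 • ee 0 + (x 1 • ee 1 + x 2 • ee 2)) := by
            rw [← hdecomp]
      _ ≤ n (x 0 • ee 0) + (n (x 1 • ee 1) + n (x 2 • ee 2)) :=
            (hn_add _ _).trans (by gcongr; exact hn_add _ _)
      _ = |x 0| * n (ee 0) + (|x 1| * n (ee 1) + |x 2| * n (ee 2)) := by
            rw [hn_smul, hn_smul, hn_smul]
      _ ≤ ‖x‖ * n (ee 0) + (‖x‖ * n (ee 1) + ‖x‖ * n (ee 2)) := by
            gcongr <;> first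
              | exact hn_nonneg _
              | simpa using norm_le_pi_norm x _
      _ = C * ‖x‖ := by ring
  have hlip : ∀ x y : Fin 3 → ℝ, n x - n y ≤ C * ‖x - y‖ := by
    intro x y
    have h1 : n x ≤ n (x - y) + n y := by
      have := hn_add (x - y) y; simpa using this
    have := hbound (x - y)
    linarith
  have hn_cont : Continuous n := by
    have : LipschitzWith (Real.toNNReal C) n := by
      apply LipschitzWith.of_dist_le_mul
      intro x y
      rw [Real.dist_eq, Real.coe_toNNReal C hCnonneg, dist_eq_norm]
      rcases abs_cases (n x - n y) with ⟨h, _⟩ | ⟨h, _⟩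
      · rw [h]; exact hlip x y
      · rw [h]; have h2 := hlip y x; rw [norm_sub_rev] at h2; linarith
    exact this.continuous
  have hconv : ConvexOn ℝ Set.univ n := by
    refine ⟨convex_univ, fun x _ y _ a b ha hb hab => ?_⟩
    calc n (a • x + b • y) ≤ n (a • x) + n (b • y) := hn_add _ _
      _ = a * n x + b * n y := by rw [hn_smul, hn_smul, abs_of_nonneg ha, abs_of_nonneg hb]
      _ = a • n x + b • n y := rfl
  haveI : IsProbabilityMeasure (volume.restrict (Set.Icc (0:ℝ) 1)) :=
    ⟨by simp⟩
  have hGi : IntegrableOn G (Set.Icc (0:ℝ) 1) volume :=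
    hG.integrableOn_compact isCompact_Icc
  have hnGi : IntegrableOn (n ∘ G) (Set.Icc (0:ℝ) 1) volume :=
    (hn_cont.comp_continuousOn hG).integrableOn_compact isCompact_Icc
  have h1 : n (∫ q in Set.Icc (0:ℝ) 1, G q) ≤ ∫ q in Set.Icc (0:ℝ) 1, n (G q) :=
    hconv.map_integral_le hn_cont.continuousOn isClosed_univ
      (Filter.Eventually.of_forall fun _ => Set.mem_univ _) hGi hnGi
  have h2 : ∫ q in Set.Icc (0:ℝ) 1, n (G q) ≤ ∫ _q in Set.Icc (0:ℝ) 1, M := by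
    exact setIntegral_mono_on hnGi (integrableOn_const (by simp [Real.volume_Icc]) (by simp))
      measurableSet_Icc hM
  have h3 : ∫ _q in Set.Icc (0:ℝ) 1, M = M := by
    simp [Real.volume_Icc]
  linarith


theorem stmt10 (n : (Fin 3 → ℝ) → ℝ)
    (hn_add : ∀ x y, n (x + y) ≤ n x + n y)
    (hn_smul : ∀ (c : ℝ) x, n (c • x) = |c| * n x)
    (hn_pos : ∀ x, x ≠ 0 → 0 < n x)
    (ξ : ℝ) (hξ : 0 < ξ)
    (U : Set (Fin 3 → ℝ)) (hUopen : IsOpen U)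
    (hCU : {x : Fin 3 → ℝ | x 0 ∈ Set.Icc (0 : ℝ) 1 ∧ x 1 ∈ Set.Icc (0 : ℝ) 1 ∧ x 2 = 0} ⊆ U)
    (Ψ : (Fin 3 → ℝ) → (Fin 3 → ℝ)) (hΨC1 : ContDiffOn ℝ 1 Ψ U)
    (hΨplane : ∀ x ∈ U, Ψ x 2 = 0)
    (hΨξ : ∀ x ∈ U, n (Ψ x - x) ≤ ξ)
    (T : (Fin 3 → ℝ) →ₗ[ℝ] (Fin 3 → ℝ))
    (hT : ∀ v, T v = ∫ p in Set.Icc (0 : ℝ) 1, ∫ q in Set.Icc (0 : ℝ) 1,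
      fderiv ℝ Ψ ![p, q, 0] v) :
    n (T ![1, 0, 0] - ![1, 0, 0]) ≤ 2 * ξ ∧ n (T ![0, 1, 0] - ![0, 1, 0]) ≤ 2 * ξ := by
  -- basic facts
  have hsubn : ∀ a b : Fin 3 → ℝ, n (a - b) ≤ n a + n b := by
    intro a b
    have h1 : n (a - b) ≤ n a + n (-b) := by
      rw [sub_eq_add_neg]; exact hn_add a (-b)
    have h2 : n (-b) = n b := by
      have := hn_smul (-1) b; simpa using this
    linarith
  have hmemU : ∀ p q : ℝ, p ∈ Set.Icc (0:ℝ) 1 → q ∈ Set.Icc (0:ℝ) 1 →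
      (![p, q, 0] : Fin 3 → ℝ) ∈ U := by
    intro p q hp hq
    exact hCU ⟨by simpa using hp, by simpa using hq, by simp⟩
  have hΨcont : ContinuousOn Ψ U := hΨC1.continuousOn
  have hcpath : Continuous (fun z : ℝ × ℝ => (![z.1, z.2, 0] : Fin 3 → ℝ)) := by
    apply continuous_pi; intro i
    fin_cases i
    · simpa using continuous_fst
    · simpa using continuous_snd
    · simpa using (continuous_const : Continuous fun _ : ℝ × ℝ => (0:ℝ))
  have hDcont : ∀ v : Fin 3 → ℝ, ContinuousOn
      (fun z : ℝ × ℝ => fderiv ℝ Ψ ![z.1, z.2, 0] v)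
      (Set.Icc (0:ℝ) 1 ×ˢ Set.Icc (0:ℝ) 1) := by
    intro v
    refine ((hΨC1.continuousOn_fderiv_of_isOpen hUopen le_rfl).comp
      hcpath.continuousOn ?_).clm_apply continuousOn_const
    rintro ⟨p, q⟩ ⟨hp, hq⟩
    exact hmemU p q hp hq
  -- first component
  constructor
  · -- swap order of integration
    have hswapint : Integrable (Function.uncurry fun p q : ℝ => fderiv ℝ Ψ ![p, q, 0] ![1,0,0])
        ((volume.restrict (Set.Icc (0:ℝ) 1)).prod (volume.restrict (Set.Icc (0:ℝ) 1))) := by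
      rw [Measure.prod_restrict]
      exact (hDcont ![1,0,0]).integrableOn_compact (isCompact_Icc.prod isCompact_Icc)
    have hswap : T ![1,0,0] = ∫ q in Set.Icc (0:ℝ) 1, ∫ p in Set.Icc (0:ℝ) 1,
        fderiv ℝ Ψ ![p, q, 0] ![1,0,0] := by
      rw [hT]; exact integral_integral_swap hswapint
    have h1 : ∀ q ∈ Set.Icc (0:ℝ) 1, ∫ p in Set.Icc (0:ℝ) 1,
        fderiv ℝ Ψ ![p, q, 0] ![1,0,0] = Ψ ![1, q, 0] - Ψ ![0, q, 0] := by
      intro q hq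
      have hrepr : ∀ p : ℝ, (![p, q, 0] : Fin 3 → ℝ) = p • ![1,0,0] + ![0, q, 0] := by
        intro p; funext i; fin_cases i <;> simp
      calc ∫ p in Set.Icc (0:ℝ) 1, fderiv ℝ Ψ ![p, q, 0] ![1,0,0]
          = ∫ p in Set.Icc (0:ℝ) 1, fderiv ℝ Ψ (p • ![1,0,0] + ![0, q, 0]) ![1,0,0] := by
            exact setIntegral_congr_fun measurableSet_Icc fun p _ => by rw [hrepr p]
        _ = Ψ ((1:ℝ) • ![1,0,0] + ![0,q,0]) - Ψ ((0:ℝ) • ![1,0,0] + ![0,q,0]) :=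
            ftc_line U hUopen Ψ hΨC1 _ _
              (fun t ht => by rw [← hrepr t]; exact hmemU t q ht hq)
        _ = Ψ ![1, q, 0] - Ψ ![0, q, 0] := by
            rw [show (1:ℝ) • (![1,0,0] : Fin 3 → ℝ) + ![0,q,0] = ![1,q,0] by
                funext i; fin_cases i <;> simp,
              show (0:ℝ) • (![1,0,0] : Fin 3 → ℝ) + ![0,q,0] = ![0,q,0] by
                funext i; fin_cases i <;> simp]
    have hTe : T ![1,0,0] = ∫ q in Set.Icc (0:ℝ) 1, (Ψ ![1, q, 0] - Ψ ![0, q, 0]) :=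
      hswap.trans (setIntegral_congr_fun measurableSet_Icc h1)
    have hpath1 : ∀ c ∈ Set.Icc (0:ℝ) 1,
        ContinuousOn (fun q : ℝ => Ψ ![c, q, 0]) (Set.Icc (0:ℝ) 1) := by
      intro c hc
      have hc2 : Continuous (fun q : ℝ => (![c, q, 0] : Fin 3 → ℝ)) := by
        exact hcpath.comp ((continuous_const : Continuous fun _ : ℝ => c).prodMk
          continuous_id)
      exact hΨcont.comp hc2.continuousOn (fun q hq => hmemU c q hc hq)
    set G : ℝ → Fin 3 → ℝ := fun q => Ψ ![1, q, 0] - Ψ ![0, q, 0] - ![1,0,0] with hGdef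
    have hGcont : ContinuousOn G (Set.Icc (0:ℝ) 1) :=
      ((hpath1 1 (by norm_num)).sub (hpath1 0 (by norm_num))).sub continuousOn_const
    have hFi : IntegrableOn (fun q => Ψ ![1, q, 0] - Ψ ![0, q, 0]) (Set.Icc (0:ℝ) 1) volume :=
      ((hpath1 1 (by norm_num)).sub (hpath1 0 (by norm_num))).integrableOn_compact isCompact_Icc
    have hconstint : ∫ _q in Set.Icc (0:ℝ) 1, (![1,0,0] : Fin 3 → ℝ) = ![1,0,0] := by
      simp [Real.volume_Icc]
    have hTG : T ![1,0,0] - ![1,0,0] = ∫ q in Set.Icc (0:ℝ) 1, G q := by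
      rw [hTe]
      rw [← hconstint]
      rw [← integral_sub hFi (integrableOn_const (by simp [Real.volume_Icc]) (by simp))]
    have hGb : ∀ q ∈ Set.Icc (0:ℝ) 1, n (G q) ≤ 2 * ξ := by
      intro q hq
      have hsplit : G q = (Ψ ![1, q, 0] - ![1, q, 0]) - (Ψ ![0, q, 0] - ![0, q, 0]) := by
        have h : (![1, q, 0] : Fin 3 → ℝ) - ![0, q, 0] = ![1,0,0] := by
          funext i; fin_cases i <;> simp
        simp only [hGdef]; rw [← h]; abel
      rw [hsplit]
      have b1 := hΨξ _ (hmemU 1 q (by norm_num) hq)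
      have b2 := hΨξ _ (hmemU 0 q (by norm_num) hq)
      have := hsubn (Ψ ![1, q, 0] - ![1, q, 0]) (Ψ ![0, q, 0] - ![0, q, 0])
      linarith
    rw [hTG]
    exact n_key n hn_add hn_smul hn_pos G hGcont (2*ξ) hGb
  · -- second component: no swap needed
    have h1 : ∀ p ∈ Set.Icc (0:ℝ) 1, ∫ q in Set.Icc (0:ℝ) 1,
        fderiv ℝ Ψ ![p, q, 0] ![0,1,0] = Ψ ![p, 1, 0] - Ψ ![p, 0, 0] := by
      intro p hp
      have hrepr : ∀ q : ℝ, (![p, q, 0] : Fin 3 → ℝ) = q • ![0,1,0] + ![p, 0, 0] := by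
        intro q; funext i; fin_cases i <;> simp
      calc ∫ q in Set.Icc (0:ℝ) 1, fderiv ℝ Ψ ![p, q, 0] ![0,1,0]
          = ∫ q in Set.Icc (0:ℝ) 1, fderiv ℝ Ψ (q • ![0,1,0] + ![p, 0, 0]) ![0,1,0] := by
            exact setIntegral_congr_fun measurableSet_Icc fun q _ => by rw [hrepr q]
        _ = Ψ ((1:ℝ) • ![0,1,0] + ![p,0,0]) - Ψ ((0:ℝ) • ![0,1,0] + ![p,0,0]) :=
            ftc_line U hUopen Ψ hΨC1 _ _
              (fun t ht => by rw [← hrepr t]; exact hmemU p t hp ht)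
        _ = Ψ ![p, 1, 0] - Ψ ![p, 0, 0] := by
            rw [show (1:ℝ) • (![0,1,0] : Fin 3 → ℝ) + ![p,0,0] = ![p,1,0] by
                funext i; fin_cases i <;> simp,
              show (0:ℝ) • (![0,1,0] : Fin 3 → ℝ) + ![p,0,0] = ![p,0,0] by
                funext i; fin_cases i <;> simp]
    have hTe : T ![0,1,0] = ∫ p in Set.Icc (0:ℝ) 1, (Ψ ![p, 1, 0] - Ψ ![p, 0, 0]) := by
      rw [hT]; exact setIntegral_congr_fun measurableSet_Icc h1
    have hpath1 : ∀ c ∈ Set.Icc (0:ℝ) 1,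
        ContinuousOn (fun p : ℝ => Ψ ![p, c, 0]) (Set.Icc (0:ℝ) 1) := by
      intro c hc
      have hc2 : Continuous (fun p : ℝ => (![p, c, 0] : Fin 3 → ℝ)) := by
        exact hcpath.comp (continuous_id.prodMk
          (continuous_const : Continuous fun _ : ℝ => c))
      exact hΨcont.comp hc2.continuousOn (fun p hp => hmemU p c hp hc)
    set G : ℝ → Fin 3 → ℝ := fun p => Ψ ![p, 1, 0] - Ψ ![p, 0, 0] - ![0,1,0] with hGdef
    have hGcont : ContinuousOn G (Set.Icc (0:ℝ) 1) :=
      ((hpath1 1 (by norm_num)).sub (hpath1 0 (by norm_num))).sub continuousOn_const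
    have hFi : IntegrableOn (fun p => Ψ ![p, 1, 0] - Ψ ![p, 0, 0]) (Set.Icc (0:ℝ) 1) volume :=
      ((hpath1 1 (by norm_num)).sub (hpath1 0 (by norm_num))).integrableOn_compact isCompact_Icc
    have hconstint : ∫ _p in Set.Icc (0:ℝ) 1, (![0,1,0] : Fin 3 → ℝ) = ![0,1,0] := by
      simp [Real.volume_Icc]
    have hTG : T ![0,1,0] - ![0,1,0] = ∫ p in Set.Icc (0:ℝ) 1, G p := by
      rw [hTe]
      rw [← hconstint]
      rw [← integral_sub hFi (integrableOn_const (by simp [Real.volume_Icc]) (by simp))]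
    have hGb : ∀ p ∈ Set.Icc (0:ℝ) 1, n (G p) ≤ 2 * ξ := by
      intro p hp
      have hsplit : G p = (Ψ ![p, 1, 0] - ![p, 1, 0]) - (Ψ ![p, 0, 0] - ![p, 0, 0]) := by
        have h : (![p, 1, 0] : Fin 3 → ℝ) - ![p, 0, 0] = ![0,1,0] := by
          funext i; fin_cases i <;> simp
        simp only [hGdef]; rw [← h]; abel
      rw [hsplit]
      have b1 := hΨξ _ (hmemU p 1 hp (by norm_num))
      have b2 := hΨξ _ (hmemU p 0 hp (by norm_num))
      have := hsubn (Ψ ![p, 1, 0] - ![p, 1, 0]) (Ψ ![p, 0, 0] - ![p, 0, 0])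
      linarith
    rw [hTG]
    exact n_key n hn_add hn_smul hn_pos G hGcont (2*ξ) hGb

end
end

section
/- Let M ⊆ ℝ^N be bounded, ‖·‖ a norm on ℝ^N with K⁻¹‖·‖₂ ≤ ‖·‖ ≤ K‖·‖₂, ψ a Lipschitz retraction onto M defined on a neighbourhood of M (with ψ|_M = id, Euclidean Lipschitz constant L), and for s > 0 let ν_s be the standard mollifier supported in B_s. For f: M → ℝ 1-Lipschitz w.r.t. ‖·‖, define f̂_s(x) = ∫_{B_s} ν_s(z) f(ψ(x+z)) dz on the points x where this is defined. Then for all ε, δ > 0 and all x, y ∈ M in the domain of f̂_s with ‖x − y‖ ≥ δ and 0 < s ≤ εδ/(2LK), one has |f̂_s(x) − f̂_s(y)| ≤ (1 + ε)‖x − y‖. -/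
open Set MeasureTheory

noncomputable section

theorem stmt12 {N : ℕ} (n : EuclideanSpace ℝ (Fin N) → ℝ)
    (hn_add : ∀ x y, n (x + y) ≤ n x + n y)
    (hn_smul : ∀ (c : ℝ) x, n (c • x) = |c| * n x)
    (hn_pos : ∀ x, x ≠ 0 → 0 < n x)
    (K : ℝ) (hK : 1 ≤ K)
    (hK1 : ∀ x, K⁻¹ * ‖x‖ ≤ n x) (hK2 : ∀ x, n x ≤ K * ‖x‖)
    (M E : Set (EuclideanSpace ℝ (Fin N))) (hMbdd : Bornology.IsBounded M)
    (hME : M ⊆ E) (hEopen : IsOpen E)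
    (ψ : EuclideanSpace ℝ (Fin N) → EuclideanSpace ℝ (Fin N))
    (L : ℝ) (hL : 1 ≤ L)
    (hψLip : ∀ x ∈ E, ∀ y ∈ E, ‖ψ x - ψ y‖ ≤ L * ‖x - y‖)
    (hψM : ∀ x ∈ E, ψ x ∈ M) (hψid : ∀ x ∈ M, ψ x = x)
    (f : EuclideanSpace ℝ (Fin N) → ℝ)
    (hf : ∀ x ∈ M, ∀ y ∈ M, |f x - f y| ≤ n (x - y))
    (νs : EuclideanSpace ℝ (Fin N) → ℝ) (hνcont : Continuous νs)
    (hνnonneg : ∀ z, 0 ≤ νs z)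
    (ε δ s : ℝ) (hε : 0 < ε) (hδ : 0 < δ) (hs : 0 < s)
    (hssmall : s ≤ ε * δ / (2 * L * K))
    (hνsupp : ∀ z, νs z ≠ 0 → ‖z‖ ≤ s)
    (hνint : ∫ z, νs z = 1)
    (x y : EuclideanSpace ℝ (Fin N)) (hx : x ∈ M) (hy : y ∈ M)
    (hxdom : ∀ z ∈ Metric.closedBall (0 : EuclideanSpace ℝ (Fin N)) s, x + z ∈ E)
    (hydom : ∀ z ∈ Metric.closedBall (0 : EuclideanSpace ℝ (Fin N)) s, y + z ∈ E)
    (hfar : δ ≤ n (x - y)) :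
    |(∫ z in Metric.closedBall (0 : EuclideanSpace ℝ (Fin N)) s, νs z * f (ψ (x + z))) -
        (∫ z in Metric.closedBall (0 : EuclideanSpace ℝ (Fin N)) s, νs z * f (ψ (y + z)))|
      ≤ (1 + ε) * n (x - y) := by
  have hKpos : (0:ℝ) < K := lt_of_lt_of_le one_pos hK
  have hLpos : (0:ℝ) < L := lt_of_lt_of_le one_pos hL
  have hxE : x ∈ E := hME hx
  have hyE : y ∈ E := hME hy
  set B := Metric.closedBall (0 : EuclideanSpace ℝ (Fin N)) s with hBdef
  set C : ℝ := n (x - y) + 2 * L * K * s with hCdef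
  have hmemB : ∀ z : EuclideanSpace ℝ (Fin N), z ∈ B ↔ ‖z‖ ≤ s := by
    intro z; simp [hBdef, Metric.mem_closedBall, dist_zero_right]
  -- one-sided bound
  have hone : ∀ (p : EuclideanSpace ℝ (Fin N)), p ∈ M →
      ∀ z ∈ B, p + z ∈ E → n (ψ (p + z) - p) ≤ L * K * s := by
    intro p hpM z hz hpzE
    have hzs : ‖z‖ ≤ s := (hmemB z).mp hz
    calc n (ψ (p + z) - p) ≤ K * ‖ψ (p + z) - p‖ := hK2 _
      _ = K * ‖ψ (p + z) - ψ p‖ := by rw [hψid p hpM]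
      _ ≤ K * (L * ‖(p + z) - p‖) := by
          gcongr
          exact hψLip _ hpzE p (hME hpM)
      _ = K * (L * ‖z‖) := by rw [add_sub_cancel_left]
      _ ≤ L * K * s := by nlinarith [mul_le_mul_of_nonneg_left hzs (show (0:ℝ) ≤ L * K by positivity)]
  -- key pointwise estimate
  have key : ∀ z ∈ B, |f (ψ (x + z)) - f (ψ (y + z))| ≤ C := by
    intro z hz
    have hxzE : x + z ∈ E := hxdom z hz
    have hyzE : y + z ∈ E := hydom z hz
    have haM : ψ (x + z) ∈ M := hψM _ hxzE
    have hbM : ψ (y + z) ∈ M := hψM _ hyzE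
    have h1 : |f (ψ (x + z)) - f x| ≤ L * K * s :=
      (hf _ haM x hx).trans (hone x hx z hz hxzE)
    have h2 : |f x - f y| ≤ n (x - y) := hf x hx y hy
    have h3 : |f y - f (ψ (y + z))| ≤ L * K * s := by
      have := (hf _ hbM y hy).trans (hone y hy z hz hyzE)
      rwa [abs_sub_comm]
    calc |f (ψ (x + z)) - f (ψ (y + z))|
        = |(f (ψ (x + z)) - f x) + (f x - f y) + (f y - f (ψ (y + z)))| := by ring_nf
      _ ≤ |f (ψ (x + z)) - f x| + |f x - f y| + |f y - f (ψ (y + z))| :=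
          (abs_add_le _ _).trans (by gcongr; exact abs_add_le _ _)
      _ ≤ L * K * s + n (x - y) + L * K * s := by gcongr
      _ = C := by rw [hCdef]; ring
  -- continuity of the integrands on B
  have hgcont : ∀ (p : EuclideanSpace ℝ (Fin N)),
      (∀ z ∈ B, p + z ∈ E) → ContinuousOn (fun z => f (ψ (p + z))) B := by
    intro p hdom
    have hlip : LipschitzOnWith (Real.toNNReal (K * L)) (fun z => f (ψ (p + z))) B := by
      apply LipschitzOnWith.of_dist_le_mul
      intro a ha b hb
      have haE : p + a ∈ E := hdom a ha
      have hbE : p + b ∈ E := hdom b hb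
      have haM : ψ (p + a) ∈ M := hψM _ haE
      have hbM : ψ (p + b) ∈ M := hψM _ hbE
      have h1 : |f (ψ (p + a)) - f (ψ (p + b))| ≤ K * (L * ‖a - b‖) := by
        calc |f (ψ (p + a)) - f (ψ (p + b))| ≤ n (ψ (p + a) - ψ (p + b)) := hf _ haM _ hbM
          _ ≤ K * ‖ψ (p + a) - ψ (p + b)‖ := hK2 _
          _ ≤ K * (L * ‖(p + a) - (p + b)‖) := by gcongr; exact hψLip _ haE _ hbE
          _ = K * (L * ‖a - b‖) := by rw [add_sub_add_left_eq_sub]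
      rw [Real.dist_eq, dist_eq_norm]
      calc |f (ψ (p + a)) - f (ψ (p + b))| ≤ K * (L * ‖a - b‖) := h1
        _ = (K * L) * ‖a - b‖ := by ring
        _ = (Real.toNNReal (K * L) : ℝ) * ‖a - b‖ := by
            rw [Real.coe_toNNReal _ (by positivity)]
    exact hlip.continuousOn
  have hcompact : IsCompact B := isCompact_closedBall _ _
  have hmeasB : MeasurableSet B := measurableSet_closedBall
  have hint1 : IntegrableOn (fun z => νs z * f (ψ (x + z))) B :=
    (hνcont.continuousOn.mul (hgcont x hxdom)).integrableOn_compact hcompact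
  have hint2 : IntegrableOn (fun z => νs z * f (ψ (y + z))) B :=
    (hνcont.continuousOn.mul (hgcont y hydom)).integrableOn_compact hcompact
  have hintC : IntegrableOn (fun z => νs z * C) B :=
    ((hνcont.mul continuous_const).continuousOn).integrableOn_compact hcompact
  -- mass of νs on B
  have hintν : ∫ z in B, νs z = 1 := by
    rw [setIntegral_eq_integral_of_forall_compl_eq_zero, hνint]
    intro z hz
    by_contra hne
    exact hz ((hmemB z).mpr (hνsupp z hne))
  -- main estimate
  have hCnn : 0 ≤ C := by
    have : (0:ℝ) < n (x - y) := lt_of_lt_of_le hδ hfar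
    rw [hCdef]; positivity
  have hmain : |(∫ z in B, νs z * f (ψ (x + z))) - ∫ z in B, νs z * f (ψ (y + z))| ≤ C := by
    rw [← integral_sub hint1 hint2]
    calc |∫ z in B, (νs z * f (ψ (x + z)) - νs z * f (ψ (y + z)))|
        ≤ ∫ z in B, |νs z * f (ψ (x + z)) - νs z * f (ψ (y + z))| := by
          simpa [Real.norm_eq_abs] using
            norm_integral_le_integral_norm (μ := volume.restrict B)
              (fun z => νs z * f (ψ (x + z)) - νs z * f (ψ (y + z)))
      _ ≤ ∫ z in B, νs z * C := by
          apply setIntegral_mono_on ((hint1.sub hint2).abs) hintC hmeasB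
          intro z hz
          simp only [Pi.sub_apply]
          rw [← mul_sub, abs_mul, abs_of_nonneg (hνnonneg z)]
          exact mul_le_mul_of_nonneg_left (key z hz) (hνnonneg z)
      _ = (∫ z in B, νs z) * C := by rw [← integral_mul_const]
      _ = C := by rw [hintν, one_mul]
  -- conclusion: C ≤ (1 + ε) * n (x - y)
  have hCle : C ≤ (1 + ε) * n (x - y) := by
    have h2LKs : 2 * L * K * s ≤ ε * δ := by
      have h2LK : (0:ℝ) < 2 * L * K := by positivity
      calc 2 * L * K * s ≤ 2 * L * K * (ε * δ / (2 * L * K)) := by gcongr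
        _ = ε * δ := by field_simp
    have : ε * δ ≤ ε * n (x - y) := by gcongr
    rw [hCdef]
    nlinarith
  exact hmain.trans hCle

end
end

section
/- Let ‖·‖ and ‖·‖' be norms on ℝ², B the closed unit ball of ‖·‖, D = 2B \ int(B) the annulus, M = ∂B the unit sphere of ‖·‖. There exists a map h: ℝ² → B with h(x) = x for all x ∈ B and ‖h(x) − h(y)‖' ≤ ‖x − y‖' for all x, y (a contractive retraction onto B), and the restriction of h to D maps D onto M and is a 1-Lipschitz retraction of D onto M (w.r.t. the metric induced by ‖·‖'). -/
open Set

noncomputable section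

namespace Stmt15

open Filter Topology

abbrev V := Fin 2 → ℝ

section NormBasics
variable (N : V → ℝ)

theorem N_zero (hs : ∀ (c : ℝ) x, N (c • x) = |c| * N x) : N 0 = 0 := by
  have := hs 0 0; simpa using this

theorem N_nonneg (ha : ∀ x y, N (x + y) ≤ N x + N y)
    (hs : ∀ (c : ℝ) x, N (c • x) = |c| * N x) (z : V) : 0 ≤ N z := by
  have h1 : N (z + (-1 : ℝ) • z) ≤ N z + N ((-1 : ℝ) • z) := ha z _
  have h2 : N ((-1 : ℝ) • z) = N z := by rw [hs]; simp
  have h3 : z + (-1 : ℝ) • z = 0 := by module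
  rw [h3, N_zero N hs, h2] at h1; linarith

theorem N_neg (hs : ∀ (c : ℝ) x, N (c • x) = |c| * N x) (z : V) : N (-z) = N z := by
  have h2 := hs (-1) z; simp at h2; simpa using h2

def e0 : V := ![1, 0]
def e1 : V := ![0, 1]

theorem decomp (z : V) : z = z 0 • e0 + z 1 • e1 := by
  funext i
  fin_cases i <;> simp [e0, e1]

theorem N_upper (ha : ∀ x y, N (x + y) ≤ N x + N y)
    (hs : ∀ (c : ℝ) x, N (c • x) = |c| * N x) :
    ∃ C : ℝ, 0 < C ∧ ∀ z, N z ≤ C * ‖z‖ := by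
  refine ⟨N e0 + N e1 + 1, ?_, ?_⟩
  · have := N_nonneg N ha hs e0; have := N_nonneg N ha hs e1; linarith
  · intro z
    have h1 : N z ≤ N (z 0 • e0) + N (z 1 • e1) := by
      nth_rewrite 1 [decomp z]; exact ha _ _
    rw [hs, hs] at h1
    have h0 : |z 0| ≤ ‖z‖ := by simpa [Real.norm_eq_abs] using norm_le_pi_norm z 0
    have h1' : |z 1| ≤ ‖z‖ := by simpa [Real.norm_eq_abs] using norm_le_pi_norm z 1
    have hz : (0:ℝ) ≤ ‖z‖ := norm_nonneg z
    have hne0 := N_nonneg N ha hs e0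
    have hne1 := N_nonneg N ha hs e1
    nlinarith [abs_nonneg (z 0), abs_nonneg (z 1)]

theorem N_cont (ha : ∀ x y, N (x + y) ≤ N x + N y)
    (hs : ∀ (c : ℝ) x, N (c • x) = |c| * N x) : Continuous N := by
  obtain ⟨C, hC, hub⟩ := N_upper N ha hs
  refine (LipschitzWith.of_dist_le_mul (K := C.toNNReal) (f := N) ?_).continuous
  intro x y
  have key : ∀ a b : V, N a - N b ≤ N (a - b) := by
    intro a b
    have := ha (a - b) b; simp at this; linarith
  have h1 := key x y
  have h2 := key y x
  have h3 : N (y - x) = N (x - y) := by rw [← N_neg N hs (x - y)]; congr 1; abel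
  rw [Real.dist_eq, dist_eq_norm]
  have hub' := hub (x - y)
  rw [abs_le]
  constructor
  · rw [Real.coe_toNNReal _ hC.le]; rw [h3] at h2; nlinarith
  · rw [Real.coe_toNNReal _ hC.le]; nlinarith

theorem N_lower (ha : ∀ x y, N (x + y) ≤ N x + N y)
    (hs : ∀ (c : ℝ) x, N (c • x) = |c| * N x)
    (hp : ∀ x, x ≠ 0 → 0 < N x) :
    ∃ c : ℝ, 0 < c ∧ ∀ z, c * ‖z‖ ≤ N z := by
  have hcont : Continuous N := N_cont N ha hs
  have hcs : IsCompact (Metric.sphere (0:V) 1) := isCompact_sphere 0 1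
  have hne : (Metric.sphere (0:V) 1).Nonempty := by
    refine ⟨e0, ?_⟩
    simp only [Metric.mem_sphere, dist_eq_norm, sub_zero]
    have : ‖e0‖ ≤ 1 := by
      rw [pi_norm_le_iff_of_nonneg (by norm_num)]
      intro i; fin_cases i <;> simp [e0]
    have h2 : (1:ℝ) ≤ ‖e0‖ := by
      have := norm_le_pi_norm e0 0; simp [e0] at this; simpa [e0] using this
    linarith
  obtain ⟨z0, hz0mem, hz0min⟩ := hcs.exists_isMinOn hne (hcont.continuousOn)
  have hz0norm : ‖z0‖ = 1 := by simpa [dist_eq_norm] using hz0mem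
  have hz0ne : z0 ≠ 0 := by intro h; rw [h] at hz0norm; simp at hz0norm
  refine ⟨N z0, hp z0 hz0ne, ?_⟩
  intro z
  rcases eq_or_ne z 0 with rfl | hz
  · simp [N_zero N hs]
  · have hnz : ‖z‖ ≠ 0 := norm_ne_zero_iff.mpr hz
    have hmem : ‖z‖⁻¹ • z ∈ Metric.sphere (0:V) 1 := by
      simp [norm_smul, abs_of_nonneg (inv_nonneg.mpr (norm_nonneg z)),
        inv_mul_cancel₀ hnz]
    have hmin : N z0 ≤ N (‖z‖⁻¹ • z) := hz0min hmem
    have heq : N (‖z‖⁻¹ • z) = ‖z‖⁻¹ * N z := by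
      rw [hs]; congr 1; exact abs_of_nonneg (inv_nonneg.mpr (norm_nonneg z))
    rw [heq] at hmin
    have hpos : (0:ℝ) < ‖z‖ := (norm_pos_iff).mpr hz
    calc N z0 * ‖z‖ ≤ (‖z‖⁻¹ * N z) * ‖z‖ := by nlinarith
      _ = N z := by field_simp

theorem exists_dual (ha : ∀ x y, N (x + y) ≤ N x + N y)
    (hs : ∀ (c : ℝ) x, N (c • x) = |c| * N x) (x : V) :
    ∃ f : V →ₗ[ℝ] ℝ, f x = N x ∧ ∀ z, f z ≤ N z := by
  rcases eq_or_ne x 0 with rfl | hx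
  · exact ⟨0, by simp [N_zero N hs], fun z => by simpa using N_nonneg N ha hs z⟩
  · set fp := (LinearPMap.mkSpanSingleton (K := ℝ) (F := ℝ) x (N x) hx : V →ₗ.[ℝ] ℝ) with hfp
    have hdom : ∀ y : fp.domain, fp y ≤ N y := by
      rintro ⟨y, hy⟩
      rw [hfp] at *
      obtain ⟨c, hc⟩ := Submodule.mem_span_singleton.mp hy
      subst hc
      have happ : fp
          ⟨c • x, by exact Submodule.smul_mem _ c (Submodule.mem_span_singleton_self x)⟩
          = c • N x := by
        exact LinearPMap.mkSpanSingleton'_apply x (N x) _ c _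
      simp only [happ]
      have : N (c • x) = |c| * N x := hs c x
      rw [this]
      have := N_nonneg N ha hs x
      have := le_abs_self c
      simp only [smul_eq_mul]
      nlinarith
    obtain ⟨g, hg1, hg2⟩ := exists_extension_of_le_sublinear fp N
      (fun c hc x => by rw [hs]; rw [abs_of_pos hc]) ha hdom
    refine ⟨g, ?_, hg2⟩
    have hmem : x ∈ fp.domain := Submodule.mem_span_singleton_self x
    have h2 : fp ⟨x, hmem⟩ = N x := LinearPMap.mkSpanSingleton_apply ℝ ℝ hx (N x)
    exact (hg1 ⟨x, hmem⟩).trans h2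

end NormBasics

/-- rational functional -/
def Fq (p : ℚ × ℚ) (z : V) : ℝ := (p.1 : ℝ) * z 0 + (p.2 : ℝ) * z 1

theorem Fq_sub (p : ℚ × ℚ) (z y : V) : Fq p (z - y) = Fq p z - Fq p y := by
  simp [Fq]; ring

theorem Fq_smul (p : ℚ × ℚ) (c : ℝ) (z : V) : Fq p (c • z) = c * Fq p z := by
  simp [Fq]; ring

theorem Fq_zero (p : ℚ × ℚ) : Fq p 0 = 0 := by simp [Fq]

theorem Fq_cont (p : ℚ × ℚ) : Continuous (Fq p) := by
  unfold Fq
  exact ((continuous_const.mul (continuous_apply 0)).add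
    (continuous_const.mul (continuous_apply 1)))

section Family
variable (n : V → ℝ)

/-- index type of supporting rational functionals -/
def S : Type := {p : ℚ × ℚ // ∀ z, Fq p z ≤ n z}

instance S_countable : Countable (S n) := Subtype.countable

theorem S_nonempty (ha : ∀ x y, n (x + y) ≤ n x + n y)
    (hs : ∀ (c : ℝ) x, n (c • x) = |c| * n x) : Nonempty (S n) :=
  ⟨⟨(0, 0), fun z => by simpa [Fq] using N_nonneg n ha hs z⟩⟩

/-- scalar arithmetic helper 1 -/
theorem scalar1 (qa qb a b t eta c Z0 Z1 NZ MZ : ℝ)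
    (ht : 0 < t) (ht1 : t ≤ 1) (heta : 0 < eta) (hec : 2 * eta = c * t)
    (h0 : |Z0| ≤ MZ) (h1 : |Z1| ≤ MZ) (h7 : Z0 * a + Z1 * b ≤ NZ)
    (h8 : c * MZ ≤ NZ)
    (hqa : |qa - (1-t)*a| ≤ eta) (hqb : |qb - (1-t)*b| ≤ eta) :
    qa * Z0 + qb * Z1 ≤ NZ := by
  have hMZ : 0 ≤ MZ := le_trans (abs_nonneg _) h0
  have e1 : qa * Z0 ≤ (1-t)*a*Z0 + eta * |Z0| := by
    rcases abs_le.mp hqa with ⟨l, r⟩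
    rcases le_or_gt 0 Z0 with hu | hu
    · rw [abs_of_nonneg hu]; nlinarith
    · rw [abs_of_neg hu]; nlinarith
  have e2 : qb * Z1 ≤ (1-t)*b*Z1 + eta * |Z1| := by
    rcases abs_le.mp hqb with ⟨l, r⟩
    rcases le_or_gt 0 Z1 with hu | hu
    · rw [abs_of_nonneg hu]; nlinarith
    · rw [abs_of_neg hu]; nlinarith
  have r1 : (1-t)*a*Z0 + (1-t)*b*Z1 = (1-t)*(Z0*a + Z1*b) := by ring
  have k1 : (1-t)*(Z0*a + Z1*b) ≤ (1-t)*NZ :=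
    mul_le_mul_of_nonneg_left h7 (by linarith)
  have s1 : eta * |Z0| ≤ eta * MZ := mul_le_mul_of_nonneg_left h0 heta.le
  have s2 : eta * |Z1| ≤ eta * MZ := mul_le_mul_of_nonneg_left h1 heta.le
  have m1 : t * (c * MZ) ≤ t * NZ := mul_le_mul_of_nonneg_left h8 ht.le
  have m2 : eta * MZ + eta * MZ = t * (c * MZ) := by linear_combination MZ * hec
  nlinarith

/-- scalar arithmetic helper 2 -/
theorem scalar2 (qa qb a b t eta NY Y0 Y1 delta : ℝ)
    (hqa : |qa - (1-t)*a| ≤ eta) (hqb : |qb - (1-t)*b| ≤ eta)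
    (heta : 0 < eta)
    (hkey : Y0 * a + Y1 * b = NY)
    (hloss : t * NY + (eta * |Y0| + eta * |Y1|) ≤ delta) :
    NY - delta ≤ qa * Y0 + qb * Y1 := by
  have v1 : (1-t)*a*Y0 - eta * |Y0| ≤ qa * Y0 := by
    rcases abs_le.mp hqa with ⟨l, r⟩
    rcases le_or_gt 0 Y0 with hu | hu
    · rw [abs_of_nonneg hu]; nlinarith
    · rw [abs_of_neg hu]; nlinarith
  have v2 : (1-t)*b*Y1 - eta * |Y1| ≤ qb * Y1 := by
    rcases abs_le.mp hqb with ⟨l, r⟩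
    rcases le_or_gt 0 Y1 with hu | hu
    · rw [abs_of_nonneg hu]; nlinarith
    · rw [abs_of_neg hu]; nlinarith
  have r1 : (1-t)*a*Y0 + (1-t)*b*Y1 = (1-t)*NY := by linear_combination (1-t) * hkey
  linarith

/-- density: rational supporting functionals almost norm every vector -/
theorem S_dense (ha : ∀ x y, n (x + y) ≤ n x + n y)
    (hs : ∀ (c : ℝ) x, n (c • x) = |c| * n x)
    (hp : ∀ x, x ≠ 0 → 0 < n x) (y : V) {δ : ℝ} (hδ : 0 < δ) :
    ∃ s : S n, n y - δ ≤ Fq s.1 y := by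
  obtain ⟨c, hc, hlow⟩ := N_lower n ha hs hp
  obtain ⟨f, hfy, hfle⟩ := exists_dual n ha hs y
  set a := f e0 with ha'
  set b := f e1 with hb'
  have hf_eval : ∀ z : V, f z = z 0 * a + z 1 * b := by
    intro z
    conv_lhs => rw [decomp z]
    rw [map_add, map_smul, map_smul]; simp [ha', hb']
  clear_value a b
  have hny := N_nonneg n ha hs y
  have habs : (0:ℝ) ≤ |y 0| + |y 1| := by positivity
  have hden : (0:ℝ) < 1 + n y + c * (|y 0| + |y 1|) := by nlinarith
  set D := 1 + n y + c * (|y 0| + |y 1|) with hD'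
  set t := min δ 1 / D with ht'
  have ht : 0 < t := div_pos (lt_min hδ one_pos) hden
  have ht1 : t ≤ 1 := by
    rw [ht', div_le_one hden]
    have h1 : min δ 1 ≤ 1 := min_le_right _ _
    nlinarith
  have htD : t * D = min δ 1 := by rw [ht']; field_simp
  set η := c * t / 2 with hη'
  have hη : 0 < η := by positivity
  have hηc : 2 * η = c * t := by rw [hη']; ring
  clear_value η t D
  obtain ⟨qa, hqa⟩ := exists_rat_near ((1 - t) * a) hη
  obtain ⟨qb, hqb⟩ := exists_rat_near ((1 - t) * b) hη
  have hqa' : |(qa:ℝ) - (1-t)*a| ≤ η := by rw [abs_sub_comm] at hqa; exact hqa.le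
  have hqb' : |(qb:ℝ) - (1-t)*b| ≤ η := by rw [abs_sub_comm] at hqb; exact hqb.le
  have hmem : ∀ z, Fq (qa, qb) z ≤ n z := by
    intro z
    have h0 : |z 0| ≤ ‖z‖ := by simpa [Real.norm_eq_abs] using norm_le_pi_norm z 0
    have h1 : |z 1| ≤ ‖z‖ := by simpa [Real.norm_eq_abs] using norm_le_pi_norm z 1
    have hfz' : z 0 * a + z 1 * b ≤ n z := by rw [← hf_eval]; exact hfle z
    have := scalar1 (qa:ℝ) (qb:ℝ) a b t η c (z 0) (z 1) (n z) ‖z‖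
      ht ht1 hη hηc h0 h1 hfz' (hlow z) hqa' hqb'
    simpa [Fq] using this
  refine ⟨⟨(qa, qb), hmem⟩, ?_⟩
  have hfyval : y 0 * a + y 1 * b = n y := by rw [← hf_eval]; exact hfy
  have hloss : t * n y + (η * |y 0| + η * |y 1|) ≤ δ := by
    have expand : t * D = t + t * n y + t * (c * (|y 0| + |y 1|)) := by
      rw [hD']; ring
    have e2' : 2 * (η * (|y 0| + |y 1|)) = (c * t) * (|y 0| + |y 1|) := by
      linear_combination (|y 0| + |y 1|) * hηc
    have hpos : 0 ≤ (c * t) * (|y 0| + |y 1|) :=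
      mul_nonneg (mul_nonneg hc.le ht.le) habs
    have hsmall : η * |y 0| + η * |y 1| ≤ t * (c * (|y 0| + |y 1|)) := by nlinarith
    have h4 : min δ 1 ≤ δ := min_le_left _ _
    nlinarith [ht.le]
  have := scalar2 (qa:ℝ) (qb:ℝ) a b t η (n y) (y 0) (y 1) δ hqa' hqb' hη hfyval hloss
  simpa [Fq] using this

/-- clamp estimates -/
theorem clamp_bounds (A B : ℝ) (h : B < A) :
    0 ≤ max (A-1) 0 - max (B-1) 0 ∧ max (A-1) 0 - max (B-1) 0 ≤ A - B := by
  rcases le_total A 1 with h1|h1 <;> rcases le_total B 1 with h2|h2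
  · rw [max_eq_right (by linarith : A - 1 ≤ 0), max_eq_right (by linarith : B - 1 ≤ 0)]
    constructor <;> linarith
  · constructor <;> linarith [le_max_left (A-1) 0, le_max_right (A-1) 0,
      le_max_left (B-1) 0, max_eq_left (by linarith : (0:ℝ) ≤ B - 1)] 
  · rw [max_eq_left (by linarith : (0:ℝ) ≤ A - 1), max_eq_right (by linarith : B - 1 ≤ 0)]
    constructor <;> linarith
  · rw [max_eq_left (by linarith : (0:ℝ) ≤ A - 1), max_eq_left (by linarith : (0:ℝ) ≤ B - 1)]
    constructor <;> linarith

theorem clamp (A B : ℝ) : ∃ l : ℝ, 0 ≤ l ∧ l ≤ 1 ∧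
    max (A-1) 0 - max (B-1) 0 = l * (A - B) := by
  rcases lt_trichotomy A B with h | h | h
  · obtain ⟨c1, c2⟩ := clamp_bounds B A h
    refine ⟨(max (A-1) 0 - max (B-1) 0) / (A - B), ?_, ?_, ?_⟩
    · rw [← neg_div_neg_eq]; apply div_nonneg <;> linarith
    · rw [div_le_one_of_neg (by linarith)]; linarith
    · exact (div_mul_cancel₀ _ (sub_ne_zero.mpr h.ne)).symm
  · subst h; exact ⟨0, le_refl 0, zero_le_one, by simp⟩
  · obtain ⟨c1, c2⟩ := clamp_bounds A B h
    refine ⟨(max (A-1) 0 - max (B-1) 0) / (A - B), ?_, ?_, ?_⟩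
    · apply div_nonneg <;> linarith
    · rw [div_le_one (by linarith)]; linarith
    · exact (div_mul_cancel₀ _ (sub_ne_zero.mpr h.ne')).symm

/-- Existence of a nonexpansive half-plane retraction -/
theorem exists_retraction
    (N : V → ℝ)
    (Na : ∀ x y, N (x + y) ≤ N x + N y)
    (Ns : ∀ (c : ℝ) x, N (c • x) = |c| * N x)
    (Np : ∀ x, x ≠ 0 → 0 < N x)
    (s : S n) :
    ∃ r : V → V,
      (∀ b, Fq s.1 b ≤ 1 → r b = b) ∧
      (∀ z, Fq s.1 (r z) ≤ 1) ∧
      (∀ z y, N (r z - r y) ≤ N (z - y)) ∧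
      (∀ z, 1 ≤ n z → 1 ≤ n (r z)) := by
  obtain ⟨p, hps⟩ := s
  simp only
  by_cases hp0 : p = 0
  · refine ⟨id, fun b _ => rfl, ?_, fun z y => le_refl _, fun z h => h⟩
    intro z
    subst hp0
    simp [Fq]
  -- nondegenerate case
  set φ0 : ℝ := (p.1 : ℝ) with hφ0
  set φ1 : ℝ := (p.2 : ℝ) with hφ1
  have hφ : ¬(φ0 = 0 ∧ φ1 = 0) := by
    rintro ⟨h0, h1⟩
    apply hp0
    have : (p.1 : ℝ) = 0 := h0
    have e0' : p.1 = 0 := by exact_mod_cast this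
    have : (p.2 : ℝ) = 0 := h1
    have e1' : p.2 = 0 := by exact_mod_cast this
    exact Prod.ext e0' e1'
  have hFq_eval : ∀ z : V, Fq p z = φ0 * z 0 + φ1 * z 1 := fun z => rfl
  set u₀ : V := ![φ1, -φ0] with hu₀def
  have hu₀ : u₀ ≠ 0 := by
    intro h
    apply hφ
    constructor
    · have := congrFun h 1; simpa [hu₀def] using this
    · have := congrFun h 0; simpa [hu₀def] using this
  have hFu₀ : Fq p u₀ = 0 := by
    rw [hFq_eval]; simp [hu₀def]; ring
  set μ := N u₀ with hμdef
  have hμ : 0 < μ := Np u₀ hu₀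
  set u : V := μ⁻¹ • u₀ with hudef
  have hNu : N u = 1 := by
    rw [hudef, Ns, abs_of_nonneg (inv_nonneg.mpr hμ.le), hμdef]
    field_simp
    exact div_self (ne_of_gt hμ)
  have hFu : Fq p u = 0 := by rw [hudef, Fq_smul, hFu₀]; ring
  have hFe0 : Fq p e0 = φ0 := by rw [hFq_eval]; simp [e0]
  have hFe1 : Fq p e1 = φ1 := by rw [hFq_eval]; simp [e1]
  set w₀ : V := if φ0 = 0 then e1 else e0 with hw₀def
  have hw₀ : Fq p w₀ ≠ 0 := by
    rw [hw₀def]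
    by_cases h : φ0 = 0
    · simp only [h, if_true]
      rw [hFe1]
      intro h1; exact hφ ⟨h, h1⟩
    · simp only [h, if_false]
      rw [hFe0]; exact h
  obtain ⟨g, hgu, hgle⟩ := exists_dual N Na Ns u
  rw [hNu] at hgu
  have hgabs : ∀ z, |g z| ≤ N z := by
    intro z
    rw [abs_le]
    refine ⟨?_, hgle z⟩
    have := hgle (-z)
    rw [map_neg, N_neg N Ns] at this
    linarith
  set v : V := (Fq p w₀)⁻¹ • (w₀ - g w₀ • u) with hvdef
  have hFv : Fq p v = 1 := by
    rw [hvdef, Fq_smul, Fq_sub, Fq_smul, hFu]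
    field_simp
    ring
  -- kernel representation
  have hker : ∀ w : V, Fq p w = 0 → ∃ t : ℝ, w = t • u₀ := by
    intro w hw
    rw [hFq_eval] at hw
    by_cases h1 : φ1 = 0
    · have h0 : φ0 ≠ 0 := fun h => hφ ⟨h, h1⟩
      refine ⟨-(w 1) / φ0, ?_⟩
      funext i
      fin_cases i
      · show w 0 = (-(w 1) / φ0) * u₀ 0
        have hw0 : w 0 = 0 := by
          have : φ0 * w 0 = 0 := by rw [h1] at hw; linarith
          rcases mul_eq_zero.mp this with h|h
          · exact absurd h h0
          · exact h
        simp [hu₀def, h1, hw0]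
      · show w 1 = (-(w 1) / φ0) * u₀ 1
        simp [hu₀def]
        field_simp
    · refine ⟨w 0 / φ1, ?_⟩
      funext i
      fin_cases i
      · show w 0 = (w 0 / φ1) * u₀ 0
        simp [hu₀def]
        field_simp
      · show w 1 = (w 0 / φ1) * u₀ 1
        simp [hu₀def]
        field_simp
        linarith [hw]
  -- key identity
  have hu₀u : u₀ = μ • u := by
    rw [hudef, smul_smul, mul_inv_cancel₀ (ne_of_gt hμ), one_smul]
  have hid : ∀ w : V, w - Fq p w • v = g w • u := by
    intro w
    set β := Fq p w / Fq p w₀ with hβdef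
    have hw' : Fq p (w - β • w₀) = 0 := by
      rw [Fq_sub, Fq_smul, hβdef]
      field_simp
      ring
    obtain ⟨t, htw⟩ := hker _ hw'
    have hwdec : w = t • u₀ + β • w₀ := by
      have : w - β • w₀ = t • u₀ := htw
      linear_combination (norm := module) this
    have hFw : Fq p w = β * Fq p w₀ := by
      rw [hβdef]; field_simp
    have hgw : g w = t * μ + β * g w₀ := by
      rw [hwdec, map_add, map_smul, map_smul, hu₀u, map_smul, hgu]
      simp [smul_eq_mul]
    rw [hFw, hgw, hvdef, hwdec, hu₀u]
    have hμne : μ ≠ 0 := ne_of_gt hμ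
    match_scalars <;> field_simp <;> ring
  -- convexity helper
  have hNle : ∀ (w : V) (l : ℝ), 0 ≤ l → l ≤ 1 → N (w - (l * Fq p w) • v) ≤ N w := by
    intro w l h0 h1
    have heq : w - (l * Fq p w) • v = (1 - l) • w + l • (w - Fq p w • v) := by
      module
    rw [heq, hid w]
    have step1 : N ((1 - l) • w + l • (g w • u)) ≤ N ((1-l) • w) + N (l • (g w • u)) :=
      Na _ _
    have e1 : N ((1-l) • w) = (1-l) * N w := by
      rw [Ns, abs_of_nonneg (by linarith)]
    have e2 : N (l • (g w • u)) = l * (|g w| * N u) := by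
      rw [Ns, abs_of_nonneg h0, Ns]
    rw [e1, e2, hNu] at step1
    have := hgabs w
    nlinarith [N_nonneg N Na Ns w]
  -- the retraction
  refine ⟨fun z => z - max (Fq p z - 1) 0 • v, ?_, ?_, ?_, ?_⟩
  · intro b hb
    show b - max (Fq p b - 1) 0 • v = b
    rw [max_eq_right (by linarith), zero_smul, sub_zero]
  · intro z
    show Fq p (z - max (Fq p z - 1) 0 • v) ≤ 1
    by_cases hz : Fq p z ≤ 1
    · rw [max_eq_right (by linarith), zero_smul, sub_zero]; exact hz
    · push_neg at hz
      rw [max_eq_left (by linarith), Fq_sub, Fq_smul, hFv]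
      linarith
  · intro z y
    show N ((z - max (Fq p z - 1) 0 • v) - (y - max (Fq p y - 1) 0 • v)) ≤ N (z - y)
    obtain ⟨l, hl0, hl1, hleq⟩ := clamp (Fq p z) (Fq p y)
    have heq : (z - max (Fq p z - 1) 0 • v) - (y - max (Fq p y - 1) 0 • v)
        = (z - y) - (l * Fq p (z - y)) • v := by
      rw [Fq_sub, ← hleq]
      module
    rw [heq]
    exact hNle (z - y) l hl0 hl1
  · intro z hz
    show 1 ≤ n (z - max (Fq p z - 1) 0 • v)
    by_cases hzf : Fq p z ≤ 1
    · rw [max_eq_right (by linarith), zero_smul, sub_zero]; exact hz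
    · push_neg at hzf
      have hcomp : Fq p (z - max (Fq p z - 1) 0 • v) = 1 := by
        rw [Fq_sub, Fq_smul, hFv, max_eq_left (by linarith)]
        ring
      have := hps (z - max (Fq p z - 1) 0 • v)
      rw [hcomp] at this
      exact this

/-- enumeration with infinite repetition -/
theorem exists_enum (ha : ∀ x y, n (x + y) ≤ n x + n y)
    (hs : ∀ (c : ℝ) x, n (c • x) = |c| * n x) :
    ∃ σ : ℕ → S n, ∀ s : S n, ∀ K : ℕ, ∃ k, K ≤ k ∧ σ k = s := by
  have : Nonempty (S n) := S_nonempty n ha hs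
  obtain ⟨e, he⟩ := exists_surjective_nat (S n)
  refine ⟨fun k => e (Nat.unpair k).1, ?_⟩
  intro s K
  obtain ⟨j, hj⟩ := he s
  exact ⟨Nat.pair j K, Nat.right_le_pair j K, by simp [Nat.unpair_pair, hj]⟩

/-- bisector of a strictly convex norm cannot contain a ball -/
theorem bisector (N : V → ℝ)
    (Ns : ∀ (c : ℝ) x, N (c • x) = |c| * N x)
    (Nsc : ∀ A B : V, N (A + B) = N A + N B → A 0 * B 1 - A 1 * B 0 = 0)
    (ρ : ℝ) (hρ : 0 < ρ)
    (hball : ∀ p : V, ‖p‖ ≤ ρ → n p ≤ 1)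
    (y₁ y₂ : V)
    (heq : ∀ b, n b ≤ 1 → N (y₁ - b) = N (y₂ - b)) : y₁ = y₂ := by
  by_contra hne
  have hd : y₁ - y₂ ≠ 0 := sub_ne_zero.mpr hne
  set d0 : ℝ := y₁ 0 - y₂ 0 with hd0
  set d1 : ℝ := y₁ 1 - y₂ 1 with hd1
  have hκ : 0 < d0 ^ 2 + d1 ^ 2 := by
    rcases Function.ne_iff.mp hd with ⟨i, hi⟩
    fin_cases i
    · have : d0 ≠ 0 := by
        simp only [hd0]; intro h; apply hi; simp [Pi.sub_apply] at *; linarith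
      positivity
    · have : d1 ≠ 0 := by
        simp only [hd1]; intro h; apply hi; simp [Pi.sub_apply] at *; linarith
      positivity
  set e : V := ![-d1, d0] with he
  set ρ' : ℝ := ρ / (2 * (‖e‖ + 1)) with hρ'def
  have hρ' : 0 < ρ' := by
    rw [hρ'def]; positivity
  have hsize : ∀ c : ℝ, |c| ≤ ρ' → ‖c • e‖ ≤ ρ / 2 := by
    intro c hc
    rw [norm_smul, Real.norm_eq_abs]
    have h1 : |c| * ‖e‖ ≤ ρ' * ‖e‖ := mul_le_mul_of_nonneg_right hc (norm_nonneg e)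
    have h2 : ρ' * ‖e‖ ≤ ρ / 2 := by
      rw [hρ'def]
      rw [div_mul_eq_mul_div, div_le_div_iff₀ (by positivity) (by norm_num)]
      nlinarith [norm_nonneg e]
    linarith
  -- choose p with ℓ p ≠ 0
  have hchoice : ∃ p : V, ‖p‖ ≤ ρ / 2 ∧
      (p 0 - y₁ 0) * d1 - (p 1 - y₁ 1) * d0 ≠ 0 := by
    set c1 : ℝ := (ρ' * (-d1) - y₁ 0) * d1 - (ρ' * d0 - y₁ 1) * d0 with hc1
    by_cases h : c1 ≠ 0
    · refine ⟨ρ' • e, hsize ρ' (by rw [abs_of_pos hρ']) , ?_⟩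
      have e0 : (ρ' • e) 0 = ρ' * (-d1) := by simp [he]
      have e1 : (ρ' • e) 1 = ρ' * d0 := by simp [he]
      rw [e0, e1]
      exact h
    · push_neg at h
      refine ⟨(-ρ') • e, hsize (-ρ') (by rw [abs_neg, abs_of_pos hρ']), ?_⟩
      have e0 : ((-ρ') • e) 0 = (-ρ') * (-d1) := by simp [he]
      have e1 : ((-ρ') • e) 1 = (-ρ') * d0 := by simp [he]
      rw [e0, e1]
      intro hcontra
      rw [hc1] at h
      nlinarith [hκ, hρ']
  obtain ⟨p, hpnorm, hpl⟩ := hchoice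
  set t : ℝ := (ρ / 2) / (‖p - y₁‖ + 1) with htdef
  have ht : 0 < t := by rw [htdef]; positivity
  have htp : t * ‖p - y₁‖ ≤ ρ / 2 := by
    rw [htdef, div_mul_eq_mul_div, div_le_iff₀ (by positivity)]
    nlinarith [norm_nonneg (p - y₁)]
  set q : V := p + t • (p - y₁) with hqdef
  have hqnorm : ‖q‖ ≤ ρ := by
    calc ‖q‖ ≤ ‖p‖ + ‖t • (p - y₁)‖ := norm_add_le _ _
      _ = ‖p‖ + t * ‖p - y₁‖ := by rw [norm_smul, Real.norm_eq_abs, abs_of_pos ht]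
      _ ≤ ρ := by linarith
  have hnp : n p ≤ 1 := hball p (by linarith)
  have hnq : n q ≤ 1 := hball q hqnorm
  have h1 : y₁ - q = (1 + t) • (y₁ - p) := by rw [hqdef]; module
  have hN1 : N (y₁ - q) = (1 + t) * N (y₁ - p) := by
    rw [h1, Ns, abs_of_pos (by linarith)]
  have hAB : t • (y₁ - p) + (y₂ - p) = y₂ - q := by rw [hqdef]; module
  have hNA : N (t • (y₁ - p)) = t * N (y₁ - p) := by rw [Ns, abs_of_pos ht]
  have heqp := heq p hnp
  have heqq := heq q hnq
  have key : N (t • (y₁ - p) + (y₂ - p)) = N (t • (y₁ - p)) + N (y₂ - p) := by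
    rw [hAB, ← heqq, hN1, hNA, ← heqp]
    ring
  have hdet := Nsc _ _ key
  simp only [Pi.smul_apply, Pi.sub_apply, smul_eq_mul] at hdet
  apply hpl
  have hexp : t * ((p 0 - y₁ 0) * d1 - (p 1 - y₁ 1) * d0) = 0 := by
    rw [hd0, hd1]
    linear_combination hdet
  rcases mul_eq_zero.mp hexp with h | h
  · exact absurd h (ne_of_gt ht)
  · exact h

/-- Stage 1: nonexpansive retraction for a strictly convex norm N -/
theorem stage1
    (na : ∀ x y, n (x + y) ≤ n x + n y)
    (ns : ∀ (c : ℝ) x, n (c • x) = |c| * n x)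
    (np : ∀ x, x ≠ 0 → 0 < n x)
    (N : V → ℝ)
    (Na : ∀ x y, N (x + y) ≤ N x + N y)
    (Ns : ∀ (c : ℝ) x, N (c • x) = |c| * N x)
    (cN : ℝ) (hcN : 0 < cN) (Nlb : ∀ z, cN * ‖z‖ ≤ N z)
    (Nsc : ∀ A B : V, N (A + B) = N A + N B → A 0 * B 1 - A 1 * B 0 = 0) :
    ∃ h : V → V,
      (∀ x, n x ≤ 1 → h x = x) ∧
      (∀ x, n (h x) ≤ 1) ∧
      (∀ x y, N (h x - h y) ≤ N (x - y)) ∧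
      (∀ x, 1 ≤ n x → 1 ≤ n (h x)) := by
  obtain ⟨Cn, hCn, hnub⟩ := N_upper n na ns
  have hncont := N_cont n na ns
  have hNcont := N_cont N Na Ns
  have hNpos : ∀ x, x ≠ 0 → 0 < N x := by
    intro x hx
    have h1 : (0:ℝ) < cN * ‖x‖ := by
      have := norm_pos_iff.mpr hx
      positivity
    linarith [Nlb x]
  have hρ : (0:ℝ) < Cn⁻¹ := by positivity
  have hball : ∀ p : V, ‖p‖ ≤ Cn⁻¹ → n p ≤ 1 := by
    intro p hp
    calc n p ≤ Cn * ‖p‖ := hnub p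
      _ ≤ Cn * Cn⁻¹ := mul_le_mul_of_nonneg_left hp hCn.le
      _ = 1 := mul_inv_cancel₀ (ne_of_gt hCn)
  obtain ⟨σ, hσ⟩ := exists_enum n na ns
  have hret := fun s => exists_retraction n N Na Ns hNpos s
  choose R hR1 hR2 hR3 hR4 using hret
  set zs : V → ℕ → V := fun x k => Nat.rec x (fun k zk => R (σ k) zk) k with hzs
  have hz0 : ∀ x, zs x 0 = x := fun _ => rfl
  have hzsucc : ∀ x k, zs x (k+1) = R (σ k) (zs x k) := fun _ _ => rfl
  have hfixB : ∀ x, n x ≤ 1 → ∀ k, zs x k = x := by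
    intro x hx k
    induction k with
    | zero => rfl
    | succ k ih => rw [hzsucc, ih]; exact hR1 (σ k) x (le_trans ((σ k).2 x) hx)
  have hfej : ∀ x b, n b ≤ 1 → ∀ k, N (zs x (k+1) - b) ≤ N (zs x k - b) := by
    intro x b hb k
    rw [hzsucc]
    have hbfix : R (σ k) b = b := hR1 (σ k) b (le_trans ((σ k).2 b) hb)
    calc N (R (σ k) (zs x k) - b) = N (R (σ k) (zs x k) - R (σ k) b) := by rw [hbfix]
      _ ≤ N (zs x k - b) := hR3 (σ k) _ _
  have hanti : ∀ x b, n b ≤ 1 → Antitone (fun k => N (zs x k - b)) :=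
    fun x b hb => antitone_nat_of_succ_le (hfej x b hb)
  have hn0 : n (0:V) ≤ 1 := by rw [N_zero n ns]; norm_num
  have hbound : ∀ x k, N (zs x k) ≤ N x := by
    intro x k
    have h := hanti x 0 hn0 (Nat.zero_le k)
    simpa [hz0] using h
  have hNnonneg : ∀ z : V, 0 ≤ N z := N_nonneg N Na Ns
  have hnormbound : ∀ x k, ‖zs x k‖ ≤ N x / cN := by
    intro x k
    rw [le_div_iff₀ hcN]
    calc ‖zs x k‖ * cN = cN * ‖zs x k‖ := by ring
      _ ≤ N (zs x k) := Nlb _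
      _ ≤ N x := hbound x k
  have hlip : ∀ x y k, N (zs x k - zs y k) ≤ N (x - y) := by
    intro x y k
    induction k with
    | zero => exact le_refl _
    | succ k ih => rw [hzsucc, hzsucc]; exact le_trans (hR3 (σ k) _ _) ih
  have hout : ∀ x, 1 ≤ n x → ∀ k, 1 ≤ n (zs x k) := by
    intro x hx k
    induction k with
    | zero => exact hx
    | succ k ih => rw [hzsucc]; exact hR4 (σ k) _ ih
  -- convergence
  have hconv : ∀ x, ∃ y, Tendsto (fun k => zs x k) atTop (𝓝 y) := by
    intro x
    have hmem : ∀ k, zs x k ∈ Metric.closedBall (0:V) (N x / cN) := by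
      intro k
      rw [mem_closedBall_zero_iff]
      exact hnormbound x k
    have hcomp : IsCompact (Metric.closedBall (0:V) (N x / cN)) :=
      isCompact_closedBall _ _
    have hprofile : ∀ (y : V) (ψ : ℕ → ℕ), StrictMono ψ →
        Tendsto (fun i => zs x (ψ i)) atTop (𝓝 y) →
        ∀ b, n b ≤ 1 → N (y - b) = ⨅ k, N (zs x k - b) := by
      intro y ψ hψ hty b hb
      have hbdd : BddBelow (Set.range fun k => N (zs x k - b)) := by
        refine ⟨0, ?_⟩
        rintro r ⟨k, rfl⟩
        exact hNnonneg _
      have hlim := tendsto_atTop_ciInf (hanti x b hb) hbdd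
      have h1 : Tendsto (fun i => N (zs x (ψ i) - b)) atTop
          (𝓝 (⨅ k, N (zs x k - b))) := hlim.comp hψ.tendsto_atTop
      have h2 : Tendsto (fun i => N (zs x (ψ i) - b)) atTop (𝓝 (N (y - b))) := by
        have ht : Tendsto (fun i => zs x (ψ i) - b) atTop (𝓝 (y - b)) :=
          hty.sub tendsto_const_nhds
        exact (hNcont.tendsto _).comp ht
      exact tendsto_nhds_unique h2 h1
    obtain ⟨yl, hymem, φ, hφ, hyconv⟩ := hcomp.tendsto_subseq hmem
    refine ⟨yl, ?_⟩
    by_contra hnot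
    rw [Metric.tendsto_atTop] at hnot
    push_neg at hnot
    obtain ⟨ε, hε, hfreq⟩ := hnot
    obtain ⟨ψ, hψmono, hψprop⟩ := extraction_of_frequently_atTop
      (frequently_atTop.mpr hfreq)
    obtain ⟨y', hy'mem, χ, hχ, hy'conv⟩ := hcomp.tendsto_subseq
      (fun i => hmem (ψ i))
    have hcomb : StrictMono (ψ ∘ χ) := hψmono.comp hχ
    have hy'conv' : Tendsto (fun i => zs x ((ψ ∘ χ) i)) atTop (𝓝 y') := hy'conv
    have hprof1 := hprofile yl φ hφ hyconv
    have hprof2 := hprofile y' (ψ ∘ χ) hcomb hy'conv'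
    have heqprof : ∀ b, n b ≤ 1 → N (y' - b) = N (yl - b) :=
      fun b hb => (hprof2 b hb).trans (hprof1 b hb).symm
    have heq' : y' = yl := bisector n N Ns Nsc Cn⁻¹ hρ hball y' yl heqprof
    have hdist : ε ≤ dist y' yl := by
      have h1 : Tendsto (fun i => dist (zs x ((ψ ∘ χ) i)) yl) atTop
          (𝓝 (dist y' yl)) := hy'conv'.dist tendsto_const_nhds
      exact ge_of_tendsto h1 (Eventually.of_forall fun i => hψprop (χ i))
    rw [heq'] at hdist
    simp at hdist
    linarith
  choose L hL using hconv
  refine ⟨L, ?_, ?_, ?_, ?_⟩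
  · intro x hx
    have hconst : (fun k => zs x k) = fun _ => x := funext (hfixB x hx)
    have := hL x
    rw [hconst] at this
    exact (tendsto_nhds_unique this tendsto_const_nhds)
  · intro x
    have hsle : ∀ s : S n, Fq s.1 (L x) ≤ 1 := by
      intro s
      have hfreq' : ∃ᶠ k in atTop, σ k = s :=
        frequently_atTop.mpr (fun K => (hσ s K).imp fun k hk => ⟨hk.1, hk.2⟩)
      obtain ⟨φs, hφsmono, hφsprop⟩ := extraction_of_frequently_atTop hfreq'
      have hterm : ∀ i, Fq s.1 (zs x (φs i + 1)) ≤ 1 := by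
        intro i
        rw [hzsucc, hφsprop i]
        exact hR2 s _
      have htend0 : Tendsto (fun i => φs i + 1) atTop atTop :=
        tendsto_atTop_mono (fun i => Nat.le_succ _) hφsmono.tendsto_atTop
      have htend : Tendsto (fun i => zs x (φs i + 1)) atTop (𝓝 (L x)) :=
        (hL x).comp htend0
      have hcont := (Fq_cont s.1).tendsto (L x)
      exact le_of_tendsto (hcont.comp htend) (Eventually.of_forall hterm)
    by_contra hgt
    push_neg at hgt
    obtain ⟨s, hdens⟩ := S_dense n na ns np (L x) (δ := (n (L x) - 1)/2) (by linarith)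
    have := hsle s
    linarith
  · intro x y
    have h1 : Tendsto (fun k => N (zs x k - zs y k)) atTop (𝓝 (N (L x - L y))) :=
      (hNcont.tendsto _).comp ((hL x).sub (hL y))
    exact le_of_tendsto h1 (Eventually.of_forall fun k => hlip x y k)
  · intro x hx
    exact ge_of_tendsto ((hncont.tendsto _).comp (hL x))
      (Eventually.of_forall (hout x hx))

end Family

section Euclid

/-- Euclidean norm on the plane -/
def E (z : V) : ℝ := Real.sqrt (z 0 ^ 2 + z 1 ^ 2)

theorem E_nonneg (z : V) : 0 ≤ E z := Real.sqrt_nonneg _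

theorem E_sq (z : V) : E z ^ 2 = z 0 ^ 2 + z 1 ^ 2 :=
  Real.sq_sqrt (by positivity)

theorem E_smul (c : ℝ) (z : V) : E (c • z) = |c| * E z := by
  unfold E
  have h1 : (c • z) 0 ^ 2 + (c • z) 1 ^ 2 = c ^ 2 * (z 0 ^ 2 + z 1 ^ 2) := by
    simp [Pi.smul_apply, smul_eq_mul]; ring
  rw [h1, Real.sqrt_mul (sq_nonneg c), Real.sqrt_sq_eq_abs]

theorem E_cauchy (A B : V) : A 0 * B 0 + A 1 * B 1 ≤ E A * E B := by
  have hprod : E A * E B = Real.sqrt ((A 0 ^ 2 + A 1 ^ 2) * (B 0 ^ 2 + B 1 ^ 2)) := by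
    unfold E
    rw [← Real.sqrt_mul (by positivity)]
  rcases le_or_gt (A 0 * B 0 + A 1 * B 1) 0 with h | h
  · calc A 0 * B 0 + A 1 * B 1 ≤ 0 := h
      _ ≤ E A * E B := mul_nonneg (E_nonneg A) (E_nonneg B)
  · rw [hprod]
    rw [show (A 0 * B 0 + A 1 * B 1) = Real.sqrt ((A 0 * B 0 + A 1 * B 1)^2) from
      (Real.sqrt_sq h.le).symm]
    apply Real.sqrt_le_sqrt
    nlinarith [sq_nonneg (A 0 * B 1 - A 1 * B 0)]

theorem E_add (A B : V) : E (A + B) ≤ E A + E B := by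
  have h1 : (A + B) 0 ^ 2 + (A + B) 1 ^ 2 ≤ (E A + E B) ^ 2 := by
    have hc := E_cauchy A B
    have e1 := E_sq A
    have e2 := E_sq B
    simp only [Pi.add_apply]
    nlinarith
  calc E (A + B) = Real.sqrt ((A + B) 0 ^ 2 + (A + B) 1 ^ 2) := rfl
    _ ≤ Real.sqrt ((E A + E B) ^ 2) := Real.sqrt_le_sqrt h1
    _ = E A + E B := Real.sqrt_sq (by have := E_nonneg A; have := E_nonneg B; linarith)

theorem E_lower (z : V) : ‖z‖ ≤ E z := by
  rw [pi_norm_le_iff_of_nonneg (E_nonneg z)]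
  intro i
  fin_cases i
  · show ‖z 0‖ ≤ E z
    rw [Real.norm_eq_abs, ← Real.sqrt_sq_eq_abs]
    exact Real.sqrt_le_sqrt (by nlinarith [sq_nonneg (z 1)])
  · show ‖z 1‖ ≤ E z
    rw [Real.norm_eq_abs, ← Real.sqrt_sq_eq_abs]
    exact Real.sqrt_le_sqrt (by nlinarith [sq_nonneg (z 0)])

theorem E_eq_imp_det (A B : V) (h : E (A + B) = E A + E B) :
    A 0 * B 1 - A 1 * B 0 = 0 := by
  have h2 : (A 0 + B 0) ^ 2 + (A 1 + B 1) ^ 2 = (E A + E B) ^ 2 := by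
    rw [← h]
    have := E_sq (A + B)
    simp only [Pi.add_apply] at this
    linarith
  have e1 := E_sq A
  have e2 := E_sq B
  have hip : A 0 * B 0 + A 1 * B 1 = E A * E B := by nlinarith
  have hsq : (A 0 * B 0 + A 1 * B 1) ^ 2 = (A 0 ^ 2 + A 1 ^ 2) * (B 0 ^ 2 + B 1 ^ 2) := by
    rw [hip]
    have : (E A * E B) ^ 2 = E A ^ 2 * E B ^ 2 := by ring
    rw [this, e1, e2]
  have hdet : (A 0 * B 1 - A 1 * B 0) ^ 2 = 0 := by nlinarith
  exact pow_eq_zero_iff (by norm_num) |>.mp hdet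

end Euclid

end Stmt15

open Filter Topology Stmt15

theorem stmt15 (n n' : (Fin 2 → ℝ) → ℝ)
    (hn_add : ∀ x y, n (x + y) ≤ n x + n y)
    (hn_smul : ∀ (c : ℝ) x, n (c • x) = |c| * n x)
    (hn_pos : ∀ x, x ≠ 0 → 0 < n x)
    (hn'_add : ∀ x y, n' (x + y) ≤ n' x + n' y)
    (hn'_smul : ∀ (c : ℝ) x, n' (c • x) = |c| * n' x)
    (hn'_pos : ∀ x, x ≠ 0 → 0 < n' x) :
    ∃ h : (Fin 2 → ℝ) → (Fin 2 → ℝ),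
      (∀ x, n x ≤ 1 → h x = x) ∧
      (∀ x, n (h x) ≤ 1) ∧
      (∀ x y, n' (h x - h y) ≤ n' (x - y)) ∧
      (∀ x, 1 ≤ n x → n x ≤ 2 → n (h x) = 1) ∧
      (∀ y, n y = 1 → ∃ x, 1 ≤ n x ∧ n x ≤ 2 ∧ h x = y) := by
  -- smoothed norms
  set NN : ℕ → V → ℝ := fun m z => n' z + (1/(m+1:ℝ)) * E z with hNN
  have htm : ∀ m : ℕ, (0:ℝ) < 1/(m+1:ℝ) := by intro m; positivity
  have hNa : ∀ m : ℕ, ∀ x y, NN m (x + y) ≤ NN m x + NN m y := by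
    intro m x y
    have h1 := hn'_add x y
    have h2 := E_add x y
    have h3 : (1/(m+1:ℝ)) * E (x+y) ≤ (1/(m+1:ℝ)) * (E x + E y) :=
      mul_le_mul_of_nonneg_left h2 (htm m).le
    simp only [hNN]
    linarith
  have hNs : ∀ m : ℕ, ∀ (c : ℝ) x, NN m (c • x) = |c| * NN m x := by
    intro m c x
    simp only [hNN]
    rw [hn'_smul, E_smul]
    ring
  have hNlb : ∀ m : ℕ, ∀ z, (1/(m+1:ℝ)) * ‖z‖ ≤ NN m z := by
    intro m z
    have h1 : (1/(m+1:ℝ)) * ‖z‖ ≤ (1/(m+1:ℝ)) * E z :=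
      mul_le_mul_of_nonneg_left (E_lower z) (htm m).le
    have h2 : 0 ≤ n' z := N_nonneg n' hn'_add hn'_smul z
    simp only [hNN]
    linarith
  have hNsc : ∀ m : ℕ, ∀ A B : V, NN m (A + B) = NN m A + NN m B →
      A 0 * B 1 - A 1 * B 0 = 0 := by
    intro m A B hEq
    apply E_eq_imp_det
    have h1 := hn'_add A B
    have h2 := E_add A B
    simp only [hNN] at hEq
    have h3 : (1/(m+1:ℝ)) * (E A + E B - E (A+B)) ≥ 0 :=
      mul_nonneg (htm m).le (by linarith)
    have h4 : n' (A+B) - (n' A + n' B) = (1/(m+1:ℝ)) * (E A + E B - E (A+B)) := by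
      linarith [hEq]
    have h5 : E A + E B - E (A + B) = 0 := by
      by_contra hne
      have h6 : 0 < E A + E B - E (A+B) := lt_of_le_of_ne (by linarith) (Ne.symm hne)
      have h7 : 0 < (1/(m+1:ℝ)) * (E A + E B - E (A+B)) := mul_pos (htm m) h6
      linarith
    linarith
  -- stage 1 for each m
  have hstage : ∀ m : ℕ, ∃ h : V → V,
      (∀ x, n x ≤ 1 → h x = x) ∧
      (∀ x, n (h x) ≤ 1) ∧
      (∀ x y, NN m (h x - h y) ≤ NN m (x - y)) ∧
      (∀ x, 1 ≤ n x → 1 ≤ n (h x)) := by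
    intro m
    exact stage1 n hn_add hn_smul hn_pos (NN m) (hNa m) (hNs m)
      (1/(m+1:ℝ)) (htm m) (hNlb m) (hNsc m)
  choose hm hm1 hm2 hm3 hm4 using hstage
  -- ultrafilter limit
  obtain ⟨U, hU⟩ := Filter.exists_ultrafilter_le (atTop : Filter ℕ)
  obtain ⟨c', hc', hlow'⟩ := N_lower n' hn'_add hn'_smul hn'_pos
  have hncont := N_cont n hn_add hn_smul
  have hn'cont := N_cont n' hn'_add hn'_smul
  have hn'0 : n' (0:V) = 0 := N_zero n' hn'_smul
  have hn0 : n (0:V) = 0 := N_zero n hn_smul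
  have hm0 : ∀ m, hm m 0 = 0 := fun m => hm1 m 0 (by rw [hn0]; norm_num)
  have hbox : ∀ x m, hm m x ∈ Metric.closedBall (0:V) ((n' x + E x)/c') := by
    intro x m
    rw [mem_closedBall_zero_iff]
    have h1 : NN m (hm m x - hm m 0) ≤ NN m (x - 0) := hm3 m x 0
    rw [hm0 m] at h1
    simp only [sub_zero] at h1
    have h2 : n' (hm m x) ≤ NN m (hm m x) := by
      simp only [hNN]
      have := mul_nonneg (htm m).le (E_nonneg (hm m x))
      linarith
    have h3 : NN m x ≤ n' x + E x := by
      simp only [hNN]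
      have h3a : (1/(m+1:ℝ)) ≤ 1 := by
        rw [div_le_one (by positivity)]
        have : (0:ℝ) ≤ (m:ℝ) := Nat.cast_nonneg m
        linarith
      have h3b : (1/(m+1:ℝ)) * E x ≤ 1 * E x :=
        mul_le_mul_of_nonneg_right h3a (E_nonneg x)
      linarith
    have h4 : c' * ‖hm m x‖ ≤ n' (hm m x) := hlow' _
    rw [le_div_iff₀ hc']
    nlinarith
  have hlimex : ∀ x : V, ∃ y, Tendsto (fun m => hm m x) (↑U) (𝓝 y) := by
    intro x
    have hcomp : IsCompact (Metric.closedBall (0:V) ((n' x + E x)/c')) :=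
      isCompact_closedBall _ _
    have hle : ↑(U.map (fun m => hm m x)) ≤ 𝓟 (Metric.closedBall (0:V) ((n' x + E x)/c')) := by
      rw [Ultrafilter.coe_map, le_principal_iff, mem_map]
      exact univ_mem' (fun m => hbox x m)
    obtain ⟨y, _, hy⟩ := hcomp.ultrafilter_le_nhds (U.map (fun m => hm m x)) hle
    refine ⟨y, ?_⟩
    rw [Filter.Tendsto]
    rw [Ultrafilter.coe_map] at hy
    exact hy
  choose h htend using hlimex
  have hid : ∀ x, n x ≤ 1 → h x = x := by
    intro x hx
    have hconst : (fun m => hm m x) = fun _ => x := funext (fun m => hm1 m x hx)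
    have := htend x
    rw [hconst] at this
    exact tendsto_nhds_unique this tendsto_const_nhds
  have hball : ∀ x, n (h x) ≤ 1 := by
    intro x
    exact le_of_tendsto ((hncont.tendsto _).comp (htend x))
      (Eventually.of_forall (fun m => hm2 m x))
  refine ⟨h, hid, hball, ?_, ?_, ?_⟩
  · -- contraction
    intro x y
    have hLHS : Tendsto (fun m => n' (hm m x - hm m y)) (↑U) (𝓝 (n' (h x - h y))) :=
      (hn'cont.tendsto _).comp ((htend x).sub (htend y))
    have hRHS0 : Tendsto (fun m : ℕ => n' (x - y) + (1/(m+1:ℝ)) * E (x - y))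
        atTop (𝓝 (n' (x - y))) := by
      have h1 : Tendsto (fun m : ℕ => (1/(m+1:ℝ)) * E (x - y)) atTop (𝓝 0) := by
        have := tendsto_one_div_add_atTop_nhds_zero_nat.mul_const (E (x - y))
        simpa using this
      have h2 : Tendsto (fun _ : ℕ => n' (x - y)) atTop (𝓝 (n' (x - y))) :=
        tendsto_const_nhds
      have := h2.add h1
      simpa using this
    have hRHS : Tendsto (fun m : ℕ => n' (x - y) + (1/(m+1:ℝ)) * E (x - y))
        (↑U) (𝓝 (n' (x - y))) := hRHS0.mono_left hU
    refine le_of_tendsto_of_tendsto' hLHS hRHS ?_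
    intro m
    calc n' (hm m x - hm m y) ≤ NN m (hm m x - hm m y) := by
          simp only [hNN]
          have := mul_nonneg (htm m).le (E_nonneg (hm m x - hm m y))
          linarith
      _ ≤ NN m (x - y) := hm3 m x y
      _ = n' (x - y) + (1/(m+1:ℝ)) * E (x - y) := rfl
  · -- annulus to sphere
    intro x hx1 _
    have hge : 1 ≤ n (h x) :=
      ge_of_tendsto ((hncont.tendsto _).comp (htend x))
        (Eventually.of_forall (fun m => hm4 m x hx1))
    exact le_antisymm (hball x) hge
  · -- surjectivity
    intro y hy
    exact ⟨y, le_of_eq hy.symm, by rw [hy]; norm_num, hid y (le_of_eq hy)⟩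
end
end
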